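/- arXiv:math/0311418 — 6 statements merged into one kernel-verified Lean document; each statement's English description precedes it below -/
import Mathlib

section
/- Let λ be a strict partition, let o be the number of odd parts of λ and e the number of even parts of λ. Then every bar tableau of shape λ has at least max(o, e + (ℓ(λ) mod 2)) bars. -/
/-- A strict partition of `n`: a strictly decreasing list of positive integers summing to `n`. -/
def IsStrictPartition (n : ℕ) (l : List ℕ) : Prop :=
  l.Pairwise (· > ·) ∧ (∀ x ∈ l, 0 < x) ∧ l.sum = n

/-- A bar tableau of shape `l` (a strict partition), presented as the list of rows of labels:
(0) the row lengths are exactly the parts of `l` and all labels are positive;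
(1) entries weakly increase along each row;
(2) every label that appears does so in an odd total number of cells;
(3) every label appears in at most two rows, and if it appears in two rows then it begins
    (is a prefix of) both rows;
(4) for every `i`, the nonzero row lengths remaining after deleting all cells labelled `> i`
    are pairwise distinct. -/
def IsBarTableau (l : List ℕ) (T : List (List ℕ)) : Prop :=
  T.map List.length = l ∧
  (∀ row ∈ T, ∀ x ∈ row, 0 < x) ∧
  (∀ row ∈ T, row.Chain' (· ≤ ·)) ∧
  (∀ v ∈ T.flatten, Odd (T.flatten.count v)) ∧
  (∀ v : ℕ, T.countP (fun row => decide (v ∈ row)) ≤ 2) ∧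
  (∀ v : ℕ, T.countP (fun row => decide (v ∈ row)) = 2 →
      ∀ row ∈ T, v ∈ row → row.head? = some v) ∧
  (∀ i : ℕ,
    (((T.map (fun row => row.filter (fun x => decide (x ≤ i)))).map List.length).filter
        (fun k => decide (k ≠ 0))).Nodup)

/-- The number of bars of a tableau: the number of distinct labels used. -/
def numBars (T : List (List ℕ)) : ℕ := T.flatten.dedup.length

namespace BarAux

lemma countP_one_split {α} (p : α → Bool) : ∀ {l : List α}, l.countP p = 1 →
    ∃ l₁ a l₂, l = l₁ ++ a :: l₂ ∧ p a ∧ l₁.countP p = 0 ∧ l₂.countP p = 0 := by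
  intro l
  induction l with
  | nil => intro h; simp at h
  | cons x xs ih =>
    intro h
    rw [List.countP_cons] at h
    by_cases hx : p x
    · refine ⟨[], x, xs, rfl, hx, rfl, ?_⟩
      rw [if_pos hx] at h; omega
    · rw [if_neg hx] at h
      obtain ⟨l₁, a, l₂, rfl, hp, h1, h2⟩ := ih (by omega)
      exact ⟨x :: l₁, a, l₂, rfl, hp, by rw [List.countP_cons, if_neg hx, h1], h2⟩

lemma countP_two_split {α} (p : α → Bool) : ∀ {l : List α}, l.countP p = 2 →
    ∃ l₁ a l₂ b l₃, l = l₁ ++ a :: l₂ ++ b :: l₃ ∧ p a ∧ p b ∧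
      l₁.countP p = 0 ∧ l₂.countP p = 0 ∧ l₃.countP p = 0 := by
  intro l
  induction l with
  | nil => intro h; simp at h
  | cons x xs ih =>
    intro h
    rw [List.countP_cons] at h
    by_cases hx : p x
    · rw [if_pos hx] at h
      obtain ⟨l₂, b, l₃, rfl, hb, hc2, hc3⟩ := countP_one_split p (l := xs) (by omega)
      exact ⟨[], x, l₂, b, l₃, rfl, hx, hb, rfl, hc2, hc3⟩
    · rw [if_neg hx] at h
      obtain ⟨l₁, a, l₂, b, l₃, rfl, hp, hq, h1, h2, h3⟩ := ih (by omega)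
      exact ⟨x :: l₁, a, l₂, b, l₃, rfl, hp, hq,
        by rw [List.countP_cons, if_neg hx, h1], h2, h3⟩

lemma key1 (co ce cl B lam b : ℕ) (hb : b % 2 = 1) (hb1 : 1 ≤ b) (hbl : b ≤ lam)
    (h1 : co + (if (lam - b) % 2 = 1 then 1 else 0) ≤ B)
    (h2 : ce + (if ((lam - b) % 2 = 0 ∧ lam - b ≠ 0) then 1 else 0) +
        ((cl + (if lam - b ≠ 0 then 1 else 0)) % 2) ≤ B) :
    co + (if lam % 2 = 1 then 1 else 0) ≤ B + 1 ∧
    ce + (if (lam % 2 = 0 ∧ lam ≠ 0) then 1 else 0) + ((cl + 1) % 2) ≤ B + 1 := by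
  split_ifs at * <;> omega

lemma key2 (co ce cl B a b : ℕ) (ha : 1 ≤ a) (hb : 1 ≤ b) (hpar : (a + b) % 2 = 1)
    (h1 : co ≤ B) (h2 : ce + cl % 2 ≤ B) :
    co + (if a % 2 = 1 then 1 else 0) + (if b % 2 = 1 then 1 else 0) ≤ B + 1 ∧
    ce + (if (a % 2 = 0 ∧ a ≠ 0) then 1 else 0) + (if (b % 2 = 0 ∧ b ≠ 0) then 1 else 0) +
      ((cl + 2) % 2) ≤ B + 1 := by
  split_ifs at * <;> omega

lemma all_eq_of_chain {m : ℕ} {r : List ℕ} (hc : r.Chain' (· ≤ ·)) (hh : r.head? = some m)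
    (hle : ∀ x ∈ r, x ≤ m) : ∀ x ∈ r, x = m := by
  cases r with
  | nil => simp
  | cons y t =>
    simp at hh
    subst hh
    replace hc := List.isChain_iff_pairwise.mp hc
    intro x hx
    rcases List.mem_cons.mp hx with rfl | hx
    · rfl
    · exact le_antisymm (hle x (List.mem_cons_of_mem _ hx)) ((List.pairwise_cons.mp hc).1 x hx)

def pO : List ℕ → Bool := fun row => decide (Odd row.length)
def pE : List ℕ → Bool := fun row => decide (Even row.length ∧ row ≠ [])
def pL : List ℕ → Bool := fun row => decide (row ≠ [])

lemma ind_pO (r : List ℕ) :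
    (if pO r then 1 else 0) = (if r.length % 2 = 1 then 1 else 0) := by
  simp [pO, Nat.odd_iff]

lemma ind_pE (r : List ℕ) :
    (if pE r then 1 else 0) = (if (r.length % 2 = 0 ∧ r.length ≠ 0) then 1 else 0) := by
  cases r with
  | nil => simp [pE]
  | cons y t => simp [pE, Nat.even_iff]

lemma ind_pL (r : List ℕ) :
    (if pL r then 1 else 0) = (if r.length ≠ 0 then 1 else 0) := by
  cases r with
  | nil => simp [pL]
  | cons y t => simp [pL]

lemma main : ∀ (N : ℕ) (T : List (List ℕ)), T.flatten.length ≤ N →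
    (∀ row ∈ T, row.Chain' (· ≤ ·)) →
    (∀ v ∈ T.flatten, Odd (T.flatten.count v)) →
    (∀ v : ℕ, T.countP (fun row => decide (v ∈ row)) ≤ 2) →
    (∀ v : ℕ, T.countP (fun row => decide (v ∈ row)) = 2 →
      ∀ row ∈ T, v ∈ row → row.head? = some v) →
    T.countP pO ≤ numBars T ∧
    T.countP pE + (T.countP pL) % 2 ≤ numBars T := by
  intro N
  induction N with
  | zero =>
    intro T hlen _ _ _ _
    have hF : T.flatten = [] := List.length_eq_zero_iff.mp (Nat.le_zero.mp hlen)
    have hrow : ∀ row ∈ T, row = [] := List.flatten_eq_nil_iff.mp hF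
    have h0 : T.countP pO = 0 := List.countP_eq_zero.mpr (by
      intro r hr; simp [pO, hrow r hr])
    have h1 : T.countP pE = 0 := List.countP_eq_zero.mpr (by
      intro r hr; simp [pE, hrow r hr])
    have h2 : T.countP pL = 0 := List.countP_eq_zero.mpr (by
      intro r hr; simp [pL, hrow r hr])
    simp [h0, h1, h2]
  | succ N ih =>
    intro T hlen h3 h4 h5 h6
    by_cases hF : T.flatten = []
    · have hrow : ∀ row ∈ T, row = [] := List.flatten_eq_nil_iff.mp hF
      have h0 : T.countP pO = 0 := List.countP_eq_zero.mpr (by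
        intro r hr; simp [pO, hrow r hr])
      have h1 : T.countP pE = 0 := List.countP_eq_zero.mpr (by
        intro r hr; simp [pE, hrow r hr])
      have h2 : T.countP pL = 0 := List.countP_eq_zero.mpr (by
        intro r hr; simp [pL, hrow r hr])
      simp [h0, h1, h2]
    -- find the maximal label m
    obtain ⟨m, hmmem, hmmax⟩ : ∃ m ∈ T.flatten, ∀ x ∈ T.flatten, x ≤ m := by
      cases hm : T.flatten.max? with
      | none => rw [List.max?_eq_none_iff] at hm; exact absurd hm hF
      | some m =>
        obtain ⟨a, b⟩ := List.max?_eq_some_iff'.mp hm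
        exact ⟨m, a, b⟩
    set p : ℕ → Bool := fun x => decide (x < m) with hp
    set f : List ℕ → List ℕ := fun r => r.filter p with hf
    set T' : List (List ℕ) := T.map f with hT'
    have hflat : T'.flatten = T.flatten.filter p := List.filter_flatten.symm
    -- numBars T = numBars T' + 1
    have hBars : numBars T = numBars T' + 1 := by
      have e1 : numBars T = T.flatten.toFinset.card := (List.card_toFinset _).symm
      have e2 : numBars T' = T'.flatten.toFinset.card := (List.card_toFinset _).symm
      have e3 : T'.flatten.toFinset = T.flatten.toFinset.erase m := by
        ext x
        simp only [List.mem_toFinset, hflat, List.mem_filter, Finset.mem_erase,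
          List.mem_toFinset]
        constructor
        · rintro ⟨hx, hpx⟩
          simp only [hp, decide_eq_true_eq] at hpx
          exact ⟨by omega, hx⟩
        · rintro ⟨hne, hx⟩
          have := hmmax x hx
          refine ⟨hx, ?_⟩
          simp only [hp, decide_eq_true_eq]
          omega
      rw [e1, e2, e3, Finset.card_erase_of_mem (List.mem_toFinset.mpr hmmem)]
      have : 0 < T.flatten.toFinset.card :=
        Finset.card_pos.mpr ⟨m, List.mem_toFinset.mpr hmmem⟩
      omega
    -- length decrease
    have hlen' : T'.flatten.length ≤ N := by
      have hlt : T'.flatten.length < T.flatten.length := by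
        rw [hflat]
        refine List.length_filter_lt_length_iff_exists.mpr ⟨m, hmmem, ?_⟩
        simp [hp]
      omega
    -- transfer hypotheses to T'
    have hrowmem : ∀ r' ∈ T', ∃ r ∈ T, r' = f r := by
      intro r' hr'
      obtain ⟨r, hr, rfl⟩ := List.mem_map.mp hr'
      exact ⟨r, hr, rfl⟩
    have h3' : ∀ row ∈ T', row.Chain' (· ≤ ·) := by
      intro r' hr'
      obtain ⟨r, hr, rfl⟩ := hrowmem r' hr'
      exact (h3 r hr).sublist List.filter_sublist
    have h4' : ∀ v ∈ T'.flatten, Odd (T'.flatten.count v) := by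
      intro v hv
      rw [hflat] at hv ⊢
      have hvm := List.of_mem_filter hv
      have hvT := List.mem_of_mem_filter hv
      rw [List.count_filter hvm]
      exact h4 v hvT
    have hcnt' : ∀ v : ℕ, v < m →
        T'.countP (fun row => decide (v ∈ row)) = T.countP (fun row => decide (v ∈ row)) := by
      intro v hv
      rw [hT', List.countP_map]
      apply List.countP_congr
      intro r _
      simp only [Function.comp_apply, hf, List.mem_filter, decide_eq_true_eq]
      constructor
      · rintro ⟨h, _⟩; exact h
      · intro h; exact ⟨h, by simp [hp, hv]⟩
    have hcnt0 : ∀ v : ℕ, ¬ v < m → T'.countP (fun row => decide (v ∈ row)) = 0 := by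
      intro v hv
      apply List.countP_eq_zero.mpr
      intro r' hr'
      obtain ⟨r, hr, rfl⟩ := hrowmem r' hr'
      simp only [hf, List.mem_filter, decide_eq_true_eq, not_and]
      intro _
      simp [hp, hv]
    have h5' : ∀ v : ℕ, T'.countP (fun row => decide (v ∈ row)) ≤ 2 := by
      intro v
      by_cases hv : v < m
      · rw [hcnt' v hv]; exact h5 v
      · rw [hcnt0 v hv]; omega
    have h6' : ∀ v : ℕ, T'.countP (fun row => decide (v ∈ row)) = 2 →
        ∀ row ∈ T', v ∈ row → row.head? = some v := by
      intro v hv2 r' hr' hvr'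
      obtain ⟨r, hr, rfl⟩ := hrowmem r' hr'
      have hvm : v < m := by
        by_contra hc
        rw [hcnt0 v hc] at hv2; omega
      have hv2T : T.countP (fun row => decide (v ∈ row)) = 2 := by
        rw [← hcnt' v hvm]; exact hv2
      have hvr : v ∈ r := List.mem_of_mem_filter hvr'
      have hhead := h6 v hv2T r hr hvr
      cases r with
      | nil => simp at hvr
      | cons y t =>
        have hyv : y = v := by simpa using hhead
        subst hyv
        simp only [hf, List.filter_cons]
        rw [if_pos (by simp [hp, hvm])]
        simp
    obtain ⟨IH1, IH2⟩ := ih T' hlen' h3' h4' h5' h6'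
    -- rows not containing m are fixed by f
    have hfix : ∀ r ∈ T, m ∉ r → f r = r := by
      intro r hr hmr
      apply List.filter_eq_self.mpr
      intro x hx
      have hxle := hmmax x (List.mem_flatten.mpr ⟨r, hr, hx⟩)
      have hxne : x ≠ m := fun h => hmr (h ▸ hx)
      simp only [hp, decide_eq_true_eq]
      omega
    -- length of filtered row
    have hflen : ∀ r ∈ T, (f r).length = r.length - r.count m := by
      intro r hr
      have hcc : r.countP (fun x => decide ¬(p x = true)) = r.count m := by
        rw [List.count]
        apply List.countP_congr
        intro x hx
        have hxle := hmmax x (List.mem_flatten.mpr ⟨r, hr, hx⟩)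
        simp only [hp, decide_eq_true_eq, not_lt, beq_iff_eq]
        omega
      have hsum := List.length_eq_countP_add_countP p (l := r)
      have hfl : (f r).length = r.countP p := List.countP_eq_length_filter.symm
      omega
    have hcpos : 0 < T.countP (fun row => decide (m ∈ row)) := by
      apply List.countP_pos_iff.mpr
      obtain ⟨r, hr, hmr⟩ := List.mem_flatten.mp hmmem
      exact ⟨r, hr, by simp [hmr]⟩
    have hcle : T.countP (fun row => decide (m ∈ row)) ≤ 2 := h5 m
    have hoddm : Odd (T.flatten.count m) := h4 m hmmem
    obtain hc | hc : T.countP (fun row => decide (m ∈ row)) = 1 ∨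
        T.countP (fun row => decide (m ∈ row)) = 2 := by omega
    · -- exactly one row contains m
      obtain ⟨l₁, a, l₂, hTeq, hpa, hc1, hc2⟩ :=
        countP_one_split (fun row => decide (m ∈ row)) hc
      have hma : m ∈ a := by simpa using hpa
      have hnm1 : ∀ r ∈ l₁, m ∉ r := fun r hr hmr => by
        have := List.countP_eq_zero.mp hc1 r hr; simp [hmr] at this
      have hnm2 : ∀ r ∈ l₂, m ∉ r := fun r hr hmr => by
        have := List.countP_eq_zero.mp hc2 r hr; simp [hmr] at this
      have hamem : a ∈ T := by rw [hTeq]; simp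
      have hmem1 : ∀ r ∈ l₁, r ∈ T := by intro r hr; rw [hTeq]; simp [hr]
      have hmem2 : ∀ r ∈ l₂, r ∈ T := by intro r hr; rw [hTeq]; simp [hr]
      have hmap1 : l₁.map f = l₁ := by
        conv_rhs => rw [← List.map_id l₁]
        exact List.map_congr_left fun r hr => hfix r (hmem1 r hr) (hnm1 r hr)
      have hmap2 : l₂.map f = l₂ := by
        conv_rhs => rw [← List.map_id l₂]
        exact List.map_congr_left fun r hr => hfix r (hmem2 r hr) (hnm2 r hr)
      have eqT' : T' = l₁ ++ f a :: l₂ := by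
        rw [hT', hTeq, List.map_append, List.map_cons, hmap1, hmap2]
      have hfa : (f a).length = a.length - a.count m := hflen a hamem
      -- counting m in the flatten
      have hcountflat : T.flatten.count m = a.count m := by
        rw [hTeq, List.flatten_append, List.flatten_cons, List.count_append, List.count_append]
        have c1 : l₁.flatten.count m = 0 := List.count_eq_zero.mpr (by
          intro hmem
          obtain ⟨r, hr, hmr⟩ := List.mem_flatten.mp hmem
          exact hnm1 r hr hmr)
        have c2 : l₂.flatten.count m = 0 := List.count_eq_zero.mpr (by
          intro hmem
          obtain ⟨r, hr, hmr⟩ := List.mem_flatten.mp hmem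
          exact hnm2 r hr hmr)
        omega
      have hbodd : a.count m % 2 = 1 := by
        rw [← hcountflat]; exact Nat.odd_iff.mp hoddm
      have hb1 : 1 ≤ a.count m := List.count_pos_iff.mpr hma
      have hble : a.count m ≤ a.length := List.count_le_length
      -- countP computations
      have eqO : T.countP pO = (l₁.countP pO + l₂.countP pO) +
          (if a.length % 2 = 1 then 1 else 0) := by
        rw [hTeq, List.countP_append, List.countP_cons, ind_pO]; omega
      have eqO' : T'.countP pO = (l₁.countP pO + l₂.countP pO) +
          (if (a.length - a.count m) % 2 = 1 then 1 else 0) := by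
        rw [eqT', List.countP_append, List.countP_cons, ind_pO, hfa]; omega
      have eqE : T.countP pE = (l₁.countP pE + l₂.countP pE) +
          (if (a.length % 2 = 0 ∧ a.length ≠ 0) then 1 else 0) := by
        rw [hTeq, List.countP_append, List.countP_cons, ind_pE]; omega
      have eqE' : T'.countP pE = (l₁.countP pE + l₂.countP pE) +
          (if ((a.length - a.count m) % 2 = 0 ∧ a.length - a.count m ≠ 0) then 1 else 0) := by
        rw [eqT', List.countP_append, List.countP_cons, ind_pE, hfa]; omega
      have eqL : T.countP pL = (l₁.countP pL + l₂.countP pL) + 1 := by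
        have hane : a.length ≠ 0 := by
          intro h0
          rw [List.length_eq_zero_iff.mp h0] at hma
          simp at hma
        rw [hTeq, List.countP_append, List.countP_cons, ind_pL, if_pos hane]; omega
      have eqL' : T'.countP pL = (l₁.countP pL + l₂.countP pL) +
          (if a.length - a.count m ≠ 0 then 1 else 0) := by
        rw [eqT', List.countP_append, List.countP_cons, ind_pL, hfa]; omega
      have h1k : (l₁.countP pO + l₂.countP pO) +
          (if (a.length - a.count m) % 2 = 1 then 1 else 0) ≤ numBars T' := by
        rw [← eqO']; exact IH1
      have h2k : (l₁.countP pE + l₂.countP pE) +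
          (if ((a.length - a.count m) % 2 = 0 ∧ a.length - a.count m ≠ 0) then 1 else 0) +
          (((l₁.countP pL + l₂.countP pL) +
            (if a.length - a.count m ≠ 0 then 1 else 0)) % 2) ≤ numBars T' := by
        rw [← eqE', ← eqL']; exact IH2
      obtain ⟨g1, g2⟩ := key1 (l₁.countP pO + l₂.countP pO) (l₁.countP pE + l₂.countP pE)
        (l₁.countP pL + l₂.countP pL) (numBars T') a.length (a.count m) hbodd hb1 hble h1k h2k
      constructor
      · omega
      · omega
    · -- exactly two rows contain m
      obtain ⟨l₁, a, l₂, b, l₃, hTeq, hpa, hpb, hc1, hc2, hc3⟩ :=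
        countP_two_split (fun row => decide (m ∈ row)) hc
      have hma : m ∈ a := by simpa using hpa
      have hmb : m ∈ b := by simpa using hpb
      have hnm1 : ∀ r ∈ l₁, m ∉ r := fun r hr hmr => by
        have := List.countP_eq_zero.mp hc1 r hr; simp [hmr] at this
      have hnm2 : ∀ r ∈ l₂, m ∉ r := fun r hr hmr => by
        have := List.countP_eq_zero.mp hc2 r hr; simp [hmr] at this
      have hnm3 : ∀ r ∈ l₃, m ∉ r := fun r hr hmr => by
        have := List.countP_eq_zero.mp hc3 r hr; simp [hmr] at this
      have hamem : a ∈ T := by rw [hTeq]; simp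
      have hbmem : b ∈ T := by rw [hTeq]; simp
      have hmem1 : ∀ r ∈ l₁, r ∈ T := by intro r hr; rw [hTeq]; simp [hr]
      have hmem2 : ∀ r ∈ l₂, r ∈ T := by intro r hr; rw [hTeq]; simp [hr]
      have hmem3 : ∀ r ∈ l₃, r ∈ T := by intro r hr; rw [hTeq]; simp [hr]
      -- all entries of a and b equal m
      have halla : ∀ x ∈ a, x = m :=
        all_eq_of_chain (h3 a hamem) (h6 m hc a hamem hma)
          (fun x hx => hmmax x (List.mem_flatten.mpr ⟨a, hamem, hx⟩))
      have hallb : ∀ x ∈ b, x = m :=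
        all_eq_of_chain (h3 b hbmem) (h6 m hc b hbmem hmb)
          (fun x hx => hmmax x (List.mem_flatten.mpr ⟨b, hbmem, hx⟩))
      have hfa : f a = [] := List.filter_eq_nil_iff.mpr (by
        intro x hx
        rw [halla x hx]
        simp [hp])
      have hfb : f b = [] := List.filter_eq_nil_iff.mpr (by
        intro x hx
        rw [hallb x hx]
        simp [hp])
      have hca : a.count m = a.length := List.count_eq_length.mpr (fun x hx => (halla x hx).symm)
      have hcb : b.count m = b.length := List.count_eq_length.mpr (fun x hx => (hallb x hx).symm)
      have hmap1 : l₁.map f = l₁ := by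
        conv_rhs => rw [← List.map_id l₁]
        exact List.map_congr_left fun r hr => hfix r (hmem1 r hr) (hnm1 r hr)
      have hmap2 : l₂.map f = l₂ := by
        conv_rhs => rw [← List.map_id l₂]
        exact List.map_congr_left fun r hr => hfix r (hmem2 r hr) (hnm2 r hr)
      have hmap3 : l₃.map f = l₃ := by
        conv_rhs => rw [← List.map_id l₃]
        exact List.map_congr_left fun r hr => hfix r (hmem3 r hr) (hnm3 r hr)
      have eqT' : T' = l₁ ++ [] :: l₂ ++ [] :: l₃ := by
        rw [hT', hTeq]
        simp only [List.map_append, List.map_cons, hmap1, hmap2, hmap3, hfa, hfb]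
      have hcountflat : T.flatten.count m = a.length + b.length := by
        rw [hTeq]
        simp only [List.flatten_append, List.flatten_cons, List.count_append]
        have c1 : l₁.flatten.count m = 0 := List.count_eq_zero.mpr (by
          intro hmem
          obtain ⟨r, hr, hmr⟩ := List.mem_flatten.mp hmem
          exact hnm1 r hr hmr)
        have c2 : l₂.flatten.count m = 0 := List.count_eq_zero.mpr (by
          intro hmem
          obtain ⟨r, hr, hmr⟩ := List.mem_flatten.mp hmem
          exact hnm2 r hr hmr)
        have c3 : l₃.flatten.count m = 0 := List.count_eq_zero.mpr (by
          intro hmem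
          obtain ⟨r, hr, hmr⟩ := List.mem_flatten.mp hmem
          exact hnm3 r hr hmr)
        omega
      have hpar : (a.length + b.length) % 2 = 1 := by
        rw [← hcountflat]; exact Nat.odd_iff.mp hoddm
      have ha1 : 1 ≤ a.length := List.length_pos_iff.mpr (fun h0 => by subst h0; simp at hma)
      have hb1 : 1 ≤ b.length := List.length_pos_iff.mpr (fun h0 => by subst h0; simp at hmb)
      have eqO : T.countP pO = (l₁.countP pO + l₂.countP pO + l₃.countP pO) +
          (if a.length % 2 = 1 then 1 else 0) + (if b.length % 2 = 1 then 1 else 0) := by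
        rw [hTeq, List.countP_append, List.countP_cons, List.countP_append, List.countP_cons,
          ind_pO, ind_pO]
        omega
      have eqE : T.countP pE = (l₁.countP pE + l₂.countP pE + l₃.countP pE) +
          (if (a.length % 2 = 0 ∧ a.length ≠ 0) then 1 else 0) +
          (if (b.length % 2 = 0 ∧ b.length ≠ 0) then 1 else 0) := by
        rw [hTeq, List.countP_append, List.countP_cons, List.countP_append, List.countP_cons,
          ind_pE, ind_pE]
        omega
      have eqL : T.countP pL = (l₁.countP pL + l₂.countP pL + l₃.countP pL) + 2 := by
        rw [hTeq, List.countP_append, List.countP_cons, List.countP_append, List.countP_cons,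
          ind_pL, ind_pL, if_pos (by omega : a.length ≠ 0), if_pos (by omega : b.length ≠ 0)]
        omega
      have eqO' : T'.countP pO = l₁.countP pO + l₂.countP pO + l₃.countP pO := by
        rw [eqT', List.countP_append, List.countP_cons, List.countP_append, List.countP_cons,
          ind_pO]
        simp
      have eqE' : T'.countP pE = l₁.countP pE + l₂.countP pE + l₃.countP pE := by
        rw [eqT', List.countP_append, List.countP_cons, List.countP_append, List.countP_cons,
          ind_pE]
        simp
      have eqL' : T'.countP pL = l₁.countP pL + l₂.countP pL + l₃.countP pL := by
        rw [eqT', List.countP_append, List.countP_cons, List.countP_append, List.countP_cons,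
          ind_pL]
        simp
      have h1k : l₁.countP pO + l₂.countP pO + l₃.countP pO ≤ numBars T' := by
        rw [← eqO']; exact IH1
      have h2k : (l₁.countP pE + l₂.countP pE + l₃.countP pE) +
          (l₁.countP pL + l₂.countP pL + l₃.countP pL) % 2 ≤ numBars T' := by
        rw [← eqE', ← eqL']; exact IH2
      obtain ⟨g1, g2⟩ := key2 (l₁.countP pO + l₂.countP pO + l₃.countP pO)
        (l₁.countP pE + l₂.countP pE + l₃.countP pE)
        (l₁.countP pL + l₂.countP pL + l₃.countP pL) (numBars T')
        a.length b.length ha1 hb1 hpar h1k h2k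
      constructor
      · omega
      · omega

end BarAux

/-- Every bar tableau of shape `λ` has at least `max(o, e + (ℓ(λ) mod 2))` bars. -/
theorem numBars_ge (n : ℕ) (l : List ℕ) (h : IsStrictPartition n l)
    (T : List (List ℕ)) (hT : IsBarTableau l T) :
    max (l.countP (fun x => decide (Odd x)))
      (l.countP (fun x => decide (Even x)) + l.length % 2) ≤ numBars T := by
  obtain ⟨hshape, hpos, h3, h4, h5, h6, _⟩ := hT
  subst hshape
  have hne : ∀ row ∈ T, row ≠ [] := by
    intro r hr he
    have := h.2.1 r.length (List.mem_map_of_mem hr)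
    rw [he] at this
    simp at this
  obtain ⟨g1, g2⟩ := BarAux.main T.flatten.length T le_rfl h3 h4 h5 h6
  apply max_le
  · calc (T.map List.length).countP (fun x => decide (Odd x))
        = T.countP BarAux.pO := by
          rw [List.countP_map]
          rfl
    _ ≤ numBars T := g1
  · have e1 : (T.map List.length).countP (fun x => decide (Even x)) = T.countP BarAux.pE := by
      rw [List.countP_map]
      apply List.countP_congr
      intro r hr
      simp [BarAux.pE, Function.comp, hne r hr]
    have e2 : (T.map List.length).length = T.countP BarAux.pL := by
      rw [List.length_map]
      exact (List.countP_eq_length.mpr (fun r hr => by simp [BarAux.pL, hne r hr])).symm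
    rw [e1, e2]
    exact g2
end

section
/- Let λ be a strict partition, let o be the number of odd parts of λ and e the number of even parts of λ. Then there exists a bar tableau of shape λ with exactly max(o, e + (ℓ(λ) mod 2)) bars. -/
/- ### Auxiliary lemmas -/

lemma le_foldr_max (L : List ℕ) : ∀ x ∈ L, x ≤ L.foldr max 0 := by
  induction L with
  | nil => simp
  | cons a t ih =>
    intro x hx
    rcases List.mem_cons.mp hx with rfl | hx
    · exact le_max_left _ _
    · exact (ih x hx).trans (le_max_right _ _)

lemma toFinset_replicate_pos (a m : ℕ) (h : a ≠ 0) :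
    (List.replicate a m).toFinset = {m} := by
  ext x
  simp [List.mem_replicate, h]

lemma numBars_eq_card (T : List (List ℕ)) : numBars T = T.flatten.toFinset.card :=
  (List.card_toFinset _).symm

/-- Inserting a new full row with a fresh maximal label. -/
lemma bar_cons (μ : List ℕ) (T : List (List ℕ)) (a m : ℕ)
    (hT : IsBarTableau μ T) (hm : ∀ x ∈ T.flatten, x < m) (hm0 : 0 < m)
    (ha : Odd a) (hpos : ∀ x ∈ a :: μ, 0 < x) (hnd : (a :: μ).Nodup) :
    IsBarTableau (a :: μ) (List.replicate a m :: T) ∧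
      numBars (List.replicate a m :: T) = numBars T + 1 := by
  obtain ⟨h1, h2, h3, h4, h5, h6, h7⟩ := hT
  have ha0 : 0 < a := hpos a (by simp)
  have hmem : ∀ row ∈ T, ∀ x ∈ row, x < m := by
    intro row hr x hx
    exact hm x (List.mem_flatten.mpr ⟨row, hr, hx⟩)
  have hnotm : ∀ row ∈ T, m ∉ row := by
    intro row hr h
    exact lt_irrefl m (hmem row hr m h)
  have hmflat : m ∉ T.flatten := by
    intro h
    exact lt_irrefl m (hm m h)
  have hcount : ∀ v : ℕ, ((List.replicate a m :: T).flatten).count v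
      = (if v = m then a else 0) + T.flatten.count v := by
    intro v
    simp only [List.flatten_cons, List.count_append, List.count_replicate, beq_iff_eq]
    split <;> split <;> omega
  have hcountP : ∀ v : ℕ, (List.replicate a m :: T).countP (fun row => decide (v ∈ row))
      = (if v = m then 1 else 0) + T.countP (fun row => decide (v ∈ row)) := by
    intro v
    rw [List.countP_cons]
    by_cases hv : v = m
    · subst hv
      simp [List.mem_replicate, ha0.ne']
      omega
    · simp [List.mem_replicate, hv]
  have hcountPm : T.countP (fun row => decide (m ∈ row)) = 0 :=
    List.countP_eq_zero.mpr (fun row hr => by simpa using hnotm row hr)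
  refine ⟨⟨?_, ?_, ?_, ?_, ?_, ?_, ?_⟩, ?_⟩
  · simp [h1]
  · intro row hrow x hx
    rcases List.mem_cons.mp hrow with rfl | hrow
    · rcases List.mem_replicate.mp hx with ⟨-, rfl⟩
      exact hm0
    · exact h2 row hrow x hx
  · intro row hrow
    rcases List.mem_cons.mp hrow with rfl | hrow
    · exact List.isChain_replicate_of_rel _ le_rfl
    · exact h3 row hrow
  · intro v hv
    rw [hcount]
    by_cases hvm : v = m
    · subst hvm
      rw [List.count_eq_zero.mpr hmflat]
      simpa using ha
    · simp only [if_neg hvm, zero_add]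
      apply h4
      rcases List.mem_flatten.mp hv with ⟨row, hrow, hx⟩
      rcases List.mem_cons.mp hrow with rfl | hrow
      · exact absurd (List.mem_replicate.mp hx).2 hvm
      · exact List.mem_flatten.mpr ⟨row, hrow, hx⟩
  · intro v
    rw [hcountP]
    by_cases hv : v = m
    · subst hv
      rw [hcountPm]
      simp
    · simp only [if_neg hv, zero_add]
      exact h5 v
  · intro v hv2 row hrow hvrow
    by_cases hv : v = m
    · subst hv
      rcases List.mem_cons.mp hrow with rfl | hrow
      · rw [List.head?_replicate, if_neg ha0.ne']
      · exact absurd hvrow (hnotm row hrow)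
    · rcases List.mem_cons.mp hrow with rfl | hrow
      · exact absurd (List.mem_replicate.mp hvrow).2 hv
      · apply h6 v _ row hrow hvrow
        have := hcountP v
        rw [if_neg hv, zero_add] at this
        omega
  · intro i
    by_cases him : m ≤ i
    · have hfil : ∀ row ∈ T, row.filter (fun x => decide (x ≤ i)) = row := by
        intro row hr
        exact List.filter_eq_self.mpr fun x hx =>
          decide_eq_true (le_of_lt (lt_of_lt_of_le (hmem row hr x hx) him))
      have hmapT : T.map (fun row => row.filter (fun x => decide (x ≤ i))) = T := by
        rw [List.map_congr_left (g := id) (fun r hr => hfil r hr), List.map_id]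
      have : (((List.replicate a m :: T).map
            (fun row => row.filter (fun x => decide (x ≤ i)))).map List.length)
          = a :: μ := by
        simp [List.filter_replicate, him, hmapT, h1]
      rw [this, List.filter_eq_self.mpr (fun k hk => decide_eq_true (hpos k hk).ne')]
      exact hnd
    · have hrep : (List.replicate a m).filter (fun x => decide (x ≤ i)) = [] := by
        rw [List.filter_replicate]
        simp [him]
      have h7i := h7 i
      simp only [List.map_cons, hrep, List.length_nil, List.filter_cons]
      simpa using h7i
  · rw [numBars_eq_card, numBars_eq_card]
    have : ((List.replicate a m :: T).flatten).toFinset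
        = insert m (T.flatten.toFinset) := by
      rw [List.flatten_cons, List.toFinset_append, toFinset_replicate_pos a m ha0.ne',
        Finset.insert_eq]
    rw [this, Finset.card_insert_of_notMem (by simpa using hmflat)]

/-- Extending the first row by one cell with a fresh maximal label. -/
lemma bar_extend (a : ℕ) (rest : List ℕ) (r : List ℕ) (T₂ : List (List ℕ)) (m : ℕ)
    (hT : IsBarTableau ((a - 1) :: rest) (r :: T₂))
    (hm : ∀ x ∈ (r :: T₂).flatten, x < m) (hm0 : 0 < m) (ha2 : 2 ≤ a)
    (hpos : ∀ x ∈ a :: rest, 0 < x) (hnd : (a :: rest).Nodup) :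
    IsBarTableau (a :: rest) ((r ++ [m]) :: T₂) ∧
      numBars ((r ++ [m]) :: T₂) = numBars (r :: T₂) + 1 := by
  obtain ⟨h1, h2, h3, h4, h5, h6, h7⟩ := hT
  have hrlen : r.length = a - 1 := by
    simpa using congrArg (fun l => l.head?) h1
  have hrne : r ≠ [] := by
    intro h
    rw [h] at hrlen
    simp at hrlen
    omega
  have hmem : ∀ row ∈ r :: T₂, ∀ x ∈ row, x < m := by
    intro row hr x hx
    exact hm x (List.mem_flatten.mpr ⟨row, hr, hx⟩)
  have hnotm : ∀ row ∈ r :: T₂, m ∉ row := by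
    intro row hr h
    exact lt_irrefl m (hmem row hr m h)
  have hmflat : m ∉ (r :: T₂).flatten := by
    intro h
    exact lt_irrefl m (hm m h)
  have hcount : ∀ v : ℕ, (((r ++ [m]) :: T₂).flatten).count v
      = (if v = m then 1 else 0) + ((r :: T₂).flatten).count v := by
    intro v
    simp only [List.flatten_cons, List.count_append, List.count_singleton', beq_iff_eq]
    by_cases hv : v = m
    · subst hv
      simp only [if_pos rfl]
      omega
    · rw [if_neg (fun h => hv h.symm), if_neg hv]
      omega
  have hmemext : ∀ v : ℕ, v ≠ m → (v ∈ r ++ [m] ↔ v ∈ r) := by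
    intro v hv
    simp [hv]
  have hcountP : ∀ v : ℕ, v ≠ m →
      ((r ++ [m]) :: T₂).countP (fun row => decide (v ∈ row))
        = (r :: T₂).countP (fun row => decide (v ∈ row)) := by
    intro v hv
    rw [List.countP_cons, List.countP_cons, decide_eq_decide.mpr (hmemext v hv)]
  refine ⟨⟨?_, ?_, ?_, ?_, ?_, ?_, ?_⟩, ?_⟩
  · have := h1
    simp only [List.map_cons] at this ⊢
    rw [List.length_append, hrlen]
    rw [List.cons.injEq] at this ⊢
    exact ⟨by simp; omega, this.2⟩
  · intro row hrow x hx
    rcases List.mem_cons.mp hrow with rfl | hrow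
    · rcases List.mem_append.mp hx with hx | hx
      · exact h2 r (by simp) x hx
      · simp at hx
        omega
    · exact h2 row (by simp [hrow]) x hx
  · intro row hrow
    rcases List.mem_cons.mp hrow with rfl | hrow
    · show List.IsChain _ (r ++ [m])
      rw [List.isChain_append]
      refine ⟨h3 r (by simp), List.isChain_singleton m, ?_⟩
      intro x hx y hy
      simp at hy
      subst hy
      obtain ⟨hne, hxl⟩ := List.mem_getLast?_eq_getLast hx
      exact le_of_lt (hmem r (by simp) x (hxl ▸ List.getLast_mem hne))
    · exact h3 row (by simp [hrow])
  · intro v hv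
    rw [hcount]
    by_cases hvm : v = m
    · subst hvm
      rw [List.count_eq_zero.mpr hmflat]
      simp
    · simp only [if_neg hvm, zero_add]
      apply h4
      rcases List.mem_flatten.mp hv with ⟨row, hrow, hx⟩
      rcases List.mem_cons.mp hrow with rfl | hrow
      · rcases List.mem_append.mp hx with hx | hx
        · exact List.mem_flatten.mpr ⟨r, by simp, hx⟩
        · simp at hx
          exact absurd hx hvm
      · exact List.mem_flatten.mpr ⟨row, by simp [hrow], hx⟩
  · intro v
    by_cases hv : v = m
    · rw [List.countP_cons]
      have h0 : T₂.countP (fun row => decide (v ∈ row)) = 0 :=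
        List.countP_eq_zero.mpr (fun row hr => by simpa [hv] using hnotm row (by simp [hr]))
      rw [h0]
      split <;> omega
    · rw [hcountP v hv]
      exact h5 v
  · intro v hv2 row hrow hvrow
    by_cases hv : v = m
    · exfalso
      rw [List.countP_cons] at hv2
      have h0 : T₂.countP (fun row => decide (v ∈ row)) = 0 :=
        List.countP_eq_zero.mpr (fun row hr => by simpa [hv] using hnotm row (by simp [hr]))
      rw [h0] at hv2
      split at hv2 <;> omega
    · rcases List.mem_cons.mp hrow with rfl | hrow
      · have hvr : v ∈ r := (hmemext v hv).mp hvrow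
        have := h6 v (by rw [← hcountP v hv]; exact hv2) r (by simp) hvr
        rw [← this]
        obtain ⟨c, r', rfl⟩ : ∃ c r', r = c :: r' := by
          cases r with
          | nil => exact absurd rfl hrne
          | cons c r' => exact ⟨c, r', rfl⟩
        rfl
      · exact h6 v (by rw [← hcountP v hv]; exact hv2) row (by simp [hrow]) hvrow
  · intro i
    by_cases him : m ≤ i
    · have hfil : ∀ row ∈ r :: T₂, row.filter (fun x => decide (x ≤ i)) = row := by
        intro row hr
        exact List.filter_eq_self.mpr fun x hx =>
          decide_eq_true (le_of_lt (lt_of_lt_of_le (hmem row hr x hx) him))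
      have hmapT : T₂.map (fun row => row.filter (fun x => decide (x ≤ i))) = T₂ := by
        rw [List.map_congr_left (g := id) (fun row hr => hfil row (by simp [hr])), List.map_id]
      have h1' : T₂.map List.length = rest := by
        have := h1
        simp at this
        exact this.2
      have hfull : List.filter (fun x => decide (x ≤ i)) (r ++ [m]) = r ++ [m] :=
        List.filter_eq_self.mpr (fun x hx => by
          rcases List.mem_append.mp hx with hx | hx
          · exact decide_eq_true (le_of_lt (lt_of_lt_of_le (hmem r (by simp) x hx) him))
          · simp only [List.mem_singleton] at hx
            subst hx
            exact decide_eq_true him)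
      have : ((((r ++ [m]) :: T₂).map
            (fun row => row.filter (fun x => decide (x ≤ i)))).map List.length)
          = a :: rest := by
        simp only [List.map_cons, hmapT, h1', List.cons.injEq, and_true]
        rw [hfull]
        simp [hrlen]
        omega
      rw [this, List.filter_eq_self.mpr (fun k hk => decide_eq_true (hpos k hk).ne')]
      exact hnd
    · have hrep : List.filter (fun x => decide (x ≤ i)) [m] = [] := by
        simp [him]
      have h7i := h7 i
      simp only [List.map_cons] at h7i ⊢
      rw [List.filter_append, hrep, List.append_nil]
      exact h7i
  · rw [numBars_eq_card, numBars_eq_card]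
    have : (((r ++ [m]) :: T₂).flatten).toFinset
        = insert m ((r :: T₂).flatten).toFinset := by
      ext x
      simp only [List.flatten_cons, List.toFinset_append, Finset.mem_union, Finset.mem_insert,
        List.mem_toFinset, List.mem_singleton]
      tauto
    rw [this, Finset.card_insert_of_notMem (by simpa using hmflat)]

/-- Inserting two new full rows, both carrying the same fresh maximal label. -/
lemma bar_insert2 (μ₁ μ₂ : List ℕ) (T₁ T₂ : List (List ℕ)) (a b m : ℕ)
    (hT : IsBarTableau (μ₁ ++ μ₂) (T₁ ++ T₂)) (hlen1 : T₁.map List.length = μ₁)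
    (hm : ∀ x ∈ (T₁ ++ T₂).flatten, x < m) (hm0 : 0 < m)
    (ha : 0 < a) (hb : 0 < b) (hab : Odd (a + b))
    (hpos : ∀ x ∈ a :: μ₁ ++ b :: μ₂, 0 < x)
    (hnd : (a :: μ₁ ++ b :: μ₂).Nodup) :
    IsBarTableau (a :: μ₁ ++ b :: μ₂)
        (List.replicate a m :: T₁ ++ List.replicate b m :: T₂) ∧
      numBars (List.replicate a m :: T₁ ++ List.replicate b m :: T₂)
        = numBars (T₁ ++ T₂) + 1 := by
  obtain ⟨h1, h2, h3, h4, h5, h6, h7⟩ := hT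
  have hlen2 : T₂.map List.length = μ₂ := by
    have h := h1
    rw [List.map_append] at h
    exact (List.append_inj h (by rw [hlen1])).2
  have hmemrow : ∀ row, row ∈ T₁ ++ T₂ ↔
      row ∈ List.replicate a m :: T₁ ++ List.replicate b m :: T₂ ∧
        row ∈ T₁ ++ T₂ := by
    intro row
    constructor
    · intro h
      refine ⟨?_, h⟩
      rcases List.mem_append.mp h with h | h
      · exact List.mem_cons.mpr (Or.inr (List.mem_append.mpr (Or.inl h)))
      · exact List.mem_cons.mpr (Or.inr (List.mem_append.mpr (Or.inr (List.mem_cons.mpr (Or.inr h)))))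
    · exact fun h => h.2
  have hmem : ∀ row ∈ T₁ ++ T₂, ∀ x ∈ row, x < m := by
    intro row hr x hx
    exact hm x (List.mem_flatten.mpr ⟨row, hr, hx⟩)
  have hnotm : ∀ row ∈ T₁ ++ T₂, m ∉ row := by
    intro row hr h
    exact lt_irrefl m (hmem row hr m h)
  have hmflat : m ∉ (T₁ ++ T₂).flatten := by
    intro h
    exact lt_irrefl m (hm m h)
  -- case analysis on membership in the new tableau
  have hcases : ∀ row ∈ List.replicate a m :: T₁ ++ List.replicate b m :: T₂,
      row = List.replicate a m ∨ row = List.replicate b m ∨ row ∈ T₁ ++ T₂ := by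
    intro row hrow
    rcases List.mem_cons.mp hrow with rfl | hrow
    · exact Or.inl rfl
    · rcases List.mem_append.mp hrow with h | h
      · exact Or.inr (Or.inr (List.mem_append.mpr (Or.inl h)))
      · rcases List.mem_cons.mp h with rfl | h
        · exact Or.inr (Or.inl rfl)
        · exact Or.inr (Or.inr (List.mem_append.mpr (Or.inr h)))
  have hflat : (List.replicate a m :: T₁ ++ List.replicate b m :: T₂).flatten
      = List.replicate a m ++ (T₁.flatten ++ (List.replicate b m ++ T₂.flatten)) := by
    simp [List.flatten_cons, List.flatten_append]
  have hcount : ∀ v : ℕ,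
      ((List.replicate a m :: T₁ ++ List.replicate b m :: T₂).flatten).count v
        = (if v = m then a + b else 0) + ((T₁ ++ T₂).flatten).count v := by
    intro v
    rw [hflat]
    simp only [List.count_append, List.count_replicate, beq_iff_eq, List.flatten_append]
    by_cases hv : m = v
    · rw [if_pos hv, if_pos hv, if_pos hv.symm]
      omega
    · rw [if_neg hv, if_neg hv, if_neg (fun h => hv h.symm)]
      omega
  have hcountP : ∀ v : ℕ,
      (List.replicate a m :: T₁ ++ List.replicate b m :: T₂).countP
          (fun row => decide (v ∈ row))
        = (if v = m then 2 else 0) + (T₁ ++ T₂).countP (fun row => decide (v ∈ row)) := by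
    intro v
    simp only [List.countP_cons, List.countP_append]
    by_cases hv : v = m
    · subst hv
      simp [List.mem_replicate, ha.ne', hb.ne']
      omega
    · simp [List.mem_replicate, hv]
  refine ⟨⟨?_, ?_, ?_, ?_, ?_, ?_, ?_⟩, ?_⟩
  · simp [hlen1, hlen2]
  · intro row hrow x hx
    rcases hcases row hrow with rfl | rfl | hrow'
    · rcases List.mem_replicate.mp hx with ⟨-, rfl⟩
      exact hm0
    · rcases List.mem_replicate.mp hx with ⟨-, rfl⟩
      exact hm0
    · exact h2 row hrow' x hx
  · intro row hrow
    rcases hcases row hrow with rfl | rfl | hrow'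
    · exact List.isChain_replicate_of_rel _ le_rfl
    · exact List.isChain_replicate_of_rel _ le_rfl
    · exact h3 row hrow'
  · intro v hv
    rw [hcount]
    by_cases hvm : v = m
    · subst hvm
      rw [List.count_eq_zero.mpr hmflat]
      simpa using hab
    · simp only [if_neg hvm, zero_add]
      apply h4
      rcases List.mem_flatten.mp hv with ⟨row, hrow, hx⟩
      rcases hcases row hrow with rfl | rfl | hrow'
      · exact absurd (List.mem_replicate.mp hx).2 hvm
      · exact absurd (List.mem_replicate.mp hx).2 hvm
      · exact List.mem_flatten.mpr ⟨row, hrow', hx⟩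
  · intro v
    rw [hcountP]
    by_cases hv : v = m
    · have hPm : (T₁ ++ T₂).countP (fun row => decide (v ∈ row)) = 0 :=
        List.countP_eq_zero.mpr (fun row hr => by simpa [hv] using hnotm row hr)
      rw [hPm, if_pos hv]
    · rw [if_neg hv, zero_add]
      exact h5 v
  · intro v hv2 row hrow hvrow
    by_cases hv : v = m
    · rcases hcases row hrow with rfl | rfl | hrow'
      · rw [List.head?_replicate, if_neg ha.ne']
        exact congrArg some hv.symm ▸ rfl
      · rw [List.head?_replicate, if_neg hb.ne']
        exact congrArg some hv.symm ▸ rfl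
      · exact absurd (hv ▸ hvrow) (hnotm row hrow')
    · rcases hcases row hrow with rfl | rfl | hrow'
      · exact absurd (List.mem_replicate.mp hvrow).2 hv
      · exact absurd (List.mem_replicate.mp hvrow).2 hv
      · apply h6 v _ row hrow' hvrow
        have := hcountP v
        rw [if_neg hv, zero_add] at this
        omega
  · intro i
    by_cases him : m ≤ i
    · have hfil : ∀ row ∈ T₁ ++ T₂, row.filter (fun x => decide (x ≤ i)) = row := by
        intro row hr
        exact List.filter_eq_self.mpr fun x hx =>
          decide_eq_true (le_of_lt (lt_of_lt_of_le (hmem row hr x hx) him))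
      have hmapT1 : T₁.map (fun row => row.filter (fun x => decide (x ≤ i))) = T₁ := by
        rw [List.map_congr_left (g := id)
          (fun r hr => hfil r (List.mem_append.mpr (Or.inl hr))), List.map_id]
      have hmapT2 : T₂.map (fun row => row.filter (fun x => decide (x ≤ i))) = T₂ := by
        rw [List.map_congr_left (g := id)
          (fun r hr => hfil r (List.mem_append.mpr (Or.inr hr))), List.map_id]
      have : (((List.replicate a m :: T₁ ++ List.replicate b m :: T₂).map
            (fun row => row.filter (fun x => decide (x ≤ i)))).map List.length)
          = a :: μ₁ ++ b :: μ₂ := by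
        simp [List.filter_replicate, him, hmapT1, hmapT2, hlen1, hlen2]
      rw [this, List.filter_eq_self.mpr (fun k hk => decide_eq_true (hpos k hk).ne')]
      exact hnd
    · have hrep : ∀ c, (List.replicate c m).filter (fun x => decide (x ≤ i)) = [] := by
        intro c
        rw [List.filter_replicate]
        simp [him]
      have h7i := h7 i
      simp only [List.map_append, List.filter_append] at h7i
      simp only [List.map_cons, List.map_append, hrep, List.length_nil, List.filter_cons,
        List.filter_append]
      simpa using h7i
  · rw [numBars_eq_card, numBars_eq_card]
    have : ((List.replicate a m :: T₁ ++ List.replicate b m :: T₂).flatten).toFinset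
        = insert m ((T₁ ++ T₂).flatten).toFinset := by
      rw [hflat]
      ext x
      simp only [List.toFinset_append, Finset.mem_union, List.mem_toFinset,
        List.mem_replicate, Finset.mem_insert, List.flatten_append, List.mem_append,
        ne_eq, ha.ne', hb.ne', not_false_eq_true, true_and]
      tauto
    rw [this, Finset.card_insert_of_notMem (by simpa using hmflat)]

lemma main_aux (n : ℕ) : ∀ l : List ℕ, l.Pairwise (· > ·) → (∀ x ∈ l, 0 < x) → l.sum = n →
    ∃ T : List (List ℕ), IsBarTableau l T ∧
      numBars T = max (l.countP (fun x => decide (Odd x)))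
        (l.countP (fun x => decide (Even x)) + l.length % 2) := by
  induction n using Nat.strong_induction_on with
  | _ n IH =>
  intro l hs hp hsum
  cases l with
  | nil =>
    exact ⟨[], ⟨rfl, by simp, by simp, by simp, by simp, by simp, by simp⟩, by simp [numBars]⟩
  | cons a rest =>
    have ha0 : 0 < a := hp a (List.mem_cons_self)
    have hnd : (a :: rest).Nodup := List.Pairwise.imp (fun h => ne_of_gt h) hs
    rcases hdw : rest.dropWhile (fun x => decide (Odd x) == decide (Odd a)) with _ | ⟨b, r₂⟩
    · -- all of rest has the same parity as a
      have hall : ∀ x ∈ rest, decide (Odd x) = decide (Odd a) := by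
        intro x hx
        have := List.dropWhile_eq_nil_iff.mp hdw x hx
        simpa using this
      have hsum' : a + rest.sum = n := by simpa using hsum
      by_cases hoa : Odd a
      · -- everything odd: remove the first row as a single bar
        have hallodd : ∀ x ∈ a :: rest, Odd x := by
          intro x hx
          rcases List.mem_cons.mp hx with rfl | hx
          · exact hoa
          · have h := hall x hx
            rw [decide_eq_true hoa] at h
            exact of_decide_eq_true h
        obtain ⟨T, hT, hnb⟩ := IH rest.sum (by omega) rest hs.of_cons
          (fun x hx => hp x (by simp [hx])) rfl
        have hm : ∀ x ∈ T.flatten, x < T.flatten.foldr max 0 + 1 :=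
          fun x hx => Nat.lt_succ_of_le (le_foldr_max _ x hx)
        obtain ⟨hT', hnb'⟩ := bar_cons rest T a (T.flatten.foldr max 0 + 1) hT hm
          (Nat.succ_pos _) hoa hp hnd
        refine ⟨_, hT', ?_⟩
        rw [hnb', hnb]
        have ho1 : (a :: rest).countP (fun x => decide (Odd x)) = (a :: rest).length :=
          List.countP_eq_length.mpr (fun x hx => decide_eq_true (hallodd x hx))
        have ho2 : rest.countP (fun x => decide (Odd x)) = rest.length :=
          List.countP_eq_length.mpr (fun x hx => decide_eq_true (hallodd x (by simp [hx])))
        have he1 : (a :: rest).countP (fun x => decide (Even x)) = 0 :=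
          List.countP_eq_zero.mpr (fun x hx => by
            simp [Nat.even_iff, Nat.odd_iff.mp (hallodd x hx)])
        have he2 : rest.countP (fun x => decide (Even x)) = 0 :=
          List.countP_eq_zero.mpr (fun x hx => by
            simp [Nat.even_iff, Nat.odd_iff.mp (hallodd x (by simp [hx]))])
        rw [ho1, ho2, he1, he2]
        simp only [List.length_cons]
        omega
      · -- everything even: shorten the first row by one cell
        have hea : Even a := Nat.not_odd_iff_even.mp hoa
        have halleven : ∀ x ∈ a :: rest, Even x := by
          intro x hx
          rcases List.mem_cons.mp hx with rfl | hx
          · exact hea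
          · have h := hall x hx
            rw [decide_eq_false hoa] at h
            exact Nat.not_odd_iff_even.mp (of_decide_eq_false h)
        have ha2 : 2 ≤ a := by
          rw [Nat.even_iff] at hea
          omega
        have hsorted' : ((a - 1) :: rest).Pairwise (· > ·) := by
          rw [List.pairwise_cons]
          refine ⟨?_, hs.of_cons⟩
          intro x hx
          have hxa : a > x := (List.pairwise_cons.mp hs).1 x hx
          have hxe := halleven x (by simp [hx])
          rw [Nat.even_iff] at hxe hea
          omega
        have hpos' : ∀ x ∈ (a - 1) :: rest, 0 < x := by
          intro x hx
          rcases List.mem_cons.mp hx with rfl | hx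
          · omega
          · exact hp x (by simp [hx])
        obtain ⟨T, hT, hnb⟩ := IH ((a - 1) + rest.sum) (by omega) ((a - 1) :: rest)
          hsorted' hpos' (by simp)
        cases T with
        | nil =>
          have := hT.1
          simp at this
        | cons r T₂ =>
          have hm : ∀ x ∈ (r :: T₂).flatten, x < (r :: T₂).flatten.foldr max 0 + 1 :=
            fun x hx => Nat.lt_succ_of_le (le_foldr_max _ x hx)
          obtain ⟨hT', hnb'⟩ := bar_extend a rest r T₂ ((r :: T₂).flatten.foldr max 0 + 1)
            hT hm (Nat.succ_pos _) ha2 hp hnd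
          refine ⟨_, hT', ?_⟩
          rw [hnb', hnb]
          have hodd1 : Odd (a - 1) := by
            rw [Nat.odd_iff]
            rw [Nat.even_iff] at hea
            omega
          have ho2 : rest.countP (fun x => decide (Odd x)) = 0 :=
            List.countP_eq_zero.mpr (fun x hx => by
              simp [Nat.odd_iff, Nat.even_iff.mp (halleven x (by simp [hx]))])
          have he2 : rest.countP (fun x => decide (Even x)) = rest.length :=
            List.countP_eq_length.mpr (fun x hx => decide_eq_true (halleven x (by simp [hx])))
          have homu : ((a - 1) :: rest).countP (fun x => decide (Odd x)) = 1 := by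
            simp [List.countP_cons, ho2, hodd1]
          have hemu : ((a - 1) :: rest).countP (fun x => decide (Even x)) = rest.length := by
            rw [List.countP_cons, he2]
            have hdf : decide (Even (a - 1)) = false := by
              simp [Nat.even_iff, Nat.odd_iff.mp hodd1]
            rw [hdf]
            simp
          have hol : (a :: rest).countP (fun x => decide (Odd x)) = 0 := by
            simp [List.countP_cons, ho2, hoa]
          have hel : (a :: rest).countP (fun x => decide (Even x)) = rest.length + 1 := by
            simp [List.countP_cons, he2, hea]
          rw [homu, hemu, hol, hel]
          simp only [List.length_cons]
          omega
    · -- rest contains a part of the opposite parity: pair it with the first row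
      have hrest : rest.takeWhile (fun x => decide (Odd x) == decide (Odd a)) ++ b :: r₂
          = rest := by
        rw [← hdw]
        exact List.takeWhile_append_dropWhile
      set r₁ := rest.takeWhile (fun x => decide (Odd x) == decide (Odd a)) with hr₁
      have hpb : (decide (Odd b) == decide (Odd a)) = false := by
        have h := List.head?_dropWhile_not (fun x => decide (Odd x) == decide (Odd a)) rest
        rw [hdw] at h
        simpa using h
      have hbo : decide (Odd b) ≠ decide (Odd a) := by simpa using hpb
      have hsplit : a :: rest = a :: r₁ ++ b :: r₂ := by
        rw [List.cons_append, hrest]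
      rw [hsplit] at hs hp hnd hsum ⊢
      have hb0 : 0 < b := hp b (by simp)
      have h1odd : (if decide (Odd a) = true then 1 else 0)
          + (if decide (Odd b) = true then 1 else 0) = 1 := by
        by_cases hoa : Odd a <;> by_cases hob : Odd b <;>
          simp [hoa, hob] at hbo ⊢
      have h1even : (if decide (Even a) = true then 1 else 0)
          + (if decide (Even b) = true then 1 else 0) = 1 := by
        by_cases hoa : Odd a <;> by_cases hob : Odd b <;>
          simp [hoa, hob, ← Nat.not_odd_iff_even] at hbo ⊢
      have hab : Odd (a + b) := by
        rw [Nat.odd_iff]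
        by_cases hoa : Odd a <;> by_cases hob : Odd b <;>
          simp [hoa, hob] at hbo ⊢ <;>
          rw [Nat.odd_iff] at * <;> omega
      have hsub : List.Sublist (r₁ ++ r₂) (a :: r₁ ++ b :: r₂) := by
        rw [List.cons_append]
        refine List.Sublist.trans ?_ (List.sublist_cons_self a (r₁ ++ b :: r₂))
        exact (List.sublist_cons_self b r₂).append_left r₁
      have hsorted' : (r₁ ++ r₂).Pairwise (· > ·) := List.Pairwise.sublist hsub hs
      have hpos' : ∀ x ∈ r₁ ++ r₂, 0 < x := fun x hx => hp x (hsub.subset hx)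
      have hsum' : a + (r₁.sum + (b + r₂.sum)) = n := by simpa using hsum
      obtain ⟨T, hT, hnb⟩ := IH ((r₁ ++ r₂).sum)
        (by simp only [List.sum_append]; omega) (r₁ ++ r₂) hsorted' hpos' rfl
      have hT12 : T.take r₁.length ++ T.drop r₁.length = T := List.take_append_drop _ T
      have hlen1 : (T.take r₁.length).map List.length = r₁ := by
        rw [List.map_take, hT.1]
        exact List.take_left' rfl
      rw [← hT12] at hT hnb
      have hm : ∀ x ∈ (T.take r₁.length ++ T.drop r₁.length).flatten,
          x < (T.take r₁.length ++ T.drop r₁.length).flatten.foldr max 0 + 1 :=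
        fun x hx => Nat.lt_succ_of_le (le_foldr_max _ x hx)
      obtain ⟨hT', hnb'⟩ := bar_insert2 r₁ r₂ (T.take r₁.length) (T.drop r₁.length) a b
        ((T.take r₁.length ++ T.drop r₁.length).flatten.foldr max 0 + 1)
        hT hlen1 hm (Nat.succ_pos _) ha0 hb0 hab hp hnd
      refine ⟨_, hT', ?_⟩
      rw [hnb', hnb]
      have hoeq : (a :: r₁ ++ b :: r₂).countP (fun x => decide (Odd x))
          = (r₁ ++ r₂).countP (fun x => decide (Odd x)) + 1 := by
        simp only [List.countP_cons, List.countP_append]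
        omega
      have heeq : (a :: r₁ ++ b :: r₂).countP (fun x => decide (Even x))
          = (r₁ ++ r₂).countP (fun x => decide (Even x)) + 1 := by
        simp only [List.countP_cons, List.countP_append]
        omega
      have hleq : (a :: r₁ ++ b :: r₂).length = (r₁ ++ r₂).length + 2 := by
        simp
        omega
      rw [hoeq, heeq, hleq]
      omega

/-- There exists a bar tableau of shape `λ` with exactly `max(o, e + (ℓ(λ) mod 2))` bars. -/
theorem exists_minimal_barTableau (n : ℕ) (l : List ℕ) (h : IsStrictPartition n l) :
    ∃ T : List (List ℕ), IsBarTableau l T ∧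
      numBars T = max (l.countP (fun x => decide (Odd x)))
        (l.countP (fun x => decide (Even x)) + l.length % 2) := by
  obtain ⟨hs, hp, hsum⟩ := h
  exact main_aux n l hs hp hsum
end

section
/- For every strict partition λ, there exists a minimal bar tableau T* of shape λ (i.e., a bar tableau of shape λ with the minimum possible number of bars) such that no bar boundary occurs an even number of squares along any row of T*. -/
/-- A bar boundary occurs an even number of squares along a row: for some even `k > 0`,
the first `k` cells of the row all carry labels strictly smaller than the `(k+1)`-st cell. -/
def HasEvenBoundary (row : List ℕ) : Prop :=
  ∃ k : ℕ, 0 < k ∧ Even k ∧ k < row.length ∧ ∀ c ∈ row.take k, c < row.getD k 0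

namespace MBT
open List

def Os (l : List ℕ) : List ℕ := l.filter (fun x => decide (x % 2 = 1))
def Es (l : List ℕ) : List ℕ := l.filter (fun x => decide (x % 2 = 0))
def kk (l : List ℕ) : ℕ := min (Os l).length (Es l).length
def rr (l : List ℕ) : ℕ := (Es l).length - kk l
def RR (l : List ℕ) : ℕ := rr l + rr l % 2

def rowOf (l : List ℕ) (x : ℕ) : List ℕ :=
  if x % 2 = 1 then List.replicate x (RR l + 1 + (Os l).idxOf x)
  else if (Es l).idxOf x < kk l then List.replicate x (RR l + 1 + (Es l).idxOf x)
  else if ((Es l).idxOf x - kk l) % 2 = 1 then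
    ((Es l).idxOf x - kk l) :: List.replicate (x - 1) ((Es l).idxOf x - kk l + 1)
  else if (Es l).idxOf x - kk l + 1 < rr l then
    List.replicate x ((Es l).idxOf x - kk l + 1)
  else ((Es l).idxOf x - kk l + 1) :: List.replicate (x - 1) ((Es l).idxOf x - kk l + 2)

def buildT (l : List ℕ) : List (List ℕ) := l.map (rowOf l)

lemma mem_Os {l : List ℕ} {x : ℕ} (h : x ∈ Os l) : x ∈ l ∧ x % 2 = 1 := by
  simpa [Os] using h

lemma mem_Es {l : List ℕ} {x : ℕ} (h : x ∈ Es l) : x ∈ l ∧ x % 2 = 0 := by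
  simpa [Es] using h

lemma kk_add_rr {l : List ℕ} : kk l + rr l = (Es l).length := by
  have : kk l ≤ (Es l).length := min_le_right _ _
  simp [rr]; omega

lemma nodup_Os {l : List ℕ} (h : l.Nodup) : (Os l).Nodup := h.filter _
lemma nodup_Es {l : List ℕ} (h : l.Nodup) : (Es l).Nodup := h.filter _

lemma rowOf_Os_elem {l : List ℕ} (hnd : l.Nodup) {i : ℕ} (h : i < (Os l).length) :
    rowOf l (Os l)[i] = replicate (Os l)[i] (RR l + 1 + i) := by
  have hodd : (Os l)[i] % 2 = 1 := (mem_Os (getElem_mem h)).2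
  have hidx : (Os l).idxOf (Os l)[i] = i := (nodup_Os hnd).idxOf_getElem i h
  simp [rowOf, hodd, hidx]

lemma rowOf_Es_elem_lt {l : List ℕ} (hnd : l.Nodup) {i : ℕ} (h : i < (Es l).length)
    (hik : i < kk l) :
    rowOf l (Es l)[i] = replicate (Es l)[i] (RR l + 1 + i) := by
  have heven : (Es l)[i] % 2 = 0 := (mem_Es (getElem_mem h)).2
  have hidx : (Es l).idxOf (Es l)[i] = i := (nodup_Es hnd).idxOf_getElem i h
  simp [rowOf, heven, hidx, hik]

lemma rowOf_Es_elem_odd {l : List ℕ} (hnd : l.Nodup) {j : ℕ} (h : kk l + j < (Es l).length)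
    (hj : j % 2 = 1) :
    rowOf l (Es l)[kk l + j] =
      j :: replicate ((Es l)[kk l + j] - 1) (j + 1) := by
  have heven : (Es l)[kk l + j] % 2 = 0 := (mem_Es (getElem_mem h)).2
  have hidx : (Es l).idxOf (Es l)[kk l + j] = kk l + j := (nodup_Es hnd).idxOf_getElem _ h
  have h1 : ¬ (kk l + j < kk l) := by omega
  have h2 : kk l + j - kk l = j := by omega
  simp [rowOf, heven, hidx, h1, h2, hj]

lemma rowOf_Es_elem_even {l : List ℕ} (hnd : l.Nodup) {j : ℕ} (h : kk l + j < (Es l).length)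
    (hj : j % 2 = 0) (hjr : j + 1 < rr l) :
    rowOf l (Es l)[kk l + j] = replicate (Es l)[kk l + j] (j + 1) := by
  have heven : (Es l)[kk l + j] % 2 = 0 := (mem_Es (getElem_mem h)).2
  have hidx : (Es l).idxOf (Es l)[kk l + j] = kk l + j := (nodup_Es hnd).idxOf_getElem _ h
  have h1 : ¬ (kk l + j < kk l) := by omega
  have h2 : kk l + j - kk l = j := by omega
  simp [rowOf, heven, hidx, h1, h2, hj, hjr]

/-- The five shapes of rows. -/
lemma rowOf_spec {l : List ℕ} (hnd : l.Nodup) (hpos : ∀ x ∈ l, 0 < x)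
    {x : ℕ} (hx : x ∈ l) :
    (∃ i : ℕ, ∃ _ : i < (Os l).length, x = (Os l)[i] ∧
        rowOf l x = replicate x (RR l + 1 + i)) ∨
    (∃ i : ℕ, ∃ _ : i < (Es l).length, i < kk l ∧ x = (Es l)[i] ∧
        rowOf l x = replicate x (RR l + 1 + i)) ∨
    (∃ j : ℕ, ∃ _ : kk l + j < (Es l).length, j % 2 = 1 ∧ j < rr l ∧ x = (Es l)[kk l + j] ∧
        2 ≤ x ∧ rowOf l x = j :: replicate (x - 1) (j + 1)) ∨
    (∃ j : ℕ, ∃ _ : kk l + j < (Es l).length, j % 2 = 0 ∧ j + 1 < rr l ∧ x = (Es l)[kk l + j] ∧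
        rowOf l x = replicate x (j + 1)) ∨
    (∃ _ : kk l + (rr l - 1) < (Es l).length, rr l % 2 = 1 ∧ x = (Es l)[kk l + (rr l - 1)] ∧
        2 ≤ x ∧ rowOf l x = rr l :: replicate (x - 1) (rr l + 1)) := by
  have hke := @kk_add_rr l
  by_cases hodd : x % 2 = 1
  · left
    have hmem : x ∈ Os l := by simp [Os, hodd, hx]
    have hlt : (Os l).idxOf x < (Os l).length := idxOf_lt_length_iff.mpr hmem
    refine ⟨(Os l).idxOf x, hlt, (getElem_idxOf hlt).symm, ?_⟩
    simp [rowOf, hodd]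
  · have heven : x % 2 = 0 := by omega
    have hmem : x ∈ Es l := by simp [Es, heven, hx]
    have hlt : (Es l).idxOf x < (Es l).length := idxOf_lt_length_iff.mpr hmem
    set i := (Es l).idxOf x with hi
    by_cases hik : i < kk l
    · right; left
      refine ⟨i, hlt, hik, (getElem_idxOf hlt).symm, ?_⟩
      simp [rowOf, hodd, ← hi, hik]
    · have hxi : x = (Es l)[kk l + (i - kk l)]'(by omega) := by
        have : kk l + (i - kk l) = i := by omega
        simp only [this]; exact (getElem_idxOf hlt).symm
      have hjr : i - kk l < rr l := by omega
      by_cases hj1 : (i - kk l) % 2 = 1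
      · right; right; left
        refine ⟨i - kk l, by omega, hj1, hjr, hxi, ?_, ?_⟩
        · have := hpos x hx; omega
        · simp [rowOf, hodd, ← hi, hik, hj1]
      · by_cases hj2 : i - kk l + 1 < rr l
        · right; right; right; left
          refine ⟨i - kk l, by omega, by omega, hj2, hxi, ?_⟩
          simp [rowOf, hodd, ← hi, hik, hj1, hj2]
        · right; right; right; right
          have hjeq : i - kk l = rr l - 1 := by omega
          have hrodd : rr l % 2 = 1 := by omega
          simp only [hjeq] at hxi
          refine ⟨by omega, hrodd, hxi, by have := hpos x hx; omega, ?_⟩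
          have h3 : i - kk l + 1 = rr l := by omega
          simp [rowOf, hodd, ← hi, hik, hj1, hj2, h3]

/-- Which labels can occur in which rows. -/
lemma mem_row_label {l : List ℕ} (hnd : l.Nodup) (hpos : ∀ x ∈ l, 0 < x)
    {y v : ℕ} (hy : y ∈ l) (hv : v ∈ rowOf l y) :
    (∃ i : ℕ, ∃ _ : i < (Os l).length, y = (Os l)[i] ∧ v = RR l + 1 + i) ∨
    (∃ i : ℕ, ∃ _ : i < (Es l).length, i < kk l ∧ y = (Es l)[i] ∧ v = RR l + 1 + i) ∨
    (∃ j : ℕ, ∃ _ : kk l + j < (Es l).length, j % 2 = 1 ∧ j < rr l ∧ y = (Es l)[kk l + j] ∧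
      (v = j ∨ v = j + 1)) ∨
    (∃ j : ℕ, ∃ _ : kk l + j < (Es l).length, j % 2 = 0 ∧ j + 1 < rr l ∧ y = (Es l)[kk l + j] ∧
      v = j + 1) ∨
    (∃ _ : kk l + (rr l - 1) < (Es l).length, rr l % 2 = 1 ∧ y = (Es l)[kk l + (rr l - 1)] ∧
      (v = rr l ∨ v = rr l + 1)) := by
  rcases rowOf_spec hnd hpos hy with ⟨i, h, he, hr⟩ | ⟨i, h, hik, he, hr⟩ |
      ⟨j, h, hj, hjr, he, hx2, hr⟩ | ⟨j, h, hj, hjr, he, hr⟩ | ⟨h, hrodd, he, hx2, hr⟩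
  · left
    rw [hr] at hv
    exact ⟨i, h, he, (mem_replicate.mp hv).2⟩
  · right; left
    rw [hr] at hv
    exact ⟨i, h, hik, he, (mem_replicate.mp hv).2⟩
  · right; right; left
    rw [hr] at hv
    rcases List.mem_cons.mp hv with h1 | h1
    · exact ⟨j, h, hj, hjr, he, Or.inl h1⟩
    · exact ⟨j, h, hj, hjr, he, Or.inr (mem_replicate.mp h1).2⟩
  · right; right; right; left
    rw [hr] at hv
    exact ⟨j, h, hj, hjr, he, (mem_replicate.mp hv).2⟩
  · right; right; right; right
    rw [hr] at hv
    rcases List.mem_cons.mp hv with h1 | h1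
    · exact ⟨h, hrodd, he, Or.inl h1⟩
    · exact ⟨h, hrodd, he, Or.inr (mem_replicate.mp h1).2⟩


lemma head?_rep {n w : ℕ} (h : 0 < n) : (List.replicate n w).head? = some w := by
  rw [head?_replicate]
  simp only [ite_eq_right_iff]
  intro h0; omega

lemma count_rep (v w n : ℕ) : (List.replicate n w).count v = if w = v then n else 0 := by
  simp [count_replicate]

/-- Master lemma: for any label `v` present in the row of `x`, either `x`'s row is the
only row containing `v` and the count is odd, or there is exactly one other row `b`,
the total count is odd and both rows start with `v`. -/
lemma support_master {l : List ℕ} (hnd : l.Nodup) (hpos : ∀ x ∈ l, 0 < x)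
    {v x : ℕ} (hx : x ∈ l) (hvx : v ∈ rowOf l x) :
    ((∀ y ∈ l, v ∈ rowOf l y → y = x) ∧ Odd ((rowOf l x).count v)) ∨
    (∃ b ∈ l, b ≠ x ∧ (∀ y ∈ l, v ∈ rowOf l y → y = x ∨ y = b) ∧
      Odd ((rowOf l x).count v + (rowOf l b).count v) ∧
      (rowOf l x).head? = some v ∧ (rowOf l b).head? = some v) := by
  have hke : kk l + rr l = (Es l).length := kk_add_rr
  have hRr : RR l = rr l + rr l % 2 := rfl
  have hkO : kk l ≤ (Os l).length := min_le_left _ _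
  have hkE : kk l ≤ (Es l).length := min_le_right _ _
  rcases rowOf_spec hnd hpos hx with ⟨i, h, he, hr⟩ | ⟨i, h, hik, he, hr⟩ |
      ⟨j, h, hj, hjr, he, hx2, hr⟩ | ⟨j, h, hj, hjr, he, hr⟩ | ⟨h, hrodd, he, hx2, hr⟩
  · -- case 1 : x odd, row = replicate x (RR+1+i)
    have hx2 : x % 2 = 1 := by rw [he]; exact (mem_Os (getElem_mem h)).2
    have hveq : v = RR l + 1 + i := by
      rw [hr] at hvx; exact (mem_replicate.mp hvx).2
    have hcx : (rowOf l x).count v = x := by rw [hr, count_rep]; simp [hveq]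
    by_cases hik : i < kk l
    · -- pair with (Es l)[i]
      have hie : i < (Es l).length := by omega
      refine Or.inr ⟨(Es l)[i], (mem_Es (getElem_mem hie)).1, ?_, ?_, ?_, ?_, ?_⟩
      · have hb2 : (Es l)[i] % 2 = 0 := (mem_Es (getElem_mem hie)).2
        intro hbx; rw [hbx] at hb2; omega
      · intro y hy hvy
        rcases mem_row_label hnd hpos hy hvy with ⟨i', h', hye, hveq'⟩ |
            ⟨i', h', hik', hye, hveq'⟩ | ⟨j', h', hj', hjr', hye, hveq'⟩ |
            ⟨j', h', hj', hjr', hye, hveq'⟩ | ⟨h', hrodd', hye, hveq'⟩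
        · have hii : i' = i := by omega
          subst hii; exact Or.inl (hye.trans he.symm)
        · have hii : i' = i := by omega
          subst hii; exact Or.inr hye
        · exfalso; rcases hveq' with h1 | h1 <;> omega
        · exfalso; omega
        · exfalso; rcases hveq' with h1 | h1 <;> omega
      · have hcb : (rowOf l (Es l)[i]).count v = (Es l)[i] := by
          rw [rowOf_Es_elem_lt hnd hie hik, count_rep]; simp [hveq]
        rw [hcx, hcb, Nat.odd_iff]
        have hb2 : (Es l)[i] % 2 = 0 := (mem_Es (getElem_mem hie)).2
        omega
      · rw [hr, hveq]; exact head?_rep (hpos x hx)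
      · rw [rowOf_Es_elem_lt hnd hie hik, hveq]
        exact head?_rep (hpos _ (mem_Es (getElem_mem hie)).1)
    · -- single
      refine Or.inl ⟨?_, by rw [hcx]; exact Nat.odd_iff.mpr hx2⟩
      intro y hy hvy
      rcases mem_row_label hnd hpos hy hvy with ⟨i', h', hye, hveq'⟩ |
          ⟨i', h', hik', hye, hveq'⟩ | ⟨j', h', hj', hjr', hye, hveq'⟩ |
          ⟨j', h', hj', hjr', hye, hveq'⟩ | ⟨h', hrodd', hye, hveq'⟩
      · have hii : i' = i := by omega
        subst hii; exact hye.trans he.symm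
      · exfalso; omega
      · exfalso; rcases hveq' with h1 | h1 <;> omega
      · exfalso; omega
      · exfalso; rcases hveq' with h1 | h1 <;> omega
  · -- case 2 : x even with i < kk, paired with (Os l)[i]
    have hx2 : x % 2 = 0 := by rw [he]; exact (mem_Es (getElem_mem h)).2
    have hveq : v = RR l + 1 + i := by
      rw [hr] at hvx; exact (mem_replicate.mp hvx).2
    have hcx : (rowOf l x).count v = x := by rw [hr, count_rep]; simp [hveq]
    have hio : i < (Os l).length := by omega
    have hb2 : (Os l)[i] % 2 = 1 := (mem_Os (getElem_mem hio)).2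
    refine Or.inr ⟨(Os l)[i], (mem_Os (getElem_mem hio)).1, ?_, ?_, ?_, ?_, ?_⟩
    · intro hbx; rw [hbx] at hb2; omega
    · intro y hy hvy
      rcases mem_row_label hnd hpos hy hvy with ⟨i', h', hye, hveq'⟩ |
          ⟨i', h', hik', hye, hveq'⟩ | ⟨j', h', hj', hjr', hye, hveq'⟩ |
          ⟨j', h', hj', hjr', hye, hveq'⟩ | ⟨h', hrodd', hye, hveq'⟩
      · have hii : i' = i := by omega
        subst hii; exact Or.inr hye
      · have hii : i' = i := by omega
        subst hii; exact Or.inl (hye.trans he.symm)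
      · exfalso; rcases hveq' with h1 | h1 <;> omega
      · exfalso; omega
      · exfalso; rcases hveq' with h1 | h1 <;> omega
    · have hcb : (rowOf l (Os l)[i]).count v = (Os l)[i] := by
        rw [rowOf_Os_elem hnd hio, count_rep]; simp [hveq]
      rw [hcx, hcb, Nat.odd_iff]; omega
    · rw [hr, hveq]; exact head?_rep (hpos x hx)
    · rw [rowOf_Os_elem hnd hio, hveq]
      exact head?_rep (hpos _ (mem_Os (getElem_mem hio)).1)
  · -- case 3 : x = (Es l)[kk+j], j odd, row = j :: replicate (x-1) (j+1)
    have hxe2 : x % 2 = 0 := by rw [he]; exact (mem_Es (getElem_mem h)).2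
    rw [hr] at hvx
    rcases List.mem_cons.mp hvx with hveq | hveq
    · -- v = j : paired with the constant row (Es l)[kk+(j-1)]
      have hcx : (rowOf l x).count v = 1 := by
        rw [hr, count_cons, count_rep]
        have h1 : ¬ (j + 1 = v) := by omega
        have h2 : (j == v) = true := by simp [hveq]
        simp [h1, h2]
      have hbe : kk l + (v - 1) < (Es l).length := by omega
      have hb2 : (Es l)[kk l + (v - 1)] % 2 = 0 := (mem_Es (getElem_mem hbe)).2
      have hbrow : rowOf l (Es l)[kk l + (v - 1)] = replicate (Es l)[kk l + (v - 1)] v := by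
        rw [rowOf_Es_elem_even hnd hbe (by omega) (by omega)]
        congr 1; omega
      refine Or.inr ⟨(Es l)[kk l + (v - 1)], (mem_Es (getElem_mem hbe)).1, ?_, ?_, ?_, ?_, ?_⟩
      · intro hbx
        rw [he] at hbx
        have := (nodup_Es hnd).getElem_inj_iff.mp hbx
        omega
      · intro y hy hvy
        rcases mem_row_label hnd hpos hy hvy with ⟨i', h', hye, hveq'⟩ |
            ⟨i', h', hik', hye, hveq'⟩ | ⟨j', h', hj', hjr', hye, hveq'⟩ |
            ⟨j', h', hj', hjr', hye, hveq'⟩ | ⟨h', hrodd', hye, hveq'⟩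
        · exfalso; omega
        · exfalso; omega
        · rcases hveq' with h1 | h1
          · have hjj : j' = j := by omega
            subst hjj; exact Or.inl (hye.trans he.symm)
          · exfalso; omega
        · have hjj : j' = v - 1 := by omega
          subst hjj; exact Or.inr hye
        · exfalso; rcases hveq' with h1 | h1 <;> omega
      · have hcb : (rowOf l (Es l)[kk l + (v - 1)]).count v = (Es l)[kk l + (v - 1)] := by
          rw [hbrow, count_rep]; simp
        rw [hcx, hcb, Nat.odd_iff]; omega
      · rw [hr, hveq]; rfl
      · rw [hbrow]; exact head?_rep (hpos _ (mem_Es (getElem_mem hbe)).1)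
    · -- v = j+1 : single row
      have hveq : v = j + 1 := (mem_replicate.mp hveq).2
      have hcx : (rowOf l x).count v = x - 1 := by
        rw [hr, count_cons, count_rep]
        have h1 : ¬ (j = v) := by omega
        have h2 : (j == v) = false := by simp [h1]
        simp [hveq, h2]
      refine Or.inl ⟨?_, by rw [hcx]; exact Nat.odd_iff.mpr (by omega)⟩
      intro y hy hvy
      rcases mem_row_label hnd hpos hy hvy with ⟨i', h', hye, hveq'⟩ |
          ⟨i', h', hik', hye, hveq'⟩ | ⟨j', h', hj', hjr', hye, hveq'⟩ |
          ⟨j', h', hj', hjr', hye, hveq'⟩ | ⟨h', hrodd', hye, hveq'⟩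
      · exfalso; omega
      · exfalso; omega
      · rcases hveq' with h1 | h1
        · exfalso; omega
        · have hjj : j' = j := by omega
          subst hjj; exact hye.trans he.symm
      · exfalso; omega
      · exfalso; rcases hveq' with h1 | h1 <;> omega
  · -- case 4 : x = (Es l)[kk+j], j even, j+1 < rr, row = replicate x (j+1)
    have hxe2 : x % 2 = 0 := by rw [he]; exact (mem_Es (getElem_mem h)).2
    have hveq : v = j + 1 := by rw [hr] at hvx; exact (mem_replicate.mp hvx).2
    have hcx : (rowOf l x).count v = x := by rw [hr, count_rep]; simp [hveq]
    have hbe : kk l + (j + 1) < (Es l).length := by omega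
    have hb2 : (Es l)[kk l + (j + 1)] % 2 = 0 := (mem_Es (getElem_mem hbe)).2
    have hbpos : 0 < (Es l)[kk l + (j + 1)] := hpos _ (mem_Es (getElem_mem hbe)).1
    have hbrow : rowOf l (Es l)[kk l + (j + 1)] =
        (j + 1) :: replicate ((Es l)[kk l + (j + 1)] - 1) (j + 2) :=
      rowOf_Es_elem_odd hnd hbe (by omega)
    refine Or.inr ⟨(Es l)[kk l + (j + 1)], (mem_Es (getElem_mem hbe)).1, ?_, ?_, ?_, ?_, ?_⟩
    · intro hbx
      rw [he] at hbx
      have := (nodup_Es hnd).getElem_inj_iff.mp hbx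
      omega
    · intro y hy hvy
      rcases mem_row_label hnd hpos hy hvy with ⟨i', h', hye, hveq'⟩ |
          ⟨i', h', hik', hye, hveq'⟩ | ⟨j', h', hj', hjr', hye, hveq'⟩ |
          ⟨j', h', hj', hjr', hye, hveq'⟩ | ⟨h', hrodd', hye, hveq'⟩
      · exfalso; omega
      · exfalso; omega
      · rcases hveq' with h1 | h1
        · have hjj : j' = j + 1 := by omega
          subst hjj; exact Or.inr hye
        · exfalso; omega
      · have hjj : j' = j := by omega
        subst hjj; exact Or.inl (hye.trans he.symm)
      · exfalso; rcases hveq' with h1 | h1 <;> omega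
    · have hcb : (rowOf l (Es l)[kk l + (j + 1)]).count v = 1 := by
        rw [hbrow, count_cons, count_rep]
        have h1 : ¬ (j + 2 = v) := by omega
        simp [hveq, h1]
      rw [hcx, hcb, Nat.odd_iff]; omega
    · rw [hr, hveq]; exact head?_rep (hpos x hx)
    · rw [hbrow, hveq]; rfl
  · -- case 5 : x = (Es l)[kk+(rr-1)], rr odd, row = rr :: replicate (x-1) (rr+1)
    have hxe2 : x % 2 = 0 := by rw [he]; exact (mem_Es (getElem_mem h)).2
    rw [hr] at hvx
    have huniq : ∀ y ∈ l, v ∈ rowOf l y → y = x := by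
      intro y hy hvy
      have hvmem : v = rr l ∨ v = rr l + 1 := by
        rcases List.mem_cons.mp hvx with h1 | h1
        · exact Or.inl h1
        · exact Or.inr (mem_replicate.mp h1).2
      rcases mem_row_label hnd hpos hy hvy with ⟨i', h', hye, hveq'⟩ |
          ⟨i', h', hik', hye, hveq'⟩ | ⟨j', h', hj', hjr', hye, hveq'⟩ |
          ⟨j', h', hj', hjr', hye, hveq'⟩ | ⟨h', hrodd', hye, hveq'⟩
      · exfalso; rcases hvmem with h1 | h1 <;> omega
      · exfalso; rcases hvmem with h1 | h1 <;> omega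
      · exfalso; rcases hveq' with h1 | h1 <;> rcases hvmem with h2 | h2 <;> omega
      · exfalso; rcases hvmem with h1 | h1 <;> omega
      · exact hye.trans he.symm
    rcases List.mem_cons.mp hvx with hveq | hveq
    · refine Or.inl ⟨huniq, ?_⟩
      have hcx : (rowOf l x).count v = 1 := by
        rw [hr, count_cons, count_rep]
        have h1 : ¬ (rr l + 1 = v) := by omega
        have h2 : (rr l == v) = true := by simp [hveq]
        simp [h1, h2]
      rw [hcx]; exact odd_one
    · have hveq : v = rr l + 1 := (mem_replicate.mp hveq).2
      refine Or.inl ⟨huniq, ?_⟩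
      have hcx : (rowOf l x).count v = x - 1 := by
        rw [hr, count_cons, count_rep]
        have h1 : ¬ (rr l = v) := by omega
        have h2 : (rr l == v) = false := by simp [h1]
        simp [hveq, h2]
      rw [hcx]; exact Nat.odd_iff.mpr (by omega)


lemma chain'_rep (n w : ℕ) : (List.replicate n w).Chain' (· ≤ ·) :=
  isChain_iff_pairwise.mpr (pairwise_replicate.mpr (Or.inr le_rfl))

lemma chain'_cons_rep {a b : ℕ} (n : ℕ) (h : a ≤ b) :
    (a :: List.replicate n b).Chain' (· ≤ ·) := by
  cases n with
  | zero => exact List.isChain_singleton _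
  | succ m =>
      rw [replicate_succ]
      exact List.isChain_cons_cons.mpr ⟨h, by rw [← replicate_succ]; exact chain'_rep _ _⟩

lemma rowOf_length {l : List ℕ} (hnd : l.Nodup) (hpos : ∀ x ∈ l, 0 < x)
    {x : ℕ} (hx : x ∈ l) : (rowOf l x).length = x := by
  have := hpos x hx
  rcases rowOf_spec hnd hpos hx with ⟨i, h, he, hr⟩ | ⟨i, h, hik, he, hr⟩ |
      ⟨j, h, hj, hjr, he, hx2, hr⟩ | ⟨j, h, hj, hjr, he, hr⟩ | ⟨h, hrodd, he, hx2, hr⟩ <;>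
    simp [hr] <;> omega

lemma rowOf_chain {l : List ℕ} (hnd : l.Nodup) (hpos : ∀ x ∈ l, 0 < x)
    {x : ℕ} (hx : x ∈ l) : (rowOf l x).Chain' (· ≤ ·) := by
  rcases rowOf_spec hnd hpos hx with ⟨i, h, he, hr⟩ | ⟨i, h, hik, he, hr⟩ |
      ⟨j, h, hj, hjr, he, hx2, hr⟩ | ⟨j, h, hj, hjr, he, hr⟩ | ⟨h, hrodd, he, hx2, hr⟩ <;>
    rw [hr]
  · exact chain'_rep _ _
  · exact chain'_rep _ _
  · exact chain'_cons_rep _ (by omega)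
  · exact chain'_rep _ _
  · exact chain'_cons_rep _ (by omega)

lemma rowOf_pos {l : List ℕ} (hnd : l.Nodup) (hpos : ∀ x ∈ l, 0 < x)
    {x : ℕ} (hx : x ∈ l) : ∀ c ∈ rowOf l x, 0 < c := by
  intro c hc
  rcases mem_row_label hnd hpos hx hc with ⟨i, h, he, hv⟩ | ⟨i, h, hik, he, hv⟩ |
      ⟨j, h, hj, hjr, he, hv⟩ | ⟨j, h, hj, hjr, he, hv⟩ | ⟨h, hrodd, he, hv⟩
  · omega
  · omega
  · rcases hv with h1 | h1 <;> omega
  · omega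
  · rcases hv with h1 | h1 <;> omega

lemma buildT_count_odd {l : List ℕ} (hnd : l.Nodup) (hpos : ∀ x ∈ l, 0 < x) :
    ∀ v ∈ (buildT l).flatten, Odd ((buildT l).flatten.count v) := by
  intro v hv
  rcases mem_flatten.mp hv with ⟨row, hrow, hvrow⟩
  rcases List.mem_map.mp hrow with ⟨x, hx, hxrow⟩
  rw [← hxrow] at hvrow
  have hsum : (buildT l).flatten.count v = (l.map (fun x => (rowOf l x).count v)).sum := by
    rw [count_flatten, buildT, List.map_map]; rfl
  rw [hsum, ← List.sum_toFinset _ hnd]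
  rcases support_master hnd hpos hx hvrow with ⟨huniq, hodd⟩ | ⟨b, hb, hbx, huniq, hodd, _, _⟩
  · rw [Finset.sum_eq_single_of_mem x (List.mem_toFinset.mpr hx)]
    · exact hodd
    · intro y hy hyx
      exact count_eq_zero.mpr (fun hvy => hyx (huniq y (List.mem_toFinset.mp hy) hvy))
  · rw [Finset.sum_eq_add_of_mem x b (List.mem_toFinset.mpr hx) (List.mem_toFinset.mpr hb)
      (Ne.symm hbx)]
    · exact hodd
    · intro y hy ⟨hy1, hy2⟩
      refine count_eq_zero.mpr (fun hvy => ?_)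
      rcases huniq y (List.mem_toFinset.mp hy) hvy with h1 | h1
      · exact hy1 h1
      · exact hy2 h1

lemma countP_le_one_of {l : List ℕ} {p : ℕ → Bool} (hnd : l.Nodup) (a : ℕ)
    (h : ∀ y ∈ l, p y → y = a) : l.countP p ≤ 1 := by
  induction l with
  | nil => simp
  | cons c cl ih =>
      rw [nodup_cons] at hnd
      rw [countP_cons]
      by_cases hpc : p c
      · have hca : c = a := h c (List.mem_cons_self) hpc
        have h0 : cl.countP p = 0 := by
          rw [countP_eq_zero]
          intro y hy hpy
          have := h y (List.mem_cons_of_mem c hy) hpy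
          rw [this, ← hca] at hy
          exact hnd.1 hy
        simp [hpc, h0]
      · have := ih hnd.2 (fun y hy hpy => h y (List.mem_cons_of_mem c hy) hpy)
        simp [hpc]; omega

lemma countP_le_two_of {l : List ℕ} {p : ℕ → Bool} (hnd : l.Nodup) (a b : ℕ)
    (h : ∀ y ∈ l, p y → y = a ∨ y = b) : l.countP p ≤ 2 := by
  induction l with
  | nil => simp
  | cons c cl ih =>
      rw [nodup_cons] at hnd
      rw [countP_cons]
      by_cases hpc : p c
      · have hc1 : cl.countP p ≤ 1 := by
          rcases h c (List.mem_cons_self) hpc with hca | hcb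
          · refine countP_le_one_of hnd.2 b ?_
            intro y hy hpy
            rcases h y (List.mem_cons_of_mem c hy) hpy with h1 | h1
            · exfalso; rw [h1, ← hca] at hy; exact hnd.1 hy
            · exact h1
          · refine countP_le_one_of hnd.2 a ?_
            intro y hy hpy
            rcases h y (List.mem_cons_of_mem c hy) hpy with h1 | h1
            · exact h1
            · exfalso; rw [h1, ← hcb] at hy; exact hnd.1 hy
        simp [hpc]; omega
      · have := ih hnd.2 (fun y hy hpy => h y (List.mem_cons_of_mem c hy) hpy)
        simp [hpc]; omega

lemma buildT_countP_eq {l : List ℕ} (v : ℕ) :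
    (buildT l).countP (fun row => decide (v ∈ row)) =
      l.countP (fun x => decide (v ∈ rowOf l x)) := by
  rw [buildT, countP_map]; rfl

lemma buildT_le_two {l : List ℕ} (hnd : l.Nodup) (hpos : ∀ x ∈ l, 0 < x) (v : ℕ) :
    (buildT l).countP (fun row => decide (v ∈ row)) ≤ 2 := by
  rw [buildT_countP_eq]
  by_cases hex : ∃ x ∈ l, v ∈ rowOf l x
  · rcases hex with ⟨x, hx, hvx⟩
    rcases support_master hnd hpos hx hvx with ⟨huniq, _⟩ | ⟨b, hb, hbx, huniq, _, _, _⟩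
    · refine le_trans (countP_le_one_of hnd x ?_) (by omega)
      intro y hy hpy
      exact huniq y hy (by simpa using hpy)
    · refine countP_le_two_of hnd x b ?_
      intro y hy hpy
      exact huniq y hy (by simpa using hpy)
  · push_neg at hex
    rw [countP_eq_zero.mpr (fun y hy => by simpa using hex y hy)]
    omega

lemma buildT_heads {l : List ℕ} (hnd : l.Nodup) (hpos : ∀ x ∈ l, 0 < x) (v : ℕ)
    (h2 : (buildT l).countP (fun row => decide (v ∈ row)) = 2) :
    ∀ row ∈ buildT l, v ∈ row → row.head? = some v := by
  intro row hrow hvrow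
  rcases List.mem_map.mp hrow with ⟨x, hx, hxrow⟩
  rw [← hxrow] at hvrow ⊢
  rcases support_master hnd hpos hx hvrow with ⟨huniq, _⟩ | ⟨b, hb, hbx, huniq, _, hh1, hh2⟩
  · exfalso
    rw [buildT_countP_eq] at h2
    have hle1 : l.countP (fun x => decide (v ∈ rowOf l x)) ≤ 1 := by
      refine countP_le_one_of hnd x ?_
      intro y hy hpy
      exact huniq y hy (by simpa using hpy)
    omega
  · exact hh1


/-- Filtered length of a row, for condition (4). -/
lemma glen_cases {l : List ℕ} (hnd : l.Nodup) (hpos : ∀ x ∈ l, 0 < x)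
    {x : ℕ} (hx : x ∈ l) (t : ℕ) :
    (((rowOf l x).filter (fun c => decide (c ≤ t))).length = 0) ∨
    (((rowOf l x).filter (fun c => decide (c ≤ t))).length = x ∧
      (x % 2 = 1 → RR l + 1 ≤ t)) ∨
    (((rowOf l x).filter (fun c => decide (c ≤ t))).length = 1 ∧ x % 2 = 0 ∧
      ∃ j : ℕ, ∃ _ : kk l + j < (Es l).length, x = (Es l)[kk l + j] ∧
        ((t = j ∧ j < rr l) ∨ (j = rr l - 1 ∧ t = rr l ∧ rr l % 2 = 1))) := by
  have hke : kk l + rr l = (Es l).length := kk_add_rr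
  have hRr : RR l = rr l + rr l % 2 := rfl
  rcases rowOf_spec hnd hpos hx with ⟨i, h, he, hr⟩ | ⟨i, h, hik, he, hr⟩ |
      ⟨j, h, hj, hjr, he, hx2, hr⟩ | ⟨j, h, hj, hjr, he, hr⟩ | ⟨h, hrodd, he, hx2, hr⟩
  · rw [hr, filter_replicate]
    by_cases hle : RR l + 1 + i ≤ t
    · right; left
      simp [hle]
      omega
    · left; simp [hle]
  · have hx2 : x % 2 = 0 := by rw [he]; exact (mem_Es (getElem_mem h)).2
    rw [hr, filter_replicate]
    by_cases hle : RR l + 1 + i ≤ t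
    · right; left; simp [hle]; omega
    · left; simp [hle]
  · have hxe2 : x % 2 = 0 := by rw [he]; exact (mem_Es (getElem_mem h)).2
    rw [hr, filter_cons, filter_replicate]
    by_cases hle1 : j + 1 ≤ t
    · right; left
      have hle0 : j ≤ t := by omega
      simp [hle1, hle0]
      omega
    · by_cases hle0 : j ≤ t
      · right; right
        refine ⟨?_, hxe2, j, h, he, Or.inl ⟨by omega, hjr⟩⟩
        simp [hle1, hle0]
      · left; simp [hle1, hle0]
  · have hxe2 : x % 2 = 0 := by rw [he]; exact (mem_Es (getElem_mem h)).2
    rw [hr, filter_replicate]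
    by_cases hle : j + 1 ≤ t
    · right; left; simp [hle]; omega
    · left; simp [hle]
  · have hxe2 : x % 2 = 0 := by rw [he]; exact (mem_Es (getElem_mem h)).2
    rw [hr, filter_cons, filter_replicate]
    by_cases hle1 : rr l + 1 ≤ t
    · right; left
      have hle0 : rr l ≤ t := by omega
      simp [hle1, hle0]
      omega
    · by_cases hle0 : rr l ≤ t
      · right; right
        refine ⟨?_, hxe2, rr l - 1, h, he, Or.inr ⟨rfl, by omega, hrodd⟩⟩
        simp [hle1, hle0]
      · left; simp [hle1, hle0]

lemma buildT_cond4 {l : List ℕ} (hnd : l.Nodup) (hpos : ∀ x ∈ l, 0 < x) (t : ℕ) :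
    ((((buildT l).map (fun row => row.filter (fun c => decide (c ≤ t)))).map
        List.length).filter (fun m => decide (m ≠ 0))).Nodup := by
  have hke : kk l + rr l = (Es l).length := kk_add_rr
  have hRr : RR l = rr l + rr l % 2 := rfl
  have hmm : ((buildT l).map (fun row => row.filter (fun c => decide (c ≤ t)))).map
      List.length = l.map (fun x => ((rowOf l x).filter (fun c => decide (c ≤ t))).length) := by
    rw [buildT, List.map_map, List.map_map]; rfl
  rw [hmm, List.filter_map]
  refine List.Nodup.map_on ?_ (hnd.filter _)
  intro x hx' y hy' hxy
  have hx := List.mem_of_mem_filter hx'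
  have hy := List.mem_of_mem_filter hy'
  have hx0 : ((rowOf l x).filter (fun c => decide (c ≤ t))).length ≠ 0 := by
    have := (List.mem_filter.mp hx').2; simpa using this
  have hy0 : ((rowOf l y).filter (fun c => decide (c ≤ t))).length ≠ 0 := by
    have := (List.mem_filter.mp hy').2; simpa using this
  rcases glen_cases hnd hpos hx t with h1 | ⟨h1, h1'⟩ | ⟨h1, hx2, j1, hj1e, hxe, hc1⟩
  · exact absurd h1 hx0
  · rcases glen_cases hnd hpos hy t with h2 | ⟨h2, h2'⟩ | ⟨h2, hy2, j2, hj2e, hye, hc2⟩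
    · exact absurd h2 hy0
    · rw [h1, h2] at hxy; exact hxy
    · -- x full, y partial of length 1
      exfalso
      rw [h1, h2] at hxy
      by_cases hxodd : x % 2 = 1
      · have := h1' hxodd
        rcases hc2 with ⟨h3, h4⟩ | ⟨h3, h4, h5⟩ <;> omega
      · omega
  · rcases glen_cases hnd hpos hy t with h2 | ⟨h2, h2'⟩ | ⟨h2, hy2, j2, hj2e, hye, hc2⟩
    · exact absurd h2 hy0
    · exfalso
      rw [h1, h2] at hxy
      by_cases hyodd : y % 2 = 1
      · have := h2' hyodd
        rcases hc1 with ⟨h3, h4⟩ | ⟨h3, h4, h5⟩ <;> omega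
      · omega
    · -- both partial
      have hjj : j1 = j2 := by
        rcases hc1 with ⟨h3, h4⟩ | ⟨h3, h4, h5⟩ <;> rcases hc2 with ⟨h6, h7⟩ | ⟨h6, h7, h8⟩ <;>
          omega
      subst hjj
      exact hxe.trans hye.symm

lemma noEB_rep (n w : ℕ) : ¬ HasEvenBoundary (List.replicate n w) := by
  rintro ⟨k, hk0, hke, hkl, hall⟩
  rw [List.length_replicate] at hkl
  have hgd : (List.replicate n w).getD k 0 = w := by
    rw [List.getD_eq_getElem _ _ (by simpa using hkl), getElem_replicate]
  have hmem : w ∈ (List.replicate n w).take k := by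
    rw [take_replicate]
    exact mem_replicate.mpr ⟨by omega, rfl⟩
  have := hall w hmem
  rw [hgd] at this
  omega

lemma noEB_cons {a b : ℕ} (m : ℕ) : ¬ HasEvenBoundary (a :: List.replicate m b) := by
  rintro ⟨k, hk0, hke, hkl, hall⟩
  have hk2 : 2 ≤ k := by
    rcases hke with ⟨c, hc⟩; omega
  have hlen : (a :: List.replicate m b).length = m + 1 := by simp
  rw [hlen] at hkl
  have h1lt : 1 < (a :: List.replicate m b).length := by simp; omega
  have hrow1 : (a :: List.replicate m b)[1]'h1lt = b := by
    simp [getElem_replicate]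
  obtain ⟨k', rfl⟩ : ∃ k', k = k' + 1 := ⟨k - 1, by omega⟩
  have hgd : (a :: List.replicate m b).getD (k' + 1) 0 = b := by
    rw [List.getD_eq_getElem _ _ (by simp; omega)]
    simp only [List.getElem_cons_succ]
    exact getElem_replicate (by simpa using (by omega : k' < m))
  have htl : 1 < ((a :: List.replicate m b).take (k' + 1)).length := by
    simp only [List.length_take, hlen]
    omega
  have hmem : b ∈ (a :: List.replicate m b).take (k' + 1) := by
    have : ((a :: List.replicate m b).take (k' + 1))[1]'htl = b := by
      rw [List.getElem_take]
      exact hrow1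
    have h5 := List.getElem_mem htl
    rw [this] at h5
    exact h5
  have := hall b hmem
  rw [hgd] at this
  omega


lemma buildT_numBars_le {l : List ℕ} (hnd : l.Nodup) (hpos : ∀ x ∈ l, 0 < x) :
    numBars (buildT l) ≤ RR l + (Os l).length := by
  have hke : kk l + rr l = (Es l).length := kk_add_rr
  have hRr : RR l = rr l + rr l % 2 := rfl
  have hkO : kk l ≤ (Os l).length := min_le_left _ _
  have hsub : (buildT l).flatten.toFinset ⊆ Finset.Icc 1 (RR l + (Os l).length) := by
    intro v hv
    rcases mem_flatten.mp (List.mem_toFinset.mp hv) with ⟨row, hrow, hvrow⟩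
    rcases List.mem_map.mp hrow with ⟨x, hx, hxrow⟩
    rw [← hxrow] at hvrow
    rcases mem_row_label hnd hpos hx hvrow with ⟨i, h, he, hveq⟩ | ⟨i, h, hik, he, hveq⟩ |
        ⟨j, h, hj, hjr, he, hveq⟩ | ⟨j, h, hj, hjr, he, hveq⟩ | ⟨h, hrodd, he, hveq⟩ <;>
      rw [Finset.mem_Icc]
    · omega
    · omega
    · rcases hveq with h1 | h1 <;> omega
    · omega
    · rcases hveq with h1 | h1 <;> omega
  calc numBars (buildT l) = (buildT l).flatten.toFinset.card := (card_toFinset _).symm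
    _ ≤ (Finset.Icc 1 (RR l + (Os l).length)).card := Finset.card_le_card hsub
    _ = RR l + (Os l).length := by rw [Nat.card_Icc]; omega

lemma mem_getLastD {L : List ℕ} (h : L ≠ []) (d : ℕ) : L.getLastD d ∈ L := by
  rw [getLastD_eq_getLast?, List.getLast?_eq_getLast h]
  exact L.getLast_mem h

lemma le_getLast_of_pairwise {L : List ℕ} (hp : L.Pairwise (· ≤ ·)) {a : ℕ}
    (ha : a ∈ L) (h : L ≠ []) : a ≤ L.getLast h := by
  rw [← List.dropLast_append_getLast h] at hp ha
  rcases List.mem_append.mp ha with h1 | h1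
  · exact (List.pairwise_append.mp hp).2.2 a h1 _ (List.mem_singleton_self _)
  · rw [List.mem_singleton.mp h1]

lemma count_sum_parity {v par : ℕ} :
    ∀ (L : List (List ℕ)), (∀ row ∈ L, row.count v % 2 = if v ∈ row then par else 0) →
      (L.map (fun row => row.count v)).sum % 2 =
        (L.countP (fun row => decide (v ∈ row)) * par) % 2 := by
  intro L
  induction L with
  | nil => simp
  | cons r rs ih =>
      intro h
      have hr := h r (List.mem_cons_self)
      have ihr := ih (fun row hrow => h row (List.mem_cons_of_mem r hrow))
      rw [List.map_cons, List.sum_cons, countP_cons]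
      by_cases hm : v ∈ r
      · rw [if_pos hm] at hr
        have hd : (decide (v ∈ r)) = true := by simpa using hm
        rw [hd]
        simp only [if_true]
        have e1 : (r.count v + (rs.map (fun row => row.count v)).sum) % 2 =
            (r.count v % 2 + (rs.map (fun row => row.count v)).sum % 2) % 2 := by omega
        rw [e1, hr, ihr]
        have h2 : (rs.countP (fun row => decide (v ∈ row)) + 1) * par =
            rs.countP (fun row => decide (v ∈ row)) * par + par := by ring
        rw [h2]
        omega
      · rw [if_neg hm] at hr
        have hd : (decide (v ∈ r)) = false := by simpa using hm
        rw [hd]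
        simp only [Bool.false_eq_true, if_false, Nat.add_zero]
        have hc0 : r.count v = 0 := count_eq_zero.mpr hm
        rw [hc0, Nat.zero_add, ihr]

lemma lower_par {l : List ℕ} {T' : List (List ℕ)} (hT' : IsBarTableau l T')
    (hpos : ∀ x ∈ l, 0 < x) (par : ℕ) :
    l.countP (fun x => decide (x % 2 = par)) ≤ numBars T' := by
  obtain ⟨h0, hposT, hchain, hoddT, hle2, hpre, _⟩ := hT'
  have hne : ∀ row ∈ T', row ≠ [] := by
    intro row hrow hcon
    have hml : row.length ∈ l := by rw [← h0]; exact List.mem_map_of_mem hrow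
    have := hpos _ hml
    rw [hcon] at this
    simp at this
  set rows' := T'.filter (fun row => decide (row.length % 2 = par)) with hrows
  have key : ∀ v, ((rows'.map (fun row => row.getLastD 0)).count v) ≤ 1 := by
    intro v
    by_contra hc
    push_neg at hc
    have hcnt : (rows'.map (fun row => row.getLastD 0)).count v =
        rows'.countP (fun row => row.getLastD 0 == v) := by
      rw [count, countP_map]; rfl
    have h2' : 2 ≤ T'.countP
        (fun row => (row.getLastD 0 == v) && decide (row.length % 2 = par)) := by
      rw [hcnt, hrows, countP_filter] at hc
      exact hc
    have himp : ∀ row ∈ T',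
        ((row.getLastD 0 == v) && decide (row.length % 2 = par)) = true →
          decide (v ∈ row) = true := by
      intro row hrow hP
      simp only [Bool.and_eq_true, beq_iff_eq, decide_eq_true_eq] at hP
      simp only [decide_eq_true_eq]
      rw [← hP.1]
      exact mem_getLastD (hne row hrow) 0
    have hge2 : 2 ≤ T'.countP (fun row => decide (v ∈ row)) :=
      le_trans h2' (countP_mono_left himp)
    have heq2 : T'.countP (fun row => decide (v ∈ row)) = 2 := le_antisymm (hle2 v) hge2
    have hheads := hpre v heq2
    set F := T'.filter (fun row => decide (v ∈ row)) with hF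
    have hFlen : F.length = 2 := by rw [hF, ← countP_eq_length_filter]; exact heq2
    have hcF : ∀ row ∈ F,
        ((row.getLastD 0 == v) && decide (row.length % 2 = par)) = true := by
      have e1 : F.countP (fun row => (row.getLastD 0 == v) && decide (row.length % 2 = par)) =
          T'.countP (fun row =>
            ((row.getLastD 0 == v) && decide (row.length % 2 = par)) && decide (v ∈ row)) := by
        rw [hF, countP_filter]
      have e2 : T'.countP (fun row =>
            ((row.getLastD 0 == v) && decide (row.length % 2 = par)) && decide (v ∈ row)) ≥
          T'.countP (fun row => (row.getLastD 0 == v) && decide (row.length % 2 = par)) := by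
        apply countP_mono_left
        intro row hrow hP
        rw [Bool.and_eq_true]
        exact ⟨hP, himp row hrow hP⟩
      have e3 : F.countP
          (fun row => (row.getLastD 0 == v) && decide (row.length % 2 = par)) = F.length := by
        have hle := F.countP_le_length
          (p := fun row => (row.getLastD 0 == v) && decide (row.length % 2 = par))
        omega
      exact countP_eq_length.mp e3
    have hconst : ∀ row ∈ T', row.count v % 2 = if v ∈ row then par else 0 := by
      intro row hrow
      by_cases hm : v ∈ row
      · have hrF : row ∈ F := List.mem_filter.mpr ⟨hrow, by simpa using hm⟩
        have hQ := hcF row hrF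
        simp only [Bool.and_eq_true, beq_iff_eq, decide_eq_true_eq] at hQ
        have hhead := hheads row hrow hm
        have hpw : row.Pairwise (· ≤ ·) := isChain_iff_pairwise.mp (hchain row hrow)
        have hlast : row.getLast (hne row hrow) = v := by
          have := hQ.1
          rw [getLastD_eq_getLast?, List.getLast?_eq_getLast (hne row hrow)] at this
          simpa using this
        have hcnt : row.count v = row.length := by
          rw [count_eq_length]
          intro c hc
          have h2 : c ≤ v := by
            rw [← hlast]
            exact le_getLast_of_pairwise hpw hc _
          have h1 : v ≤ c := by
            obtain ⟨tl, rfl⟩ : ∃ tl, row = v :: tl := by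
              cases row with
              | nil => simp at hhead
              | cons a tl =>
                  simp only [List.head?_cons, Option.some_inj] at hhead
                  exact ⟨tl, by rw [hhead]⟩
            rcases List.mem_cons.mp hc with h3 | h3
            · omega
            · exact (List.pairwise_cons.mp hpw).1 c h3
          exact le_antisymm h1 h2
        rw [if_pos hm, hcnt, hQ.2]
      · rw [if_neg hm, count_eq_zero.mpr hm]
    have hvfl : v ∈ T'.flatten := by
      have hpos' : 0 < T'.countP (fun row => decide (v ∈ row)) := by omega
      rcases countP_pos_iff.mp hpos' with ⟨row, hrow, hprow⟩
      exact mem_flatten.mpr ⟨row, hrow, by simpa using hprow⟩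
    have hodd := hoddT v hvfl
    have heven : T'.flatten.count v % 2 = 0 := by
      rw [count_flatten, count_sum_parity T' hconst, heq2]
      omega
    rw [Nat.odd_iff] at hodd
    omega
  have hnodup : (rows'.map (fun row => row.getLastD 0)).Nodup :=
    nodup_iff_count_le_one.mpr key
  have hlen : (rows'.map (fun row => row.getLastD 0)).length =
      l.countP (fun x => decide (x % 2 = par)) := by
    rw [List.length_map, hrows, ← countP_eq_length_filter, ← h0, countP_map]
    rfl
  have hsubs : (rows'.map (fun row => row.getLastD 0)).toFinset ⊆ T'.flatten.toFinset := by
    intro a ha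
    rcases List.mem_map.mp (List.mem_toFinset.mp ha) with ⟨row, hrow, rfl⟩
    have hrT : row ∈ T' := List.mem_of_mem_filter hrow
    exact List.mem_toFinset.mpr (mem_flatten.mpr ⟨row, hrT, mem_getLastD (hne row hrT) 0⟩)
  calc l.countP (fun x => decide (x % 2 = par))
      = (rows'.map (fun row => row.getLastD 0)).length := hlen.symm
    _ = (rows'.map (fun row => row.getLastD 0)).toFinset.card :=
        (toFinset_card_of_nodup hnodup).symm
    _ ≤ T'.flatten.toFinset.card := Finset.card_le_card hsubs
    _ = T'.flatten.dedup.length := card_toFinset _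
    _ = numBars T' := rfl

lemma numBars_parity {l : List ℕ} {T' : List (List ℕ)} (hT' : IsBarTableau l T') :
    numBars T' % 2 = l.sum % 2 := by
  obtain ⟨h0, _, _, hoddT, _, _, _⟩ := hT'
  have hlen : T'.flatten.length = l.sum := by rw [length_flatten, h0]
  have hnum : numBars T' = T'.flatten.toFinset.card := (card_toFinset _).symm
  have hsumc : ∑ a ∈ T'.flatten.toFinset, T'.flatten.count a = T'.flatten.length :=
    List.sum_toFinset_count_eq_length _
  have hone : ∀ a ∈ T'.flatten.toFinset, T'.flatten.count a % 2 = 1 := fun a ha =>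
    Nat.odd_iff.mp (hoddT a (List.mem_toFinset.mp ha))
  calc numBars T' % 2 = T'.flatten.toFinset.card % 2 := by rw [hnum]
    _ = (∑ a ∈ T'.flatten.toFinset, (1 : ℕ)) % 2 := by
        rw [Finset.sum_const, smul_eq_mul, mul_one]
    _ = (∑ a ∈ T'.flatten.toFinset, T'.flatten.count a % 2) % 2 := by
        rw [Finset.sum_congr rfl hone]
    _ = (∑ a ∈ T'.flatten.toFinset, T'.flatten.count a) % 2 := (Finset.sum_nat_mod _ _ _).symm
    _ = T'.flatten.length % 2 := by rw [hsumc]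
    _ = l.sum % 2 := by rw [hlen]

lemma sum_parity_odds (l : List ℕ) : l.sum % 2 = (Os l).length % 2 := by
  induction l with
  | nil => simp [Os]
  | cons a tl ih =>
      by_cases h : a % 2 = 1
      · have hd : (decide (a % 2 = 1)) = true := by simpa using h
        simp only [Os] at ih
        simp [Os, List.filter_cons, hd]
        omega
      · have hd : (decide (a % 2 = 1)) = false := by simpa using h
        simp only [Os] at ih
        simp [Os, List.filter_cons, hd]
        omega

end MBT

/-- There is a minimal bar tableau with no bar boundary an even number of squares
along any row. -/
theorem exists_minimal_no_even_boundary (n : ℕ) (l : List ℕ) (h : IsStrictPartition n l) :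
    ∃ T : List (List ℕ), IsBarTableau l T ∧
      (∀ T' : List (List ℕ), IsBarTableau l T' → numBars T ≤ numBars T') ∧
      (∀ row ∈ T, ¬ HasEvenBoundary row) := by
  obtain ⟨hs, hpos, hsum⟩ := h
  have hnd : l.Nodup := hs.nodup
  refine ⟨MBT.buildT l, ⟨?_, ?_, ?_, ?_, ?_, ?_, ?_⟩, ?_, ?_⟩
  · rw [MBT.buildT, List.map_map]
    have he : ∀ x ∈ l, (List.length ∘ MBT.rowOf l) x = id x := fun x hx =>
      MBT.rowOf_length hnd hpos hx
    rw [List.map_congr_left he, List.map_id]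
  · intro row hrow x hx
    rw [MBT.buildT] at hrow
    rcases List.mem_map.mp hrow with ⟨y, hy, rfl⟩
    exact MBT.rowOf_pos hnd hpos hy x hx
  · intro row hrow
    rw [MBT.buildT] at hrow
    rcases List.mem_map.mp hrow with ⟨y, hy, rfl⟩
    exact MBT.rowOf_chain hnd hpos hy
  · exact MBT.buildT_count_odd hnd hpos
  · exact fun v => MBT.buildT_le_two hnd hpos v
  · exact fun v h2 => MBT.buildT_heads hnd hpos v h2
  · exact fun i => MBT.buildT_cond4 hnd hpos i
  · intro T' hT'
    have h1 : l.countP (fun x => decide (x % 2 = 1)) ≤ numBars T' :=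
      MBT.lower_par hT' hpos 1
    have h2 : l.countP (fun x => decide (x % 2 = 0)) ≤ numBars T' :=
      MBT.lower_par hT' hpos 0
    have e1 : (MBT.Os l).length = l.countP (fun x => decide (x % 2 = 1)) :=
      List.countP_eq_length_filter.symm
    have e2 : (MBT.Es l).length = l.countP (fun x => decide (x % 2 = 0)) :=
      List.countP_eq_length_filter.symm
    have h3 : numBars T' % 2 = (MBT.Os l).length % 2 := by
      rw [MBT.numBars_parity hT', MBT.sum_parity_odds]
    have h4 : numBars (MBT.buildT l) ≤ MBT.RR l + (MBT.Os l).length :=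
      MBT.buildT_numBars_le hnd hpos
    have hke : MBT.kk l + MBT.rr l = (MBT.Es l).length := MBT.kk_add_rr
    have hRr : MBT.RR l = MBT.rr l + MBT.rr l % 2 := rfl
    rcases Nat.le_total (MBT.Os l).length (MBT.Es l).length with hle | hle
    · have hk : MBT.kk l = (MBT.Os l).length := min_eq_left hle
      omega
    · have hk : MBT.kk l = (MBT.Es l).length := min_eq_right hle
      omega
  · intro row hrow
    rw [MBT.buildT] at hrow
    rcases List.mem_map.mp hrow with ⟨x, hx, rfl⟩
    rcases MBT.rowOf_spec hnd hpos hx with ⟨i, h, he, hr⟩ | ⟨i, h, hik, he, hr⟩ |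
        ⟨j, h, hj, hjr, he, hx2, hr⟩ | ⟨j, h, hj, hjr, he, hr⟩ | ⟨h, hrodd, he, hx2, hr⟩ <;>
      rw [hr]
    · exact MBT.noEB_rep _ _
    · exact MBT.noEB_rep _ _
    · exact MBT.noEB_cons _
    · exact MBT.noEB_rep _ _
    · exact MBT.noEB_cons _
end

section
/- Let T* be a minimal bar tableau of shape λ (a strict partition) such that no bar boundary occurs an even number of squares along any row. Then every row of odd length is labelled entirely by a single label, and every row of even length is either labelled entirely by a single label or carries exactly two labels, each occurring an odd number of times in that row. -/
section Aux


lemma count_flatten_of_unique (v : ℕ) :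
    ∀ L : List (List ℕ), L.countP (fun r => decide (v ∈ r)) = 1 →
      ∀ row ∈ L, v ∈ row → (L.flatten).count v = row.count v := by
  intro L
  induction L with
  | nil => simp
  | cons r L' ih =>
    intro hcp row hrow hv
    rw [List.flatten_cons, List.count_append]
    rw [List.countP_cons] at hcp
    by_cases hvr : v ∈ r
    · have hz : L'.countP (fun r => decide (v ∈ r)) = 0 := by
        have : L'.countP (fun r => decide (v ∈ r)) + 1 = 1 := by simpa [hvr] using hcp
        omega
      have h0 : (L'.flatten).count v = 0 := by
        rw [List.count_eq_zero]
        intro hmem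
        rw [List.mem_flatten] at hmem
        obtain ⟨r', hr', hv'⟩ := hmem
        have := List.countP_pos_iff (p := fun r => decide (v ∈ r)) (l := L') |>.mpr
          ⟨r', hr', by simpa⟩
        omega
      rcases List.mem_cons.mp hrow with h | h
      · subst h; omega
      · exfalso
        have := List.countP_pos_iff (p := fun r => decide (v ∈ r)) (l := L') |>.mpr
          ⟨row, h, by simpa⟩
        omega
    · have hcp' : L'.countP (fun r => decide (v ∈ r)) = 1 := by
        simpa [hvr] using hcp
      have hr0 : r.count v = 0 := List.count_eq_zero.mpr hvr
      rcases List.mem_cons.mp hrow with h | h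
      · subst h; exact absurd hv hvr
      · rw [hr0, zero_add]
        exact ih hcp' row h hv

lemma count_block (row : List ℕ) (v : ℕ) (s e : ℕ) (hse : s ≤ e) (he : e < row.length)
    (hval : ∀ i, s ≤ i → i ≤ e → ∀ h : i < row.length, row[i] = v)
    (hbefore : ∀ i, i < s → ∀ h : i < row.length, row[i] ≠ v)
    (hafter : ∀ i, e < i → ∀ h : i < row.length, row[i] ≠ v) :
    row.count v = e + 1 - s := by
  have hdec : row = row.take s ++ (row.drop s).take (e + 1 - s) ++ (row.drop (e + 1)) :=
    calc row = row.take (e+1) ++ row.drop (e+1) := (List.take_append_drop _ _).symm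
    _ = (row.take s ++ (row.drop s).take (e + 1 - s)) ++ row.drop (e+1) := by
        congr 1
        rw [← List.take_add]
        congr 1
        omega
  have hmid : (row.drop s).take (e + 1 - s) = List.replicate (e + 1 - s) v := by
    rw [List.eq_replicate_iff]
    constructor
    · rw [List.length_take, List.length_drop]
      omega
    · intro b hb
      rw [List.mem_iff_getElem] at hb
      obtain ⟨j, hj, hjv⟩ := hb
      rw [List.getElem_take, List.getElem_drop] at hjv
      have hjlen : j < (List.take (e + 1 - s) (List.drop s row)).length := hj
      rw [List.length_take, List.length_drop] at hjlen
      rw [← hjv]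
      exact hval (s + j) (by omega) (by omega) (by omega)
  have h1 : (row.take s).count v = 0 := by
    rw [List.count_eq_zero]
    intro hmem
    rw [List.mem_iff_getElem] at hmem
    obtain ⟨j, hj, hjv⟩ := hmem
    have hjs : j < s := by
      have := hj; rw [List.length_take] at this; omega
    rw [List.getElem_take] at hjv
    exact hbefore j hjs (by omega) hjv
  have h3 : (row.drop (e + 1)).count v = 0 := by
    rw [List.count_eq_zero]
    intro hmem
    rw [List.mem_iff_getElem] at hmem
    obtain ⟨j, hj, hjv⟩ := hmem
    rw [List.getElem_drop] at hjv
    have hjlen : j < row.length - (e + 1) := by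
      have := hj; rw [List.length_drop] at this; omega
    exact hafter (e + 1 + j) (by omega) (by omega) hjv
  conv_lhs => rw [hdec]
  rw [List.count_append, List.count_append, h1, h3, hmid, List.count_replicate_self]
  omega

lemma row_aux (row : List ℕ) (hne : 0 < row.length)
    (hmono : ∀ i j, ∀ hi : i < row.length, ∀ hj : j < row.length, i ≤ j → row[i] ≤ row[j])
    (hbd : ∀ j, ∀ hj : j < row.length, 0 < j → row[j-1]'(by omega) < row[j] → ¬ Even j)
    (v : ℕ) (hv : v ∈ row) (hva : v ≠ row[0])
    (hcnt : Odd (row.count v)) :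
    v = row[row.length - 1]'(by omega) ∧ Even row.length := by
  classical
  have hex : ∃ i : ℕ, row[i]? = some v := by
    rw [List.mem_iff_getElem] at hv
    obtain ⟨i, hi, hiv⟩ := hv
    exact ⟨i, by rw [List.getElem?_eq_getElem hi, hiv]⟩
  set s := Nat.find hex with hsdef
  have hsspec : row[s]? = some v := Nat.find_spec hex
  have hslt : s < row.length := by
    by_contra h
    rw [List.getElem?_eq_none (by omega)] at hsspec
    simp at hsspec
  have hsv : row[s]'hslt = v := by
    rw [List.getElem?_eq_getElem hslt] at hsspec
    exact Option.some.inj hsspec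
  have hsmin : ∀ i, i < s → ∀ h : i < row.length, row[i] ≠ v := by
    intro i hi h hiv
    exact Nat.find_min hex hi (by rw [List.getElem?_eq_getElem h, hiv])
  have hs0 : 0 < s := by
    by_contra h
    have h0 : row[0]'(by omega) = v := by
      simp only [show s = 0 by omega] at hsv
      exact hsv
    exact hva h0.symm
  have hsodd : ¬ Even s := by
    apply hbd s hslt hs0
    have h1 : row[s-1]'(by omega) ≤ row[s] := hmono (s-1) s (by omega) hslt (by omega)
    rcases lt_or_eq_of_le h1 with h | h
    · exact h
    · exact absurd (h.trans hsv) (hsmin (s-1) (by omega) (by omega))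
  set e := Nat.findGreatest (fun i : ℕ => row[i]? = some v) (row.length - 1) with hedef
  have hse : s ≤ e := Nat.le_findGreatest (by omega) hsspec
  have hespec : row[e]? = some v := by
    have h := Nat.findGreatest_spec (P := fun i : ℕ => row[i]? = some v)
      (n := row.length - 1) (m := s) (by omega) hsspec
    exact h
  have helt : e < row.length := by
    by_contra h
    rw [List.getElem?_eq_none (by omega)] at hespec
    simp at hespec
  have hev : row[e]'helt = v := by
    rw [List.getElem?_eq_getElem helt] at hespec
    exact Option.some.inj hespec
  have hemax : ∀ i, e < i → ∀ h : i < row.length, row[i] ≠ v := by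
    intro i hi h hiv
    exact Nat.findGreatest_is_greatest (P := fun i : ℕ => row[i]? = some v)
      (n := row.length - 1) hi (by omega)
      (by show row[i]? = some v; rw [List.getElem?_eq_getElem h, hiv])
  have hval : ∀ i, s ≤ i → i ≤ e → ∀ h : i < row.length, row[i] = v := by
    intro i h1 h2 h
    have l1 : row[s]'hslt ≤ row[i] := hmono s i hslt h h1
    have l2 : row[i] ≤ row[e]'helt := hmono i e h helt h2
    omega
  have hcount : row.count v = e + 1 - s :=
    count_block row v s e hse helt hval hsmin hemax
  have heend : e = row.length - 1 := by
    by_contra h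
    have he1 : e + 1 < row.length := by omega
    have hb1 : ¬ Even (e+1) := by
      apply hbd (e+1) he1 (by omega)
      have h1 : row[(e+1)-1]'(by omega) ≤ row[e+1] := hmono ((e+1)-1) (e+1) (by omega) he1 (by omega)
      rcases lt_or_eq_of_le h1 with hlt | heq
      · exact hlt
      · exfalso
        apply hemax (e+1) (by omega) he1
        rw [← heq]
        have : (e+1)-1 = e := by omega
        simp only [this]
        exact hev
    rw [hcount] at hcnt
    rw [Nat.even_iff] at hsodd hb1
    rw [Nat.odd_iff] at hcnt
    omega
  constructor
  · simp only [← heend]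
    exact hev.symm
  · rw [hcount, heend] at hcnt
    rw [Nat.even_iff] at hsodd ⊢
    rw [Nat.odd_iff] at hcnt
    omega

end Aux

section Main


lemma row_main (row : List ℕ) (hne : 0 < row.length)
    (hmono : ∀ i j, ∀ hi : i < row.length, ∀ hj : j < row.length, i ≤ j → row[i] ≤ row[j])
    (hbd : ∀ j, ∀ hj : j < row.length, 0 < j → row[j-1]'(by omega) < row[j] → ¬ Even j)
    (hodd : ∀ v ∈ row, v ≠ row[0]'hne → Odd (row.count v)) :
    (Odd row.length → row.dedup.length = 1) ∧
    (Even row.length → row.dedup.length = 1 ∨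
      (row.dedup.length = 2 ∧ ∀ v ∈ row, Odd (row.count v))) := by
  classical
  by_cases hall : ∀ w ∈ row, w = row[0]'hne
  · have h1 : row.dedup.length = 1 := by
      rw [← List.card_toFinset]
      have : row.toFinset = {row[0]'hne} := by
        ext x
        simp only [List.mem_toFinset, Finset.mem_singleton]
        constructor
        · intro hx; exact hall x hx
        · intro hx; subst hx; exact List.getElem_mem _
      rw [this, Finset.card_singleton]
    exact ⟨fun _ => h1, fun _ => Or.inl h1⟩
  · push_neg at hall
    obtain ⟨v, hv, hva⟩ := hall
    obtain ⟨hvlast, heven⟩ := row_aux row hne hmono hbd v hv hva (hodd v hv hva)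
    have hclass : ∀ w ∈ row, w = row[0]'hne ∨ w = v := by
      intro w hw
      by_cases hwa : w = row[0]'hne
      · exact Or.inl hwa
      · obtain ⟨hwlast, _⟩ := row_aux row hne hmono hbd w hw hwa (hodd w hw hwa)
        exact Or.inr (hwlast.trans hvlast.symm)
    have hav : row[0]'hne ≠ v := fun h => hva h.symm
    have h2 : row.dedup.length = 2 := by
      rw [← List.card_toFinset]
      have : row.toFinset = {row[0]'hne, v} := by
        ext x
        simp only [List.mem_toFinset, Finset.mem_insert, Finset.mem_singleton]
        constructor
        · intro hx; exact hclass x hx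
        · rintro (hx | hx)
          · subst hx; exact List.getElem_mem _
          · subst hx; exact hv
      rw [this, Finset.card_pair hav]
    have hcv : Odd (row.count v) := hodd v hv hva
    have hsum : row.count (row[0]'hne) + row.count v = row.length := by
      have hpart := List.length_eq_countP_add_countP (fun x => x == row[0]'hne) (l := row)
      have e1 : row.countP (fun x => x == row[0]'hne) = row.count (row[0]'hne) := rfl
      have e2 : row.countP (fun a => decide ¬((fun x => x == row[0]'hne) a = true))
          = row.count v := by
        rw [List.count]
        apply List.countP_congr
        intro x hx
        simp only [beq_iff_eq, decide_eq_true_eq]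
        constructor
        · intro hxa
          rcases hclass x hx with h | h
          · exact absurd h hxa
          · exact h
        · intro hxv
          subst hxv
          exact fun h => hav h.symm
      rw [e1, e2] at hpart
      omega
    have hca : Odd (row.count (row[0]'hne)) := by
      rw [Nat.odd_iff] at hcv ⊢
      rw [Nat.even_iff] at heven
      omega
    refine ⟨fun ho => ?_, fun _ => Or.inr ⟨h2, ?_⟩⟩
    · rw [Nat.odd_iff] at ho
      rw [Nat.even_iff] at heven
      omega
    · intro w hw
      rcases hclass w hw with h | h
      · rw [h]; exact hca
      · rw [h]; exact hcv

end Main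

/-- In a minimal bar tableau with no even bar boundaries, every odd row carries a single
label, and every even row carries either a single label or exactly two labels, each
occurring an odd number of times in that row. -/
theorem rows_of_minimal_no_even_boundary (n : ℕ) (l : List ℕ) (T : List (List ℕ))
    (hl : IsStrictPartition n l) (hT : IsBarTableau l T)
    (hmin : ∀ T' : List (List ℕ), IsBarTableau l T' → numBars T ≤ numBars T')
    (hb : ∀ row ∈ T, ¬ HasEvenBoundary row) :
    ∀ row ∈ T,
      (Odd row.length → row.dedup.length = 1) ∧
      (Even row.length → row.dedup.length = 1 ∨
        (row.dedup.length = 2 ∧ ∀ v ∈ row, Odd (row.count v))) := by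
  obtain ⟨hlen, hpos, hchain, hcountodd, hle2, htwo, _⟩ := hT
  intro row hrow
  -- the row is nonempty
  have hne : 0 < row.length := by
    apply hl.2.1
    rw [← hlen]
    exact List.mem_map_of_mem hrow
  -- monotonicity
  have hpair : List.Pairwise (· ≤ ·) row :=
    List.isChain_iff_pairwise.mp (hchain row hrow)
  have hmono : ∀ i j, ∀ hi : i < row.length, ∀ hj : j < row.length, i ≤ j →
      row[i] ≤ row[j] := by
    intro i j hi hj hij
    rcases Nat.lt_or_ge i j with h | h
    · exact List.pairwise_iff_getElem.mp hpair i j hi hj h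
    · have : i = j := by omega
      subst this
      exact le_refl _
  -- no even boundaries
  have hbd : ∀ j, ∀ hj : j < row.length, 0 < j → row[j-1]'(by omega) < row[j] →
      ¬ Even j := by
    intro j hj hj0 hlt hEven
    apply hb row hrow
    refine ⟨j, hj0, hEven, hj, ?_⟩
    intro c hc
    rw [List.getD_eq_getElem row 0 hj]
    rw [List.mem_iff_getElem] at hc
    obtain ⟨i, hi, hic⟩ := hc
    have hij : i < j := by
      have := hi; rw [List.length_take] at this; omega
    rw [List.getElem_take] at hic
    calc c = row[i]'(by omega) := hic.symm
    _ ≤ row[j-1]'(by omega) := hmono i (j-1) (by omega) (by omega) (by omega)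
    _ < row[j] := hlt
  -- odd counts for non-head values
  have hodd : ∀ v ∈ row, v ≠ row[0]'hne → Odd (row.count v) := by
    intro v hv hva
    have hhead : row.head? ≠ some v := by
      intro h
      have : row.head? = some (row[0]'hne) := by
        rw [List.head?_eq_getElem?, List.getElem?_eq_getElem hne]
      rw [this] at h
      exact hva (Option.some.inj h).symm
    have hp1 : 0 < T.countP (fun r => decide (v ∈ r)) :=
      List.countP_pos_iff.mpr ⟨row, hrow, by simpa⟩
    have hp2 : T.countP (fun r => decide (v ∈ r)) ≠ 2 := by
      intro h2
      exact hhead (htwo v h2 row hrow hv)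
    have hp : T.countP (fun r => decide (v ∈ r)) = 1 := by
      have := hle2 v
      omega
    have hflat : (T.flatten).count v = row.count v :=
      count_flatten_of_unique v T hp row hrow hv
    have hvf : v ∈ T.flatten := List.mem_flatten.mpr ⟨row, hrow, hv⟩
    have := hcountodd v hvf
    rwa [hflat] at this
  exact row_main row hne hmono hbd hodd
end

section
/- For a strict partition λ, an assignment of positive integers to the cells of the shifted diagram S(λ) is a bar tableau in the recursive sense (the cells occupied by the largest label form an r-bar associated with some i ∈ I(λ,r) for an odd r, and removing that r-bar and reordering the rows yields a bar tableau of shape λ(i,r)) if and only if it satisfies the four direct conditions: (1) entries weakly increase from left to right along each row; (2) each integer that appears does so in an odd total number of cells; (3) each integer appears in at most two rows, and if it appears in two rows then its cells form an initial segment (prefix) of both rows; (4) for every integer i, the multiset of nonzero row lengths that remain after deleting all cells with labels greater than i has pairwise distinct elements. -/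
/-- `RemovesBar T T' M r`: the cells of `T` labelled `M` form an `r`-bar, and `T'` is
obtained from `T` by removing this bar and reordering the rows (rows left empty are
discarded).  Either (type 1 / type 2) the bar is the rightmost `r` cells of a single
row `i` and `M` occurs nowhere else, or (type 3) the bar consists of two entire rows
with `r` cells in total. -/
def RemovesBar (T T' : List (List ℕ)) (M r : ℕ) : Prop :=
  (∃ i < T.length, ∃ rest : List ℕ,
      T.getD i [] = rest ++ List.replicate r M ∧ M ∉ rest ∧
      (∀ k < T.length, k ≠ i → M ∉ T.getD k []) ∧
      T'.Perm ((T.set i rest).filter (fun row => !row.isEmpty)))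
  ∨
  (∃ i < T.length, ∃ j < T.length, i ≠ j ∧
      T.getD i [] ≠ [] ∧ T.getD j [] ≠ [] ∧
      (∀ x ∈ T.getD i [], x = M) ∧ (∀ x ∈ T.getD j [], x = M) ∧
      (T.getD i []).length + (T.getD j []).length = r ∧
      (∀ k < T.length, k ≠ i → k ≠ j → M ∉ T.getD k []) ∧
      T'.Perm (((T.set i []).set j []).filter (fun row => !row.isEmpty)))

/-- The recursive definition of a bar tableau: the empty filling is a bar tableau, and a
filling is a bar tableau if the cells occupied by its largest label `M` form an `r`-bar
for some odd `r`, and removing this bar and reordering the rows — the remaining row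
lengths again being pairwise distinct, i.e. the remaining shape is a strict partition
`λ(i,r)` — yields a bar tableau. -/
inductive RecBarTableau : List (List ℕ) → Prop
  | nil : RecBarTableau []
  | step (T T' : List (List ℕ)) (M r : ℕ) :
      Odd r →
      (∀ row ∈ T, ∀ x ∈ row, x ≤ M) →
      (∃ row ∈ T, M ∈ row) →
      RemovesBar T T' M r →
      (T'.map List.length).Pairwise (· > ·) →
      RecBarTableau T' →
      RecBarTableau T

open List

namespace BarAux

/-- The row-length profile after truncating at threshold `t`. -/
def lenF (t : ℕ) (T : List (List ℕ)) : List ℕ :=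
  ((T.map (fun row => row.filter (fun x => decide (x ≤ t)))).map List.length).filter
    (fun k => decide (k ≠ 0))

/-- Conditions (1)–(4). -/
def Cond4 (T : List (List ℕ)) : Prop :=
  (∀ row ∈ T, row.Chain' (· ≤ ·)) ∧
  (∀ v ∈ T.flatten, Odd (T.flatten.count v)) ∧
  (∀ v : ℕ, T.countP (fun row => decide (v ∈ row)) ≤ 2) ∧
  (∀ v : ℕ, T.countP (fun row => decide (v ∈ row)) = 2 →
      ∀ row ∈ T, v ∈ row → row.head? = some v)

def CondF (T : List (List ℕ)) : Prop := Cond4 T ∧ ∀ t, (lenF t T).Nodup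

def CondG (T : List (List ℕ)) : Prop :=
  Cond4 T ∧ ∀ t, (∃ row ∈ T, ∃ x ∈ row, t < x) → (lenF t T).Nodup

lemma lenF_perm (t : ℕ) {T T' : List (List ℕ)} (h : T.Perm T') :
    (lenF t T).Perm (lenF t T') := ((h.map _).map _).filter _

lemma cond4_perm {T T' : List (List ℕ)} (h : T.Perm T') (hc : Cond4 T) : Cond4 T' := by
  obtain ⟨h1, h2, h3, h4⟩ := hc
  refine ⟨fun row hr => h1 row (h.mem_iff.2 hr), fun v hv => ?_, fun v => ?_,
    fun v hv row hr hvr => ?_⟩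
  · rw [← h.flatten.count_eq]
    exact h2 v (h.flatten.mem_iff.2 hv)
  · rw [← h.countP_eq]; exact h3 v
  · exact h4 v (by rw [h.countP_eq]; exact hv) row (h.mem_iff.2 hr) hvr

lemma condF_perm {T T' : List (List ℕ)} (h : T.Perm T') (hc : CondF T) : CondF T' :=
  ⟨cond4_perm h hc.1, fun t => ((lenF_perm t h).nodup_iff).1 (hc.2 t)⟩

lemma condG_perm {T T' : List (List ℕ)} (h : T.Perm T') (hc : CondG T) : CondG T' := by
  refine ⟨cond4_perm h hc.1, fun t ht => ?_⟩
  refine ((lenF_perm t h).nodup_iff).1 (hc.2 t ?_)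
  obtain ⟨row, hr, hx⟩ := ht
  exact ⟨row, h.mem_iff.2 hr, hx⟩

lemma flatten_filter (T : List (List ℕ)) :
    (T.filter (fun row => !row.isEmpty)).flatten = T.flatten := by
  induction T with
  | nil => rfl
  | cons a T ih =>
    rw [filter_cons]
    cases a with
    | nil => simpa using ih
    | cons x xs => simp [ih]

lemma lenF_filter (t : ℕ) (T : List (List ℕ)) :
    lenF t (T.filter (fun row => !row.isEmpty)) = lenF t T := by
  induction T with
  | nil => rfl
  | cons a T ih =>
    rw [filter_cons]
    cases a with
    | nil => simpa [lenF] using ih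
    | cons x xs => simp only [lenF, isEmpty_cons, Bool.not_false, if_true, map_cons,
        filter_cons] at ih ⊢; rw [ih]

lemma map_length_filter (T : List (List ℕ)) :
    (T.filter (fun row => !row.isEmpty)).map List.length
      = (T.map List.length).filter (fun k => decide (k ≠ 0)) := by
  induction T with
  | nil => rfl
  | cons a T ih =>
    rw [filter_cons, map_cons, filter_cons]
    cases a with
    | nil => simpa using ih
    | cons x xs => simp [ih]

lemma countP_mem_filter (v : ℕ) (T : List (List ℕ)) :
    (T.filter (fun row => !row.isEmpty)).countP (fun row => decide (v ∈ row))
      = T.countP (fun row => decide (v ∈ row)) := by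
  rw [countP_filter]
  apply countP_congr
  intro row _
  by_cases h : v ∈ row
  · have : row ≠ [] := ne_nil_of_mem h
    simp [h, this]
  · simp [h]

lemma cond4_filter_iff (T : List (List ℕ)) :
    Cond4 (T.filter (fun row => !row.isEmpty)) ↔ Cond4 T := by
  constructor
  · rintro ⟨h1, h2, h3, h4⟩
    refine ⟨fun row hr => ?_, fun v hv => ?_, fun v => ?_, fun v hv row hr hvr => ?_⟩
    · rcases eq_or_ne row [] with rfl | hne
      · exact List.isChain_nil
      · exact h1 row (mem_filter.2 ⟨hr, by simp [hne]⟩)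
    · rw [← flatten_filter] at hv ⊢; exact h2 v hv
    · rw [← countP_mem_filter]; exact h3 v
    · have hne : row ≠ [] := ne_nil_of_mem hvr
      exact h4 v (by rw [countP_mem_filter]; exact hv) row (mem_filter.2 ⟨hr, by simp [hne]⟩) hvr
  · rintro ⟨h1, h2, h3, h4⟩
    refine ⟨fun row hr => h1 row (mem_filter.1 hr).1, fun v hv => ?_, fun v => ?_,
      fun v hv row hr hvr => ?_⟩
    · rw [flatten_filter] at hv ⊢; exact h2 v hv
    · rw [countP_mem_filter]; exact h3 v
    · exact h4 v (by rw [← countP_mem_filter]; exact hv) row (mem_filter.1 hr).1 hvr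

lemma condF_filter_iff (T : List (List ℕ)) :
    CondF (T.filter (fun row => !row.isEmpty)) ↔ CondF T := by
  unfold CondF
  rw [cond4_filter_iff]
  constructor <;> rintro ⟨h1, h2⟩ <;> refine ⟨h1, fun t => ?_⟩
  · rw [← lenF_filter]; exact h2 t
  · rw [lenF_filter]; exact h2 t

lemma lenF_of_all_le {t : ℕ} {T : List (List ℕ)} (h : ∀ row ∈ T, ∀ x ∈ row, x ≤ t) :
    lenF t T = (T.map List.length).filter (fun k => decide (k ≠ 0)) := by
  unfold lenF
  congr 1
  rw [map_map]
  apply map_congr_left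
  intro row hr
  simp only [Function.comp_apply]
  rw [filter_eq_self.2 (fun x hx => by simpa using h row hr x hx)]


lemma getElem_idx {α : Type*} (T : List α) {a b : ℕ} (h : a = b) (ha : a < T.length) :
    T[a] = T[b]'(h ▸ ha) := by subst h; rfl

lemma decomp1 {T : List (List ℕ)} {i : ℕ} (hi : i < T.length) :
    ∃ R : List (List ℕ),
      T.Perm (T.getD i [] :: R) ∧
      (∀ x, (T.set i x).Perm (x :: R)) ∧
      (∀ row ∈ R, ∃ k, k < T.length ∧ k ≠ i ∧ T.getD k [] = row) ∧
      (∀ k, k < T.length → k ≠ i → T.getD k [] ∈ R) := by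
  refine ⟨T.take i ++ T.drop (i + 1), ?_, ?_, ?_, ?_⟩
  · conv_lhs => rw [← take_append_drop i T, drop_eq_getElem_cons hi]
    rw [getD_eq_getElem _ _ hi]
    exact perm_middle
  · intro x
    rw [set_eq_take_cons_drop _ hi]
    exact perm_middle
  · intro row hr
    rcases mem_append.1 hr with h | h
    · obtain ⟨k, hk, hke⟩ := mem_iff_getElem.1 h
      have hk' : k < i := by simpa using lt_of_lt_of_le hk (by simp [length_take])
      refine ⟨k, hk'.trans hi, hk'.ne, ?_⟩
      rw [getD_eq_getElem _ _ (hk'.trans hi)]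
      rw [getElem_take] at hke
      exact hke
    · obtain ⟨k, hk, hke⟩ := mem_iff_getElem.1 h
      have hlen : i + 1 + k < T.length := by
        have := hk; simp [length_drop] at this; omega
      refine ⟨i + 1 + k, hlen, by omega, ?_⟩
      rw [getD_eq_getElem _ _ hlen]
      rw [getElem_drop] at hke
      exact hke
  · intro k hk hki
    rcases lt_or_gt_of_ne hki with h | h
    · apply mem_append_left
      rw [getD_eq_getElem _ _ hk]
      exact mem_iff_getElem.2 ⟨k, by simp [length_take]; omega, by rw [getElem_take]⟩
    · apply mem_append_right
      have hlt : k - (i + 1) < (T.drop (i + 1)).length := by simp [length_drop]; omega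
      refine mem_iff_getElem.2 ⟨k - (i + 1), hlt, ?_⟩
      rw [getElem_drop, getD_eq_getElem _ _ hk]
      congr 1
      omega

lemma set_append_cons {α : Type*} (X : List α) (a b : α) (Y : List α) :
    (X ++ a :: Y).set X.length b = X ++ b :: Y := by
  induction X with
  | nil => rfl
  | cons x X ih => simp [ih]

lemma set_append_cons' {α : Type*} (X : List α) (a b : α) (Y : List α) {n : ℕ}
    (hn : n = X.length) : (X ++ a :: Y).set n b = X ++ b :: Y := by
  subst hn; exact set_append_cons X a b Y

lemma decomp2' {T : List (List ℕ)} {i j : ℕ} (hij : i < j) (hj : j < T.length) :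
    ∃ R : List (List ℕ),
      T.Perm (T.getD i [] :: T.getD j [] :: R) ∧
      ((T.set i []).set j []).Perm ([] :: [] :: R) ∧
      (∀ row ∈ R, ∃ k, k < T.length ∧ k ≠ i ∧ k ≠ j ∧ T.getD k [] = row) ∧
      (∀ k, k < T.length → k ≠ i → k ≠ j → T.getD k [] ∈ R) := by
  have hi : i < T.length := hij.trans hj
  have hjD : j - i - 1 < (T.drop (i + 1)).length := by simp only [length_drop]; omega
  have hDj : (T.drop (i + 1))[j - i - 1]'hjD = T.getD j [] := by
    rw [getElem_drop, getD_eq_getElem _ _ hj]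
    exact getElem_idx T (by omega) _
  have hDdec : T.drop (i + 1)
      = (T.drop (i + 1)).take (j - i - 1) ++ T.getD j [] :: (T.drop (i + 1)).drop (j - i) := by
    conv_lhs => rw [← take_append_drop (j - i - 1) (T.drop (i + 1)),
      drop_eq_getElem_cons hjD]
    rw [hDj]
    have : j - i - 1 + 1 = j - i := by omega
    rw [this]
  have hTdec : T = T.take i ++ T.getD i []
      :: ((T.drop (i + 1)).take (j - i - 1) ++ T.getD j [] :: (T.drop (i + 1)).drop (j - i)) := by
    conv_lhs => rw [← take_append_drop i T, drop_eq_getElem_cons hi]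
    rw [getD_eq_getElem _ _ hi, ← hDdec]
  have hAlen : (T.take i).length = i := by simp [length_take]; omega
  have hBlen : ((T.drop (i + 1)).take (j - i - 1)).length = j - i - 1 := by
    simp [length_take, length_drop]; omega
  refine ⟨T.take i ++ (T.drop (i + 1)).take (j - i - 1) ++ (T.drop (i + 1)).drop (j - i),
    ?_, ?_, ?_, ?_⟩
  · conv_lhs => rw [hTdec]
    refine perm_middle.trans (Perm.cons _ ?_)
    rw [← append_assoc]
    exact perm_middle
  · have h1 : T.set i [] = T.take i ++ []
        :: ((T.drop (i + 1)).take (j - i - 1) ++ T.getD j [] :: (T.drop (i + 1)).drop (j - i)) := by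
      conv_lhs => rw [hTdec]
      exact set_append_cons' _ _ _ _ hAlen.symm
    have h2 : (T.set i []).set j []
        = T.take i ++ [] :: ((T.drop (i + 1)).take (j - i - 1) ++ [] :: (T.drop (i + 1)).drop (j - i)) := by
      rw [h1]
      have heq : T.take i ++ []
          :: ((T.drop (i + 1)).take (j - i - 1) ++ T.getD j [] :: (T.drop (i + 1)).drop (j - i))
          = (T.take i ++ [] :: (T.drop (i + 1)).take (j - i - 1))
            ++ T.getD j [] :: (T.drop (i + 1)).drop (j - i) := by simp
      rw [heq]
      have hlen2 : (T.take i ++ [] :: (T.drop (i + 1)).take (j - i - 1)).length = j := by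
        simp only [length_append, length_cons, hAlen, hBlen]; omega
      rw [set_append_cons' _ _ _ _ hlen2.symm]
      simp
    rw [h2]
    refine perm_middle.trans (Perm.cons _ ?_)
    rw [← append_assoc]
    exact perm_middle
  · intro row hr
    rcases mem_append.1 hr with h | h
    · rcases mem_append.1 h with h' | h'
      · obtain ⟨k, hk, hke⟩ := mem_iff_getElem.1 h'
        have hk' : k < i := by rw [hAlen] at hk; exact hk
        refine ⟨k, hk'.trans hi, hk'.ne, by omega, ?_⟩
        rw [getD_eq_getElem _ _ (hk'.trans hi)]
        rw [getElem_take] at hke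
        exact hke
      · obtain ⟨k, hk, hke⟩ := mem_iff_getElem.1 h'
        have hk' : k < j - i - 1 := by rw [hBlen] at hk; exact hk
        have hlen : i + 1 + k < T.length := by omega
        refine ⟨i + 1 + k, hlen, by omega, by omega, ?_⟩
        rw [getD_eq_getElem _ _ hlen]
        rw [getElem_take, getElem_drop] at hke
        exact hke
    · obtain ⟨k, hk, hke⟩ := mem_iff_getElem.1 h
      have hkD : j - i + k < (T.drop (i + 1)).length := by
        have := hk; simp only [length_drop] at this ⊢; omega
      have hlen : i + 1 + (j - i + k) < T.length := by
        simp only [length_drop] at hkD; omega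
      refine ⟨i + 1 + (j - i + k), hlen, by omega, by omega, ?_⟩
      rw [getD_eq_getElem _ _ hlen]
      rw [getElem_drop, getElem_drop] at hke
      exact hke

  · intro k hk hki hkj
    rcases Nat.lt_trichotomy k i with h | h | h
    · apply mem_append_left; apply mem_append_left
      rw [getD_eq_getElem _ _ hk]
      refine mem_iff_getElem.2 ⟨k, by rw [hAlen]; exact h, by rw [getElem_take]⟩
    · exact absurd h hki
    rcases Nat.lt_trichotomy k j with h' | h' | h'
    · apply mem_append_left; apply mem_append_right
      have hb : k - i - 1 < ((T.drop (i + 1)).take (j - i - 1)).length := by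
        rw [hBlen]; omega
      refine mem_iff_getElem.2 ⟨k - i - 1, hb, ?_⟩
      rw [getElem_take, getElem_drop, getD_eq_getElem _ _ hk]
      exact getElem_idx T (by omega) _
    · exact absurd h' hkj
    · apply mem_append_right
      have hclen : k - j - 1 < ((T.drop (i + 1)).drop (j - i)).length := by
        simp only [length_drop]; omega
      refine mem_iff_getElem.2 ⟨k - j - 1, hclen, ?_⟩
      rw [getElem_drop, getElem_drop, getD_eq_getElem _ _ hk]
      exact getElem_idx T (by omega) _

lemma decomp2 {T : List (List ℕ)} {i j : ℕ} (hij : i ≠ j) (hi : i < T.length)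
    (hj : j < T.length) :
    ∃ R : List (List ℕ),
      T.Perm (T.getD i [] :: T.getD j [] :: R) ∧
      ((T.set i []).set j []).Perm ([] :: [] :: R) ∧
      (∀ row ∈ R, ∃ k, k < T.length ∧ k ≠ i ∧ k ≠ j ∧ T.getD k [] = row) ∧
      (∀ k, k < T.length → k ≠ i → k ≠ j → T.getD k [] ∈ R) := by
  rcases hij.lt_or_gt with h | h
  · exact decomp2' h hj
  · obtain ⟨R, hp, hs, hidx, hconv⟩ := decomp2' h hi
    refine ⟨R, hp.trans (Perm.swap _ _ _), ?_, fun row hr => ?_, fun k hk h2 h3 => hconv k hk h3 h2⟩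
    · rw [set_comm _ _ hij]
      exact hs
    · obtain ⟨k, h1, h2, h3, h4⟩ := hidx row hr
      exact ⟨k, h1, h3, h2, h4⟩
lemma chain'_iff_pairwise {l : List ℕ} : Chain' (· ≤ ·) l ↔ l.Pairwise (· ≤ ·) :=
  List.isChain_iff_pairwise

section Type1

variable {M r t : ℕ} {rest : List ℕ} {R : List (List ℕ)}

lemma chain_append_replicate (hrest : ∀ x ∈ rest, x < M) :
    Chain' (· ≤ ·) (rest ++ replicate r M) ↔ Chain' (· ≤ ·) rest := by
  rw [chain'_iff_pairwise, chain'_iff_pairwise, pairwise_append]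
  constructor
  · exact fun h => h.1
  · intro h
    refine ⟨h, pairwise_replicate.2 (Or.inr le_rfl), ?_⟩
    intro x hx y hy
    rw [eq_of_mem_replicate hy]
    exact (hrest x hx).le

lemma t1_cond4 (hodd : Odd r) (hrest : ∀ x ∈ rest, x < M)
    (hR : ∀ row ∈ R, ∀ x ∈ row, x < M) :
    Cond4 ((rest ++ replicate r M) :: R) ↔ Cond4 (rest :: R) := by
  have hrne : M ∉ rest := fun h => lt_irrefl M (hrest M h)
  have hRne : ∀ row ∈ R, M ∉ row := fun row hrow h => lt_irrefl M (hR row hrow M h)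
  have hMfR : M ∉ R.flatten := fun h => by
    obtain ⟨row, h1, h2⟩ := mem_flatten.1 h; exact hRne row h1 h2
  have hrpos : 0 < r := hodd.pos
  have hMrep : M ∈ replicate r M := mem_replicate.2 ⟨hrpos.ne', rfl⟩
  have hmemrr : ∀ v, v ≠ M → (v ∈ rest ++ replicate r M ↔ v ∈ rest) := by
    intro v hv
    simp only [mem_append, mem_replicate]
    tauto
  have hcnt : ∀ v, v ≠ M →
      count v ((rest ++ replicate r M) ++ R.flatten) = count v (rest ++ R.flatten) := by
    intro v hv
    simp [count_append, count_replicate, Ne.symm hv]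
  have hcntM : count M ((rest ++ replicate r M) ++ R.flatten) = r := by
    simp [count_append, count_replicate, count_eq_zero.2 hrne, count_eq_zero.2 hMfR]
  have hmem : ∀ v, v ≠ M →
      (v ∈ (rest ++ replicate r M) ++ R.flatten ↔ v ∈ rest ++ R.flatten) := by
    intro v hv
    simp only [mem_append, mem_replicate]
    tauto
  have hvne : ∀ v ∈ rest ++ R.flatten, v ≠ M := by
    intro v hv
    rcases mem_append.1 hv with h | h
    · exact (hrest v h).ne
    · obtain ⟨row, h1, h2⟩ := mem_flatten.1 h
      exact (hR row h1 v h2).ne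
  have hcp : ∀ v, v ≠ M →
      countP (fun row => decide (v ∈ row)) ((rest ++ replicate r M) :: R)
        = countP (fun row => decide (v ∈ row)) (rest :: R) := by
    intro v hv
    rw [countP_cons, countP_cons]
    congr 1
    simp [hmemrr v hv]
  have hcpM0 : countP (fun row => decide (M ∈ row)) R = 0 :=
    countP_eq_zero.2 (fun row hrow => by simp [hRne row hrow])
  have hcpM : countP (fun row => decide (M ∈ row)) ((rest ++ replicate r M) :: R) = 1 := by
    rw [countP_cons, hcpM0]
    simp [mem_append, hMrep]
  have hcpM' : countP (fun row => decide (M ∈ row)) (rest :: R) = 0 := by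
    rw [countP_cons, hcpM0]
    simp [hrne, hMfR]
  constructor
  · rintro ⟨h1, h2, h3, h4⟩
    simp only [flatten_cons] at h2
    refine ⟨?_, ?_, ?_, ?_⟩
    · intro row hrow
      rcases mem_cons.1 hrow with rfl | h
      · exact (chain_append_replicate hrest).1 (h1 _ (mem_cons_self))
      · exact h1 row (mem_cons_of_mem _ h)
    · intro v hv
      simp only [flatten_cons]
      have hvM : v ≠ M := hvne v hv
      rw [← hcnt v hvM]
      exact h2 v ((hmem v hvM).2 hv)
    · intro v
      rcases eq_or_ne v M with rfl | hv
      · rw [hcpM']; omega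
      · rw [← hcp v hv]; exact h3 v
    · intro v hv row hrow hvrow
      have hvM : v ≠ M := by
        intro h; subst h
        rw [hcpM'] at hv; omega
      have hv0 : countP (fun row => decide (v ∈ row)) ((rest ++ replicate r M) :: R) = 2 := by
        rw [hcp v hvM]; exact hv
      rcases mem_cons.1 hrow with h | h
      · have := h4 v hv0 (rest ++ replicate r M) (mem_cons_self)
          ((hmemrr v hvM).2 (h ▸ hvrow))
        rw [h]
        obtain ⟨x, L, hxL⟩ := exists_cons_of_ne_nil (ne_nil_of_mem (h ▸ hvrow : v ∈ rest))
        rw [hxL] at this ⊢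
        simpa using this
      · exact h4 v hv0 row (mem_cons_of_mem _ h) hvrow
  · rintro ⟨h1, h2, h3, h4⟩
    simp only [flatten_cons] at h2
    refine ⟨?_, ?_, ?_, ?_⟩
    · intro row hrow
      rcases mem_cons.1 hrow with rfl | h
      · exact (chain_append_replicate hrest).2 (h1 _ (mem_cons_self))
      · exact h1 row (mem_cons_of_mem _ h)
    · intro v hv
      simp only [flatten_cons] at hv ⊢
      rcases eq_or_ne v M with rfl | hvM
      · rw [hcntM]; exact hodd
      · rw [hcnt v hvM]
        exact h2 v ((hmem v hvM).1 hv)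
    · intro v
      rcases eq_or_ne v M with rfl | hv
      · rw [hcpM]; omega
      · rw [hcp v hv]; exact h3 v
    · intro v hv row hrow hvrow
      have hvM : v ≠ M := by
        intro h; subst h
        rw [hcpM] at hv; omega
      have hv1 : countP (fun row => decide (v ∈ row)) (rest :: R) = 2 := by
        rw [← hcp v hvM]; exact hv
      rcases mem_cons.1 hrow with h | h
      · subst h
        have hvr : v ∈ rest := (hmemrr v hvM).1 hvrow
        have := h4 v hv1 rest (mem_cons_self) hvr
        obtain ⟨x, L, hxL⟩ := exists_cons_of_ne_nil (ne_nil_of_mem hvr)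
        rw [hxL] at this ⊢
        simpa using this
      · exact h4 v hv1 row (mem_cons_of_mem _ h) hvrow

lemma t1_lenF_lt (ht : t < M) :
    lenF t ((rest ++ replicate r M) :: R) = lenF t (rest :: R) := by
  have h0 : (replicate r M).filter (fun x => decide (x ≤ t)) = [] :=
    filter_eq_nil_iff.2 (fun x hx => by rw [eq_of_mem_replicate hx]; simp; omega)
  have h : (rest ++ replicate r M).filter (fun x => decide (x ≤ t))
      = rest.filter (fun x => decide (x ≤ t)) := by
    rw [filter_append, h0, append_nil]
  simp only [lenF, map_cons, h]

lemma t1_bwd (hodd : Odd r) (hM : 0 < M) (hrest : ∀ x ∈ rest, x < M)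
    (hR : ∀ row ∈ R, ∀ x ∈ row, x < M)
    (hc : CondF ((rest ++ replicate r M) :: R)) : CondF (rest :: R) := by
  refine ⟨(t1_cond4 hodd hrest hR).1 hc.1, fun t => ?_⟩
  rcases lt_or_ge t M with ht | ht
  · rw [← t1_lenF_lt ht]; exact hc.2 t
  · have hall : ∀ row ∈ rest :: R, ∀ x ∈ row, x ≤ t := by
      intro row hrow x hx
      rcases mem_cons.1 hrow with rfl | h
      · have := hrest x hx; omega
      · have := hR row h x hx; omega
    have hall' : ∀ row ∈ rest :: R, ∀ x ∈ row, x ≤ M - 1 := by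
      intro row hrow x hx
      rcases mem_cons.1 hrow with rfl | h
      · have := hrest x hx; omega
      · have := hR row h x hx; omega
    rw [lenF_of_all_le hall, ← lenF_of_all_le hall',
      ← t1_lenF_lt (M := M) (r := r) (rest := rest) (R := R) (by omega)]
    exact hc.2 (M - 1)

lemma t1_fwd (hodd : Odd r) (hrest : ∀ x ∈ rest, x < M)
    (hR : ∀ row ∈ R, ∀ x ∈ row, x < M)
    (hc : CondF (rest :: R)) : CondG ((rest ++ replicate r M) :: R) := by
  refine ⟨(t1_cond4 hodd hrest hR).2 hc.1, fun t ht => ?_⟩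
  rcases lt_or_ge t M with h | h
  · rw [t1_lenF_lt h]; exact hc.2 t
  · exfalso
    obtain ⟨row, hrow, x, hx, hxt⟩ := ht
    rcases mem_cons.1 hrow with rfl | hrow'
    · rcases mem_append.1 hx with h' | h'
      · have := hrest x h'; omega
      · rw [eq_of_mem_replicate h'] at hxt; omega
    · have := hR row hrow' x hx; omega

end Type1

section Type3

variable {M r t : ℕ} {a b : List ℕ} {R : List (List ℕ)}

lemma chain'_of_all_eq {M : ℕ} {a : List ℕ} (h : ∀ x ∈ a, x = M) :
    Chain' (· ≤ ·) a := by
  rw [chain'_iff_pairwise]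
  induction a with
  | nil => simp
  | cons x l ih =>
    rw [pairwise_cons]
    refine ⟨fun y hy => ?_, ih (fun y hy => h y (mem_cons_of_mem _ hy))⟩
    rw [h x (mem_cons_self), h y (mem_cons_of_mem _ hy)]

lemma t3_cond4 (hodd : Odd r) (ha : a ≠ []) (hb : b ≠ [])
    (haM : ∀ x ∈ a, x = M) (hbM : ∀ x ∈ b, x = M)
    (hlen : a.length + b.length = r)
    (hR : ∀ row ∈ R, ∀ x ∈ row, x < M) :
    Cond4 (a :: b :: R) ↔ Cond4 R := by
  have hMa : M ∈ a := by
    obtain ⟨x, L, rfl⟩ := exists_cons_of_ne_nil ha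
    exact (haM x (mem_cons_self)) ▸ mem_cons_self
  have hMb : M ∈ b := by
    obtain ⟨x, L, rfl⟩ := exists_cons_of_ne_nil hb
    exact (hbM x (mem_cons_self)) ▸ mem_cons_self
  have hRne : ∀ row ∈ R, M ∉ row := fun row hrow h => lt_irrefl M (hR row hrow M h)
  have hMfR : M ∉ R.flatten := fun h => by
    obtain ⟨row, h1, h2⟩ := mem_flatten.1 h; exact hRne row h1 h2
  have hcnta : count M a = a.length := count_eq_length.2 (fun y hy => (haM y hy).symm)
  have hcntb : count M b = b.length := count_eq_length.2 (fun y hy => (hbM y hy).symm)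
  have hvna : ∀ v, v ≠ M → v ∉ a := fun v hv h => hv (haM v h)
  have hvnb : ∀ v, v ≠ M → v ∉ b := fun v hv h => hv (hbM v h)
  have hcpM0 : countP (fun row => decide (M ∈ row)) R = 0 :=
    countP_eq_zero.2 (fun row hrow => by simp [hRne row hrow])
  have hcpM : countP (fun row => decide (M ∈ row)) (a :: b :: R) = 2 := by
    rw [countP_cons, countP_cons, hcpM0]
    simp [hMa, hMb]
  have hcp : ∀ v, v ≠ M →
      countP (fun row => decide (v ∈ row)) (a :: b :: R)
        = countP (fun row => decide (v ∈ row)) R := by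
    intro v hv
    rw [countP_cons, countP_cons]
    simp [hvna v hv, hvnb v hv]
  constructor
  · rintro ⟨h1, h2, h3, h4⟩
    simp only [flatten_cons] at h2
    refine ⟨fun row hrow => h1 row (mem_cons_of_mem _ (mem_cons_of_mem _ hrow)),
      ?_, ?_, ?_⟩
    · intro v hv
      have hvM : v ≠ M := fun h => hMfR (h ▸ hv)
      have := h2 v (by simp only [mem_append]; right; right; exact hv)
      rw [count_append, count_append, count_eq_zero.2 (hvna v hvM),
        count_eq_zero.2 (hvnb v hvM)] at this
      simpa using this
    · intro v
      rcases eq_or_ne v M with rfl | hv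
      · rw [hcpM0]; omega
      · rw [← hcp v hv]; exact h3 v
    · intro v hv row hrow hvrow
      have hvM : v ≠ M := by
        intro h; subst h
        exact hRne row hrow hvrow
      exact h4 v (by rw [hcp v hvM]; exact hv) row
        (mem_cons_of_mem _ (mem_cons_of_mem _ hrow)) hvrow
  · rintro ⟨h1, h2, h3, h4⟩
    refine ⟨?_, ?_, ?_, ?_⟩
    · intro row hrow
      rcases mem_cons.1 hrow with rfl | hrow
      · exact chain'_of_all_eq haM
      rcases mem_cons.1 hrow with rfl | hrow
      · exact chain'_of_all_eq hbM
      · exact h1 row hrow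
    · intro v hv
      simp only [flatten_cons] at hv ⊢
      rw [count_append, count_append]
      rcases eq_or_ne v M with rfl | hvM
      · rw [hcnta, hcntb, count_eq_zero.2 hMfR]
        have heq : a.length + (b.length + 0) = r := by omega
        rw [heq]
        exact hodd
      · rw [count_eq_zero.2 (hvna v hvM), count_eq_zero.2 (hvnb v hvM)]
        simp only [Nat.zero_add]
        apply h2
        rcases mem_append.1 hv with h | h
        · exact absurd (haM v h) hvM
        rcases mem_append.1 h with h | h
        · exact absurd (hbM v h) hvM
        · exact h
    · intro v
      rcases eq_or_ne v M with rfl | hv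
      · rw [hcpM]
      · rw [hcp v hv]; exact h3 v
    · intro v hv row hrow hvrow
      rcases eq_or_ne v M with rfl | hvM
      · rcases mem_cons.1 hrow with rfl | hrow
        · obtain ⟨x, L, rfl⟩ := exists_cons_of_ne_nil ha
          simp [haM x (mem_cons_self)]
        rcases mem_cons.1 hrow with rfl | hrow
        · obtain ⟨x, L, rfl⟩ := exists_cons_of_ne_nil hb
          simp [hbM x (mem_cons_self)]
        · exact absurd hvrow (hRne row hrow)
      · rcases mem_cons.1 hrow with rfl | hrow
        · exact absurd hvrow (hvna v hvM)
        rcases mem_cons.1 hrow with rfl | hrow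
        · exact absurd hvrow (hvnb v hvM)
        · exact h4 v (by rw [← hcp v hvM]; exact hv) row hrow hvrow

lemma t3_lenF_lt (ht : t < M) (haM : ∀ x ∈ a, x = M) (hbM : ∀ x ∈ b, x = M) :
    lenF t (a :: b :: R) = lenF t R := by
  have hfa : a.filter (fun x => decide (x ≤ t)) = [] :=
    filter_eq_nil_iff.2 (fun x hx => by rw [haM x hx]; simp; omega)
  have hfb : b.filter (fun x => decide (x ≤ t)) = [] :=
    filter_eq_nil_iff.2 (fun x hx => by rw [hbM x hx]; simp; omega)
  simp only [lenF, map_cons, hfa, hfb, length_nil, filter_cons]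
  simp

lemma t3_bwd (hM : 0 < M) (haM : ∀ x ∈ a, x = M) (hbM : ∀ x ∈ b, x = M)
    (hR : ∀ row ∈ R, ∀ x ∈ row, x < M)
    (hc : CondF (a :: b :: R)) (hodd : Odd r) (ha : a ≠ []) (hb : b ≠ [])
    (hlen : a.length + b.length = r) : CondF R := by
  refine ⟨(t3_cond4 hodd ha hb haM hbM hlen hR).1 hc.1, fun t => ?_⟩
  rcases lt_or_ge t M with ht | ht
  · rw [← t3_lenF_lt ht haM hbM]; exact hc.2 t
  · have hall : ∀ row ∈ R, ∀ x ∈ row, x ≤ t := by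
      intro row hrow x hx
      have := hR row hrow x hx; omega
    have hall' : ∀ row ∈ R, ∀ x ∈ row, x ≤ M - 1 := by
      intro row hrow x hx
      have := hR row hrow x hx; omega
    rw [lenF_of_all_le hall, ← lenF_of_all_le hall',
      ← t3_lenF_lt (show M - 1 < M by omega) haM hbM]
    exact hc.2 (M - 1)

lemma t3_fwd (hodd : Odd r) (ha : a ≠ []) (hb : b ≠ [])
    (haM : ∀ x ∈ a, x = M) (hbM : ∀ x ∈ b, x = M)
    (hlen : a.length + b.length = r)
    (hR : ∀ row ∈ R, ∀ x ∈ row, x < M)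
    (hc : CondF R) : CondG (a :: b :: R) := by
  refine ⟨(t3_cond4 hodd ha hb haM hbM hlen hR).2 hc.1, fun t ht => ?_⟩
  rcases lt_or_ge t M with h | h
  · rw [t3_lenF_lt h haM hbM]; exact hc.2 t
  · exfalso
    obtain ⟨row, hrow, x, hx, hxt⟩ := ht
    rcases mem_cons.1 hrow with rfl | hrow
    · rw [haM x hx] at hxt; omega
    rcases mem_cons.1 hrow with rfl | hrow
    · rw [hbM x hx] at hxt; omega
    · have := hR row hrow x hx; omega

end Type3

lemma sorted_split {M : ℕ} : ∀ {row : List ℕ}, row.Pairwise (· ≤ ·) →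
    (∀ x ∈ row, x ≤ M) →
    ∃ rest, row = rest ++ replicate (row.count M) M ∧ M ∉ rest := by
  intro row
  induction row with
  | nil => exact fun _ _ => ⟨[], by simp, by simp⟩
  | cons x xs ih =>
    intro hp hle
    rcases pairwise_cons.1 hp with ⟨hx, hxs⟩
    by_cases hxM : x = M
    · subst hxM
      have hall : ∀ y ∈ x :: xs, y = x := by
        intro y hy
        rcases mem_cons.1 hy with rfl | hy'
        · rfl
        · exact le_antisymm (hle y hy) (hx y hy')
      have hcnt : (x :: xs).count x = (x :: xs).length :=
        count_eq_length.2 (fun y hy => (hall y hy).symm)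
      refine ⟨[], ?_, by simp⟩
      rw [hcnt, nil_append]
      exact eq_replicate_iff.2 ⟨rfl, hall⟩
    · obtain ⟨rest, hres, hMres⟩ := ih hxs (fun y hy => hle y (mem_cons_of_mem _ hy))
      refine ⟨x :: rest, ?_, ?_⟩
      · rw [count_cons_of_ne hxM, cons_append, ← hres]
      · intro h
        rcases mem_cons.1 h with h' | h'
        · exact hxM h'.symm
        · exact hMres h'

lemma all_eq_of_head {M : ℕ} {row : List ℕ} (hp : row.Pairwise (· ≤ ·))
    (hle : ∀ x ∈ row, x ≤ M) (hh : row.head? = some M) : ∀ x ∈ row, x = M := by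
  cases row with
  | nil => simp at hh
  | cons a t =>
    have ha : a = M := by simpa using hh
    subst ha
    intro x hx
    rcases mem_cons.1 hx with rfl | hx'
    · rfl
    · exact le_antisymm (hle x hx) (rel_of_pairwise_cons hp hx')

lemma rec_to_condG {T : List (List ℕ)} (h : RecBarTableau T) : CondG T := by
  induction h with
  | nil =>
    exact ⟨⟨by simp, by simp, by simp, by simp⟩, by simp [lenF]⟩
  | step T T' M r hodd hle hmem hbar hsort hrec ih =>
    have hTF : CondF T' := by
      refine ⟨ih.1, fun t => ?_⟩
      by_cases hx : ∃ row ∈ T', ∃ x ∈ row, t < x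
      · exact ih.2 t hx
      · push_neg at hx
        rw [lenF_of_all_le hx]
        refine Nodup.filter _ ?_
        exact hsort.imp (fun {a b} h => (Nat.ne_of_lt h).symm)
    rcases hbar with ⟨i, hi, rest, heq, hMrest, hMk, hperm⟩ |
        ⟨i, hi, j, hj, hij, hne1, hne2, hallM1, hallM2, hlen, hMk, hperm⟩
    · obtain ⟨R, hTp, hsetp, hidx, _⟩ := decomp1 hi
      have hgdT : T.getD i [] ∈ T := by
        rw [getD_eq_getElem _ _ hi]
        exact getElem_mem _
      have hrest_lt : ∀ x ∈ rest, x < M := by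
        intro x hx
        have hxT : x ∈ T.getD i [] := by
          rw [heq]; exact mem_append_left _ hx
        have hxle := hle _ hgdT x hxT
        have hxne : x ≠ M := fun hh => hMrest (hh ▸ hx)
        omega
      have hR_lt : ∀ row ∈ R, ∀ x ∈ row, x < M := by
        intro row hrow x hx
        obtain ⟨k, hk, hki, hkeq⟩ := hidx row hrow
        have hrowT : row ∈ T := by
          rw [← hkeq, getD_eq_getElem _ _ hk]
          exact getElem_mem _
        have hxle := hle row hrowT x hx
        have hxne : x ≠ M := fun hh => hMk k hk hki (by rw [hkeq]; exact hh ▸ hx)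
        omega
      have hp2 : T'.Perm ((rest :: R).filter (fun row => !row.isEmpty)) :=
        hperm.trans ((hsetp rest).filter _)
      have hF : CondF (rest :: R) := (condF_filter_iff _).1 (condF_perm hp2 hTF)
      have hG : CondG ((rest ++ replicate r M) :: R) := t1_fwd hodd hrest_lt hR_lt hF
      have hTp' : T.Perm ((rest ++ replicate r M) :: R) := by
        rw [← heq]; exact hTp
      exact condG_perm hTp'.symm hG
    · obtain ⟨R, hTp, hsetp, hidx, _⟩ := decomp2 hij hi hj
      have hgdiT : T.getD i [] ∈ T := by
        rw [getD_eq_getElem _ _ hi]; exact getElem_mem _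
      have hgdjT : T.getD j [] ∈ T := by
        rw [getD_eq_getElem _ _ hj]; exact getElem_mem _
      have hR_lt : ∀ row ∈ R, ∀ x ∈ row, x < M := by
        intro row hrow x hx
        obtain ⟨k, hk, hki, hkj, hkeq⟩ := hidx row hrow
        have hrowT : row ∈ T := by
          rw [← hkeq, getD_eq_getElem _ _ hk]
          exact getElem_mem _
        have hxle := hle row hrowT x hx
        have hxne : x ≠ M := fun hh => hMk k hk hki hkj (by rw [hkeq]; exact hh ▸ hx)
        omega
      have hfil : (([] : List ℕ) :: [] :: R).filter (fun row => !row.isEmpty)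
          = R.filter (fun row => !row.isEmpty) := by
        simp [filter_cons]
      have hp2 : T'.Perm (R.filter (fun row => !row.isEmpty)) := by
        rw [← hfil]
        exact hperm.trans (hsetp.filter _)
      have hF : CondF R := (condF_filter_iff _).1 (condF_perm hp2 hTF)
      have hG : CondG (T.getD i [] :: T.getD j [] :: R) :=
        t3_fwd hodd hne1 hne2 hallM1 hallM2 hlen hR_lt hF
      exact condG_perm hTp.symm hG

lemma condF_to_rec : ∀ (N : ℕ) (T : List (List ℕ)), T.flatten.length ≤ N →
    (∀ row ∈ T, row ≠ []) → (∀ row ∈ T, ∀ x ∈ row, 0 < x) →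
    CondF T → RecBarTableau T := by
  intro N
  induction N with
  | zero =>
    intro T hlen hne _ _
    cases T with
    | nil => exact RecBarTableau.nil
    | cons a T0 =>
      exfalso
      apply hne a (mem_cons_self)
      have : a.length = 0 := by
        simp only [flatten_cons, length_append, Nat.le_zero] at hlen
        omega
      exact length_eq_zero_iff.1 this
  | succ N ihN =>
    intro T hlen hne hpos hc
    rcases eq_or_ne T [] with rfl | hTne
    · exact RecBarTableau.nil
    have hfne : T.flatten ≠ [] := by
      obtain ⟨a, T0, rfl⟩ := exists_cons_of_ne_nil hTne
      obtain ⟨x, t0, ha⟩ := exists_cons_of_ne_nil (hne a (mem_cons_self))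
      simp [ha]
    have hflen : 0 < T.flatten.length := length_pos_iff.2 hfne
    obtain ⟨M, hMmem, hMle⟩ : ∃ M ∈ T.flatten, ∀ x ∈ T.flatten, x ≤ M :=
      ⟨T.flatten.maximum_of_length_pos hflen, maximum_of_length_pos_mem hflen,
        fun x hx => le_maximum_of_length_pos_of_mem hx hflen⟩
    obtain ⟨⟨h1, h2, h3, h4⟩, h5⟩ := hc
    have hMpos : 0 < M := by
      obtain ⟨row, hrow, hMrow⟩ := mem_flatten.1 hMmem
      exact hpos row hrow M hMrow
    have hodd : Odd (T.flatten.count M) := h2 M hMmem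
    have hrpos : 0 < T.flatten.count M := hodd.pos
    obtain ⟨row0, hrow0T, hMrow0⟩ := mem_flatten.1 hMmem
    obtain ⟨i, hi, hieq⟩ := mem_iff_getElem.1 hrow0T
    have hgdi : T.getD i [] = row0 := by rw [getD_eq_getElem _ _ hi, hieq]
    have hle' : ∀ row ∈ T, ∀ x ∈ row, x ≤ M :=
      fun row hr x hx => hMle x (mem_flatten.2 ⟨row, hr, hx⟩)
    obtain ⟨R, hTp, hsetp, hidx, hconv⟩ := decomp1 hi
    have hTp0 : T.Perm (row0 :: R) := by rw [← hgdi]; exact hTp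
    have hcpT : T.countP (fun row => decide (M ∈ row))
        = 1 + R.countP (fun row => decide (M ∈ row)) := by
      rw [hTp0.countP_eq, countP_cons]
      simp [hMrow0]
      omega
    have hcpR_le : R.countP (fun row => decide (M ∈ row)) ≤ 1 := by
      have := h3 M
      omega
    have hRmemT : ∀ row ∈ R, row ∈ T := by
      intro row hrow
      obtain ⟨k, hk, _, hkeq⟩ := hidx row hrow
      rw [← hkeq, getD_eq_getElem _ _ hk]
      exact getElem_mem _
    rcases Nat.eq_zero_or_pos (R.countP (fun row => decide (M ∈ row))) with hcp0 | hcppos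
    · -- type 1 bar
      have hRnoM : ∀ row ∈ R, M ∉ row := by
        intro row hrow hMr
        have := countP_eq_zero.1 hcp0 row hrow
        simp [hMr] at this
      have hMfR : M ∉ R.flatten := fun h => by
        obtain ⟨row, hr1, hr2⟩ := mem_flatten.1 h
        exact hRnoM row hr1 hr2
      obtain ⟨rest, hsplit, hMrest⟩ :=
        sorted_split (chain'_iff_pairwise.1 (h1 row0 hrow0T)) (hle' row0 hrow0T)
      have hcnt : row0.count M = T.flatten.count M := by
        rw [hTp0.flatten.count_eq]
        simp only [flatten_cons, count_append, count_eq_zero.2 hMfR]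
        omega
      have hsplit' : row0 = rest ++ replicate (T.flatten.count M) M := by
        rw [← hcnt]; exact hsplit
      have hrest_lt : ∀ x ∈ rest, x < M := by
        intro x hx
        have hxr : x ∈ row0 := by
          rw [hsplit]; exact mem_append_left _ hx
        have := hle' row0 hrow0T x hxr
        have hxne : x ≠ M := fun hh => hMrest (hh ▸ hx)
        omega
      have hR_lt : ∀ row ∈ R, ∀ x ∈ row, x < M := by
        intro row hrow x hx
        have := hle' row (hRmemT row hrow) x hx
        have hxne : x ≠ M := fun hh => hRnoM row hrow (hh ▸ hx)
        omega
      have hF0 : CondF ((rest ++ replicate (T.flatten.count M) M) :: R) := by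
        refine condF_perm ?_ ⟨⟨h1, h2, h3, h4⟩, h5⟩
        rw [← hsplit']
        exact hTp0
      have hF1 : CondF (rest :: R) := t1_bwd hodd hMpos hrest_lt hR_lt hF0
      set T'0 := (T.set i rest).filter (fun row => !row.isEmpty) with hT'0
      set T' := T'0.mergeSort (fun A B => decide (B.length ≤ A.length)) with hT'
      have hpermT' : T'.Perm T'0 := mergeSort_perm _ _
      have hp2 : T'.Perm ((rest :: R).filter (fun row => !row.isEmpty)) :=
        hpermT'.trans ((hsetp rest).filter _)
      have hFT' : CondF T' := condF_perm hp2.symm ((condF_filter_iff _).2 hF1)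
      -- nodup lengths
      have hall_le : ∀ row ∈ rest :: R, ∀ x ∈ row, x ≤ M := by
        intro row hrow x hx
        rcases mem_cons.1 hrow with h | h
        · have := hrest_lt x (h ▸ hx); omega
        · have := hR_lt row h x hx; omega
      have hnodup : (T'.map List.length).Nodup := by
        have hmap := hp2.map List.length
        refine hmap.nodup_iff.2 ?_
        rw [map_length_filter, ← lenF_of_all_le hall_le]
        exact hF1.2 M
      have hpairwise : T'.Pairwise (fun A B : List ℕ => B.length ≤ A.length) := by
        have := pairwise_mergeSort (le := fun A B : List ℕ => decide (B.length ≤ A.length))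
          (fun a b c hab hbc => by simp at *; omega)
          (fun a b => by simp; omega) T'0
        rw [← hT'] at this
        exact this.imp (fun {a b} h => by simpa using h)
      have hsorted : (T'.map List.length).Pairwise (· > ·) := by
        have hne' : T'.Pairwise (fun A B : List ℕ => A.length ≠ B.length) := by
          have : (T'.map List.length).Pairwise (· ≠ ·) := hnodup
          exact (pairwise_map).1 this
        refine (pairwise_map).2 ?_
        exact (hpairwise.and hne').imp (fun {a b} h => by
          obtain ⟨hle2, hne2⟩ := h
          omega)
      -- measure
      have hmeas : T'.flatten.length ≤ N := by
        have e1 : T'.flatten.length = (rest :: R).flatten.length := by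
          rw [hp2.flatten.length_eq, flatten_filter]
        have e2 : T.flatten.length = row0.length + R.flatten.length := by
          rw [hTp0.flatten.length_eq]
          simp [flatten_cons]
        have e3 : row0.length = rest.length + T.flatten.count M := by
          rw [hsplit']
          simp
        simp only [flatten_cons, length_append] at e1
        omega
      have hneT' : ∀ row ∈ T', row ≠ [] := by
        intro row hrow
        have := mem_filter.1 (hpermT'.mem_iff.1 hrow)
        simpa using this.2
      have hposT' : ∀ row ∈ T', ∀ x ∈ row, 0 < x := by
        intro row hrow x hx
        have hmem2 : row ∈ T.set i rest := (mem_filter.1 (hpermT'.mem_iff.1 hrow)).1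
        rcases mem_or_eq_of_mem_set hmem2 with h | rfl
        · exact hpos row h x hx
        · have hxr : x ∈ row0 := by rw [hsplit]; exact mem_append_left _ hx
          exact hpos row0 hrow0T x hxr
      refine RecBarTableau.step T T' M (T.flatten.count M) hodd hle'
        ⟨row0, hrow0T, hMrow0⟩ ?_ hsorted (ihN T' hmeas hneT' hposT' hFT')
      left
      refine ⟨i, hi, rest, ?_, hMrest, ?_, hpermT'⟩
      · rw [hgdi, hsplit']
      · exact fun k hk hki hMk => hRnoM _ (hconv k hk hki) hMk
    · -- type 3 bar
      obtain ⟨row1, hrow1R, hMrow1'⟩ := countP_pos_iff.1 hcppos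
      have hMrow1 : M ∈ row1 := by simpa using hMrow1'
      obtain ⟨j, hjlen, hjne, hjeq⟩ := hidx row1 hrow1R
      have hij : i ≠ j := fun h => hjne h.symm
      obtain ⟨R2, hTp2, hsetp2, hidx2, hconv2⟩ := decomp2 hij hi hjlen
      have hTp2' : T.Perm (row0 :: row1 :: R2) := by
        rw [← hgdi, ← hjeq]; exact hTp2
      have hcpT2 : T.countP (fun row => decide (M ∈ row)) = 2 := by
        have := h3 M
        omega
      have hcpR2 : R2.countP (fun row => decide (M ∈ row)) = 0 := by
        have := hTp2'.countP_eq (fun row => decide (M ∈ row))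
        rw [countP_cons, countP_cons] at this
        simp [hMrow0, hMrow1] at this
        omega
      have hR2noM : ∀ row ∈ R2, M ∉ row := by
        intro row hrow hMr
        have := countP_eq_zero.1 hcpR2 row hrow
        simp [hMr] at this
      have hrow1T : row1 ∈ T := hRmemT row1 hrow1R
      have hallM0 : ∀ x ∈ row0, x = M :=
        all_eq_of_head (chain'_iff_pairwise.1 (h1 row0 hrow0T)) (hle' row0 hrow0T)
          (h4 M hcpT2 row0 hrow0T hMrow0)
      have hallM1 : ∀ x ∈ row1, x = M :=
        all_eq_of_head (chain'_iff_pairwise.1 (h1 row1 hrow1T)) (hle' row1 hrow1T)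
          (h4 M hcpT2 row1 hrow1T hMrow1)
      have hR2memT : ∀ row ∈ R2, row ∈ T := by
        intro row hrow
        obtain ⟨k, hk, _, _, hkeq⟩ := hidx2 row hrow
        rw [← hkeq, getD_eq_getElem _ _ hk]
        exact getElem_mem _
      have hR2_lt : ∀ row ∈ R2, ∀ x ∈ row, x < M := by
        intro row hrow x hx
        have := hle' row (hR2memT row hrow) x hx
        have hxne : x ≠ M := fun hh => hR2noM row hrow (hh ▸ hx)
        omega
      have hMfR2 : M ∉ R2.flatten := fun h => by
        obtain ⟨row, hr1, hr2⟩ := mem_flatten.1 h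
        exact hR2noM row hr1 hr2
      have hlen01 : row0.length + row1.length = T.flatten.count M := by
        rw [hTp2'.flatten.count_eq]
        simp only [flatten_cons, count_append, count_eq_zero.2 hMfR2,
          count_eq_length.2 (fun y hy => (hallM0 y hy).symm),
          count_eq_length.2 (fun y hy => (hallM1 y hy).symm)]
        omega
      have hrow0ne : row0 ≠ [] := hne row0 hrow0T
      have hrow1ne : row1 ≠ [] := hne row1 hrow1T
      have hF2 : CondF R2 :=
        t3_bwd hMpos hallM0 hallM1 hR2_lt (condF_perm hTp2' ⟨⟨h1, h2, h3, h4⟩, h5⟩)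
          hodd hrow0ne hrow1ne hlen01
      set T'0 := ((T.set i []).set j []).filter (fun row => !row.isEmpty) with hT'0
      set T' := T'0.mergeSort (fun A B => decide (B.length ≤ A.length)) with hT'
      have hpermT' : T'.Perm T'0 := mergeSort_perm _ _
      have hfil : (([] : List ℕ) :: [] :: R2).filter (fun row => !row.isEmpty)
          = R2.filter (fun row => !row.isEmpty) := by
        simp [filter_cons]
      have hp2 : T'.Perm (R2.filter (fun row => !row.isEmpty)) := by
        rw [← hfil]
        exact hpermT'.trans (hsetp2.filter _)
      have hFT' : CondF T' := condF_perm hp2.symm ((condF_filter_iff _).2 hF2)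
      have hall_le2 : ∀ row ∈ R2, ∀ x ∈ row, x ≤ M := by
        intro row hrow x hx
        have := hR2_lt row hrow x hx
        omega
      have hnodup : (T'.map List.length).Nodup := by
        have hmap := hp2.map List.length
        refine hmap.nodup_iff.2 ?_
        rw [map_length_filter, ← lenF_of_all_le hall_le2]
        exact hF2.2 M
      have hpairwise : T'.Pairwise (fun A B : List ℕ => B.length ≤ A.length) := by
        have := pairwise_mergeSort (le := fun A B : List ℕ => decide (B.length ≤ A.length))
          (fun a b c hab hbc => by simp at *; omega)
          (fun a b => by simp; omega) T'0
        rw [← hT'] at this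
        exact this.imp (fun {a b} h => by simpa using h)
      have hsorted : (T'.map List.length).Pairwise (· > ·) := by
        have hne' : T'.Pairwise (fun A B : List ℕ => A.length ≠ B.length) := by
          have : (T'.map List.length).Pairwise (· ≠ ·) := hnodup
          exact (pairwise_map).1 this
        refine (pairwise_map).2 ?_
        exact (hpairwise.and hne').imp (fun {a b} h => by
          obtain ⟨hle2, hne2⟩ := h
          omega)
      have hmeas : T'.flatten.length ≤ N := by
        have e1 : T'.flatten.length = R2.flatten.length := by
          rw [hp2.flatten.length_eq, flatten_filter]
        have e2 : T.flatten.length = row0.length + (row1.length + R2.flatten.length) := by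
          rw [hTp2'.flatten.length_eq]
          simp [flatten_cons]
        omega
      have hneT' : ∀ row ∈ T', row ≠ [] := by
        intro row hrow
        have := mem_filter.1 (hpermT'.mem_iff.1 hrow)
        simpa using this.2
      have hposT' : ∀ row ∈ T', ∀ x ∈ row, 0 < x := by
        intro row hrow x hx
        have hmem2 : row ∈ (T.set i []).set j [] := (mem_filter.1 (hpermT'.mem_iff.1 hrow)).1
        rcases mem_or_eq_of_mem_set hmem2 with h | rfl
        · rcases mem_or_eq_of_mem_set h with h' | rfl
          · exact hpos row h' x hx
          · simp at hx
        · simp at hx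
      refine RecBarTableau.step T T' M (T.flatten.count M) hodd hle'
        ⟨row0, hrow0T, hMrow0⟩ ?_ hsorted (ihN T' hmeas hneT' hposT' hFT')
      right
      refine ⟨i, hi, j, hjlen, hij, ?_, ?_, ?_, ?_, ?_, ?_, hpermT'⟩
      · rw [hgdi]; exact hrow0ne
      · rw [hjeq]; exact hrow1ne
      · rw [hgdi]; exact hallM0
      · rw [hjeq]; exact hallM1
      · rw [hgdi, hjeq]; exact hlen01
      · intro k hk hki hkj
        exact fun hMk => hR2noM _ (hconv2 k hk hki hkj) hMk

end BarAux

/-- For a filling (by positive integers) of the shifted diagram of a strict partition,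
the recursive definition of a bar tableau is equivalent to the four direct conditions. -/
theorem recBarTableau_iff (n : ℕ) (l : List ℕ) (T : List (List ℕ))
    (hl : IsStrictPartition n l) (hshape : T.map List.length = l)
    (hpos : ∀ row ∈ T, ∀ x ∈ row, 0 < x) :
    RecBarTableau T ↔
      ((∀ row ∈ T, row.Chain' (· ≤ ·)) ∧
       (∀ v ∈ T.flatten, Odd (T.flatten.count v)) ∧
       (∀ v : ℕ, T.countP (fun row => decide (v ∈ row)) ≤ 2) ∧
       (∀ v : ℕ, T.countP (fun row => decide (v ∈ row)) = 2 →
          ∀ row ∈ T, v ∈ row → row.head? = some v) ∧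
       (∀ i : ℕ,
         (((T.map (fun row => row.filter (fun x => decide (x ≤ i)))).map List.length).filter
             (fun k => decide (k ≠ 0))).Nodup)) := by
  constructor
  · intro h
    have hG := BarAux.rec_to_condG h
    have hF : BarAux.CondF T := by
      refine ⟨hG.1, fun t => ?_⟩
      by_cases hx : ∃ row ∈ T, ∃ x ∈ row, t < x
      · exact hG.2 t hx
      · push_neg at hx
        rw [BarAux.lenF_of_all_le hx]
        refine List.Nodup.filter _ ?_
        rw [hshape]
        exact hl.1.imp (fun {a b} h => (Nat.ne_of_lt h).symm)
    obtain ⟨⟨g1, g2, g3, g4⟩, g5⟩ := hF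
    exact ⟨g1, g2, g3, g4, g5⟩
  · rintro ⟨g1, g2, g3, g4, g5⟩
    refine BarAux.condF_to_rec T.flatten.length T le_rfl ?_ hpos ⟨⟨g1, g2, g3, g4⟩, g5⟩
    intro row hrow
    have hmem : row.length ∈ l := hshape ▸ List.mem_map_of_mem hrow
    have hp := hl.2.1 _ hmem
    intro hnil
    rw [hnil] at hp
    simp at hp
end

section
/- Let λ be a strict partition with o odd parts and e even parts, and let π be a partition all of whose parts are odd with ℓ(π) < max(o, e + (ℓ(λ) mod 2)). Then there exists no bar tableau of shape λ and type π. -/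


def BTCond (T : List (List ℕ)) : Prop :=
  (∀ row ∈ T, row ≠ []) ∧
  (∀ row ∈ T, row.Chain' (· ≤ ·)) ∧
  (∀ v ∈ T.flatten, Odd (T.flatten.count v)) ∧
  (∀ v : ℕ, T.countP (fun row => decide (v ∈ row)) ≤ 2) ∧
  (∀ v : ℕ, T.countP (fun row => decide (v ∈ row)) = 2 →
      ∀ row ∈ T, v ∈ row → row.head? = some v)

lemma BTCond_perm {T S : List (List ℕ)} (h : T.Perm S) (hT : BTCond T) : BTCond S := by
  obtain ⟨h1, h2, h3, h4, h5⟩ := hT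
  have hf := h.flatten
  refine ⟨fun row hr => h1 row (h.mem_iff.mpr hr),
    fun row hr => h2 row (h.mem_iff.mpr hr),
    fun v hv => ?_, fun v => ?_, fun v hc row hr hvr => ?_⟩
  · rw [← hf.count_eq]
    exact h3 v (hf.mem_iff.mpr hv)
  · rw [← h.countP_eq]; exact h4 v
  · exact h5 v (by rw [h.countP_eq]; exact hc) row (h.mem_iff.mpr hr) hvr

lemma filter_ne_length (v : ℕ) (r : List ℕ) :
    (r.filter (fun x => decide (x ≠ v))).length + r.count v = r.length := by
  induction r with
  | nil => simp
  | cons a t ih =>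
    by_cases hav : a = v
    · subst hav
      rw [List.filter_cons_of_neg (by simp), List.count_cons_self]
      simp only [List.length_cons]
      omega
    · rw [List.filter_cons_of_pos (by simp [hav]),
        List.count_cons_of_ne hav]
      simp only [List.length_cons]
      omega

/-- In a row that is a chain and whose head is the maximal value `v`, every entry is `v`. -/
lemma all_eq_of_head_max {v : ℕ} {r : List ℕ} (hchain : r.Chain' (· ≤ ·))
    (hhead : r.head? = some v) (hmax : ∀ x ∈ r, x ≤ v) : ∀ x ∈ r, x = v := by
  cases r with
  | nil => simp at hhead
  | cons a t =>
    simp only [List.head?_cons, Option.some.injEq] at hhead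
    subst hhead
    replace hchain := List.isChain_iff_pairwise.mp hchain
    rw [List.pairwise_cons] at hchain
    intro x hx
    rcases List.mem_cons.mp hx with rfl | hx'
    · rfl
    · exact le_antisymm (hmax x hx) (hchain.1 x hx')

lemma BTCond_drop (pre rest : List (List ℕ)) (hS : BTCond (pre ++ rest))
    (hcnt : ∀ w ∈ rest.flatten, rest.flatten.count w = (pre ++ rest).flatten.count w) :
    BTCond rest := by
  obtain ⟨h1, h2, h3, h4, h5⟩ := hS
  refine ⟨fun row hr => h1 row (List.mem_append_right _ hr),
    fun row hr => h2 row (List.mem_append_right _ hr),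
    fun w hw => ?_, fun w => ?_, fun w hc row hr hwr => ?_⟩
  · rw [hcnt w hw]
    exact h3 w (by rw [List.flatten_append]; exact List.mem_append_right _ hw)
  · calc rest.countP (fun row => decide (w ∈ row))
        ≤ (pre ++ rest).countP (fun row => decide (w ∈ row)) := by
          rw [List.countP_append]; omega
      _ ≤ 2 := h4 w
  · have hge : 2 ≤ (pre ++ rest).countP (fun row => decide (w ∈ row)) := by
      rw [List.countP_append]; omega
    exact h5 w (le_antisymm (h4 w) hge) row (List.mem_append_right _ hr) hwr

lemma key : ∀ (N : ℕ) (T : List (List ℕ)), T.flatten.length ≤ N → BTCond T →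
    max (T.countP (fun row => decide (Odd row.length)))
      (T.countP (fun row => decide (Even row.length)) + T.length % 2)
    ≤ T.flatten.toFinset.card := by
  intro N
  induction N with
  | zero =>
    intro T hlen hT
    cases T with
    | nil => simp
    | cons r rest =>
      exfalso
      obtain ⟨x, hx⟩ := List.exists_mem_of_ne_nil _ (hT.1 r (by simp))
      have hxf : x ∈ (r :: rest).flatten := List.mem_flatten.mpr ⟨r, by simp, hx⟩
      rw [List.eq_nil_of_length_eq_zero (Nat.le_zero.mp hlen)] at hxf
      simp at hxf
  | succ N ih =>
    intro T hlen hT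
    by_cases hTnil : T = []
    · subst hTnil; simp
    have hfne : T.flatten ≠ [] := by
      obtain ⟨r0, hr0⟩ := List.exists_mem_of_ne_nil _ hTnil
      obtain ⟨x, hx⟩ := List.exists_mem_of_ne_nil _ (hT.1 r0 hr0)
      exact List.ne_nil_of_mem (List.mem_flatten.mpr ⟨r0, hr0, hx⟩)
    obtain ⟨v, hvmem, hvmax⟩ : ∃ v, v ∈ T.flatten ∧ ∀ x ∈ T.flatten, x ≤ v := by
      cases h : T.flatten.maximum with
      | bot => exact absurd (List.maximum_eq_bot.mp h) hfne
      | coe v =>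
        obtain ⟨h1, h2⟩ := List.maximum_eq_coe_iff.mp h
        exact ⟨v, h1, h2⟩
    obtain ⟨r1, hr1T, hvr1⟩ := List.mem_flatten.mp hvmem
    have hc2 := hT.2.2.2.1 v
    obtain ⟨rest1, hperm1⟩ : ∃ l, T.Perm (r1 :: l) := ⟨_, List.perm_cons_erase hr1T⟩
    have hsplit : T.countP (fun row => decide (v ∈ row))
        = rest1.countP (fun row => decide (v ∈ row)) + 1 := by
      rw [hperm1.countP_eq]; simp [List.countP_cons, hvr1]
    rcases Nat.lt_or_ge (rest1.countP (fun row => decide (v ∈ row))) 1 with hrc | hrc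
    · -- v occurs in exactly one row, r1
      have hrc0 : rest1.countP (fun row => decide (v ∈ row)) = 0 := by omega
      set rest := rest1 with hrestdef
      have hnov : ∀ row ∈ rest, v ∉ row := by
        intro row hr hvrow
        have := List.countP_eq_zero.mp hrc0 row hr
        simp [hvrow] at this
      have hTS : T.Perm (r1 :: rest) := hperm1
      have hTS' : BTCond (r1 :: rest) := BTCond_perm hTS hT
      rw [hTS.countP_eq, hTS.countP_eq, hTS.length_eq,
        List.toFinset_eq_of_perm _ _ hTS.flatten]
      have hlenS : (r1 :: rest).flatten.length ≤ N + 1 := by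
        rw [← hTS.flatten.length_eq]; exact hlen
      have hnovf : v ∉ rest.flatten := fun h => by
        obtain ⟨row, hrow, hv⟩ := List.mem_flatten.mp h
        exact hnov row hrow hv
      have hvS : v ∈ (r1 :: rest).flatten := List.mem_flatten.mpr ⟨r1, by simp, hvr1⟩
      have hcv : (r1 :: rest).flatten.count v = r1.count v := by
        simp [List.flatten_cons, List.count_append, List.count_eq_zero.mpr hnovf]
      have hkodd : Odd (r1.count v) := hcv ▸ hTS'.2.2.1 v hvS
      have hk1 : 1 ≤ r1.count v := by
        rcases hkodd with ⟨m, hm⟩; omega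
      have hfl : (r1.filter (fun x => decide (x ≠ v))).length + r1.count v = r1.length :=
        filter_ne_length v r1
      by_cases hr1'nil : r1.filter (fun x => decide (x ≠ v)) = []
      · -- the whole row r1 is one bar
        have hall1 : ∀ x ∈ r1, x = v := by
          intro x hx
          by_contra hne
          have hmem : x ∈ r1.filter (fun x => decide (x ≠ v)) :=
            List.mem_filter.mpr ⟨hx, by simp [hne]⟩
          rw [hr1'nil] at hmem; simp at hmem
        have hcvlen : r1.count v = r1.length := by
          have h0 : (r1.filter (fun x => decide (x ≠ v))).length = 0 := by
            rw [hr1'nil]; rfl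
          omega
        have hOdd1 : Odd r1.length := hcvlen ▸ hkodd
        have hEven1 : ¬ Even r1.length := by
          rcases hOdd1 with ⟨m, hm⟩
          rintro ⟨m', hm'⟩; omega
        have hrest : BTCond rest := by
          refine BTCond_drop [r1] rest hTS' ?_
          intro w hw
          have hwv : w ≠ v := fun h => hnovf (h ▸ hw)
          have hcw : r1.count w = 0 :=
            List.count_eq_zero.mpr (fun hwr => hwv (hall1 w hwr))
          simp [List.count_append, hcw]
        have hfin : (r1 :: rest).flatten.toFinset = insert v rest.flatten.toFinset := by
          ext x
          simp only [List.flatten_cons, List.toFinset_append, Finset.mem_union,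
            List.mem_toFinset, Finset.mem_insert]
          constructor
          · rintro (hx | hx)
            · exact Or.inl (hall1 x hx)
            · exact Or.inr hx
          · rintro (rfl | hx)
            · exact Or.inl hvr1
            · exact Or.inr hx
        have hcard : (r1 :: rest).flatten.toFinset.card = rest.flatten.toFinset.card + 1 := by
          rw [hfin, Finset.card_insert_of_notMem (by simpa [List.mem_toFinset] using hnovf)]
        have hmeas : rest.flatten.length ≤ N := by
          have h1 : (r1 :: rest).flatten.length = r1.length + rest.flatten.length := by
            simp [List.flatten_cons]
          have h3 : 1 ≤ r1.length := by omega
          omega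
        have IH := ih rest hmeas hrest
        rw [Nat.max_le] at IH
        rw [hcard]
        simp only [List.countP_cons, List.length_cons, decide_eq_true_eq]
        rw [if_pos hOdd1, if_neg hEven1]
        exact Nat.max_le.mpr ⟨by omega, by omega⟩
      · -- the bar is a proper suffix of r1
        set r1' := r1.filter (fun x => decide (x ≠ v)) with hr1'def
        have hsub : r1'.Sublist r1 := List.filter_sublist
        have hr1'mem : ∀ x ∈ r1', x ∈ r1 ∧ x ≠ v := by
          intro x hx
          have h := List.mem_filter.mp hx
          exact ⟨h.1, by simpa using h.2⟩
        have hmono : ∀ w : ℕ, (r1' :: rest).countP (fun row => decide (w ∈ row))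
            ≤ (r1 :: rest).countP (fun row => decide (w ∈ row)) := by
          intro w
          simp only [List.countP_cons]
          by_cases hw1 : w ∈ r1'
          · simp [hw1, (hr1'mem w hw1).1]
          · rw [if_neg (by simpa using hw1)]
            split_ifs <;> omega
        have hS'cond : BTCond (r1' :: rest) := by
          refine ⟨?_, ?_, ?_, ?_, ?_⟩
          · rintro row hr
            rcases List.mem_cons.mp hr with rfl | hr
            · exact hr1'nil
            · exact hTS'.1 row (List.mem_cons_of_mem _ hr)
          · rintro row hr
            rcases List.mem_cons.mp hr with rfl | hr
            · exact List.isChain_iff_pairwise.mpr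
                ((List.isChain_iff_pairwise.mp (hTS'.2.1 r1 (by simp))).sublist hsub)
            · exact hTS'.2.1 row (List.mem_cons_of_mem _ hr)
          · intro w hw
            have hwv : w ≠ v := by
              rcases List.mem_flatten.mp hw with ⟨row, hrow, hwrow⟩
              rcases List.mem_cons.mp hrow with rfl | hrow
              · exact (hr1'mem w hwrow).2
              · exact fun h => hnov row hrow (h ▸ hwrow)
            have hcw : (r1' :: rest).flatten.count w = (r1 :: rest).flatten.count w := by
              simp only [List.flatten_cons, List.count_append]
              congr 1
              rw [hr1'def, List.count_filter (by simp [hwv])]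
            rw [hcw]
            refine hTS'.2.2.1 w ?_
            rcases List.mem_flatten.mp hw with ⟨row, hrow, hwrow⟩
            rcases List.mem_cons.mp hrow with rfl | hrow
            · exact List.mem_flatten.mpr ⟨r1, by simp, (hr1'mem w hwrow).1⟩
            · exact List.mem_flatten.mpr ⟨row, by simp [hrow], hwrow⟩
          · intro w
            exact (hmono w).trans (hTS'.2.2.2.1 w)
          · intro w hw2 row hrow hwrow
            have hw2' : (r1 :: rest).countP (fun row => decide (w ∈ row)) = 2 :=
              le_antisymm (hTS'.2.2.2.1 w) (hw2 ▸ hmono w)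
            rcases List.mem_cons.mp hrow with rfl | hrow'
            · have hw1 : w ∈ r1 := (hr1'mem w hwrow).1
              have hwv : w ≠ v := (hr1'mem w hwrow).2
              have hh := hTS'.2.2.2.2 w hw2' r1 (by simp) hw1
              cases hr1c : r1 with
              | nil => rw [hr1c] at hh; simp at hh
              | cons a t =>
                rw [hr1c] at hh
                simp only [List.head?_cons, Option.some.injEq] at hh
                subst hh
                rw [hr1'def, hr1c, List.filter_cons_of_pos (by simp [hwv])]
                simp
            · exact hTS'.2.2.2.2 w hw2' row (List.mem_cons_of_mem _ hrow') hwrow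
        have hfin : (r1 :: rest).flatten.toFinset
            = insert v ((r1' :: rest).flatten.toFinset) := by
          ext x
          simp only [List.flatten_cons, List.toFinset_append, Finset.mem_union,
            List.mem_toFinset, Finset.mem_insert]
          constructor
          · rintro (hx | hx)
            · by_cases hxv : x = v
              · exact Or.inl hxv
              · exact Or.inr (Or.inl (List.mem_filter.mpr ⟨hx, by simp [hxv]⟩))
            · exact Or.inr (Or.inr hx)
          · rintro (rfl | hx | hx)
            · exact Or.inl hvr1
            · exact Or.inl (hr1'mem x hx).1
            · exact Or.inr hx
        have hvnot : v ∉ (r1' :: rest).flatten.toFinset := by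
          simp only [List.mem_toFinset, List.flatten_cons, List.mem_append]
          rintro (h | h)
          · exact (hr1'mem v h).2 rfl
          · exact hnovf h
        have hcard : (r1 :: rest).flatten.toFinset.card
            = (r1' :: rest).flatten.toFinset.card + 1 := by
          rw [hfin, Finset.card_insert_of_notMem hvnot]
        have hmeas : (r1' :: rest).flatten.length ≤ N := by
          have h1 : (r1 :: rest).flatten.length = r1.length + rest.flatten.length := by simp
          have h2 : (r1' :: rest).flatten.length = r1'.length + rest.flatten.length := by simp
          omega
        have IH := ih _ hmeas hS'cond
        rw [Nat.max_le] at IH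
        rw [hcard]
        simp only [List.countP_cons, List.length_cons, decide_eq_true_eq] at IH ⊢
        by_cases hO1 : Odd r1.length
        · have hO1' : ¬ Odd r1'.length := by
            rcases hkodd with ⟨m, hm⟩
            rw [Nat.odd_iff] at hO1 ⊢
            omega
          have hE1 : ¬ Even r1.length := by
            rcases hO1 with ⟨m, hm⟩; rintro ⟨m', hm'⟩; omega
          have hE1' : Even r1'.length := Nat.not_odd_iff_even.mp hO1'
          rw [if_pos hO1, if_neg hE1]
          rw [if_neg hO1', if_pos hE1'] at IH
          exact Nat.max_le.mpr ⟨by omega, by omega⟩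
        · have hO1' : Odd r1'.length := by
            rcases hkodd with ⟨m, hm⟩
            rw [Nat.odd_iff] at hO1 ⊢
            omega
          have hE1 : Even r1.length := Nat.not_odd_iff_even.mp hO1
          have hE1' : ¬ Even r1'.length := by
            rcases hO1' with ⟨m, hm⟩; rintro ⟨m', hm'⟩; omega
          rw [if_neg hO1, if_pos hE1]
          rw [if_pos hO1', if_neg hE1'] at IH
          exact Nat.max_le.mpr ⟨by omega, by omega⟩
    · -- v occurs in exactly two rows
      have hrc1 : rest1.countP (fun row => decide (v ∈ row)) = 1 := by omega
      have hpos : 0 < rest1.countP (fun row => decide (v ∈ row)) := by omega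
      obtain ⟨r2, hr2rest, hvr2'⟩ := List.countP_pos_iff.mp hpos
      have hvr2 : v ∈ r2 := by simpa using hvr2'
      obtain ⟨rest, hperm2⟩ : ∃ l, rest1.Perm (r2 :: l) := ⟨_, List.perm_cons_erase hr2rest⟩
      have hrc0 : rest.countP (fun row => decide (v ∈ row)) = 0 := by
        have h := hperm2.countP_eq (fun row => decide (v ∈ row))
        rw [hrc1] at h
        rw [List.countP_cons] at h
        rw [if_pos (by simpa using hvr2)] at h
        omega
      have hnov : ∀ row ∈ rest, v ∉ row := by
        intro row hr hvrow
        have := List.countP_eq_zero.mp hrc0 row hr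
        simp [hvrow] at this
      have hTS : T.Perm (r1 :: r2 :: rest) := hperm1.trans (hperm2.cons r1)
      have hTS' : BTCond (r1 :: r2 :: rest) := BTCond_perm hTS hT
      rw [hTS.countP_eq, hTS.countP_eq, hTS.length_eq,
        List.toFinset_eq_of_perm _ _ hTS.flatten]
      have hlenS : (r1 :: r2 :: rest).flatten.length ≤ N + 1 := by
        rw [← hTS.flatten.length_eq]; exact hlen
      have hnovf : v ∉ rest.flatten := fun h => by
        obtain ⟨row, hrow, hv⟩ := List.mem_flatten.mp h
        exact hnov row hrow hv
      have hvc2 : (r1 :: r2 :: rest).countP (fun row => decide (v ∈ row)) = 2 := by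
        simp [List.countP_cons, hvr1, hvr2, hrc0]
      have hmax' : ∀ x ∈ (r1 :: r2 :: rest).flatten, x ≤ v := fun x hx =>
        hvmax x (hTS.flatten.mem_iff.mpr hx)
      have hh1 : r1.head? = some v := hTS'.2.2.2.2 v hvc2 r1 (by simp) hvr1
      have hh2 : r2.head? = some v := hTS'.2.2.2.2 v hvc2 r2 (by simp) hvr2
      have hall1 : ∀ x ∈ r1, x = v :=
        all_eq_of_head_max (hTS'.2.1 r1 (by simp)) hh1
          (fun x hx => hmax' x (List.mem_flatten.mpr ⟨r1, by simp, hx⟩))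
      have hall2 : ∀ x ∈ r2, x = v :=
        all_eq_of_head_max (hTS'.2.1 r2 (by simp)) hh2
          (fun x hx => hmax' x (List.mem_flatten.mpr ⟨r2, by simp, hx⟩))
      have hc1' : r1.count v = r1.length :=
        List.count_eq_length.mpr fun b hb => (hall1 b hb).symm
      have hc2' : r2.count v = r2.length :=
        List.count_eq_length.mpr fun b hb => (hall2 b hb).symm
      have hcv : (r1 :: r2 :: rest).flatten.count v = r1.length + r2.length := by
        simp [List.flatten_cons, List.count_append, hc1', hc2',
          List.count_eq_zero.mpr hnovf]
      have hkodd : Odd (r1.length + r2.length) :=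
        hcv ▸ hTS'.2.2.1 v (List.mem_flatten.mpr ⟨r1, by simp, hvr1⟩)
      have hrest : BTCond rest := by
        refine BTCond_drop [r1, r2] rest hTS' ?_
        intro w hw
        have hwv : w ≠ v := fun h => hnovf (h ▸ hw)
        have hw1 : r1.count w = 0 :=
          List.count_eq_zero.mpr fun hwr => hwv (hall1 w hwr)
        have hw2 : r2.count w = 0 :=
          List.count_eq_zero.mpr fun hwr => hwv (hall2 w hwr)
        simp [List.count_append, hw1, hw2]
      have hfin : (r1 :: r2 :: rest).flatten.toFinset = insert v rest.flatten.toFinset := by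
        ext x
        simp only [List.flatten_cons, List.toFinset_append, Finset.mem_union,
          List.mem_toFinset, Finset.mem_insert]
        constructor
        · rintro (hx | hx | hx)
          · exact Or.inl (hall1 x hx)
          · exact Or.inl (hall2 x hx)
          · exact Or.inr hx
        · rintro (rfl | hx)
          · exact Or.inl hvr1
          · exact Or.inr (Or.inr hx)
      have hcard : (r1 :: r2 :: rest).flatten.toFinset.card
          = rest.flatten.toFinset.card + 1 := by
        rw [hfin, Finset.card_insert_of_notMem (by simpa [List.mem_toFinset] using hnovf)]
      have hmeas : rest.flatten.length ≤ N := by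
        have h1 : (r1 :: r2 :: rest).flatten.length
            = r1.length + (r2.length + rest.flatten.length) := by simp
        have h3 : 1 ≤ r1.length := List.length_pos_iff.mpr (hTS'.1 r1 (by simp))
        omega
      have IH := ih rest hmeas hrest
      rw [Nat.max_le] at IH
      rw [hcard]
      simp only [List.countP_cons, List.length_cons, decide_eq_true_eq]
      by_cases hO1 : Odd r1.length
      · have hO2 : ¬ Odd r2.length := by
          rcases hkodd with ⟨m, hm⟩
          rw [Nat.odd_iff] at hO1 ⊢
          omega
        have hE1 : ¬ Even r1.length := by
          rcases hO1 with ⟨m, hm⟩; rintro ⟨m', hm'⟩; omega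
        have hE2 : Even r2.length := Nat.not_odd_iff_even.mp hO2
        rw [if_pos hO1, if_neg hO2, if_neg hE1, if_pos hE2]
        exact Nat.max_le.mpr ⟨by omega, by omega⟩
      · have hO2 : Odd r2.length := by
          rcases hkodd with ⟨m, hm⟩
          rw [Nat.odd_iff] at hO1 ⊢
          omega
        have hE1 : Even r1.length := Nat.not_odd_iff_even.mp hO1
        have hE2 : ¬ Even r2.length := by
          rcases hO2 with ⟨m, hm⟩; rintro ⟨m', hm'⟩; omega
        rw [if_neg hO1, if_pos hO2, if_pos hE1, if_neg hE2]
        exact Nat.max_le.mpr ⟨by omega, by omega⟩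

/-- The type of a bar tableau is the partition formed by the sizes of its bars; here the
list of bar sizes is `T.flatten.dedup.map (fun v => T.flatten.count v)`, and `T` has type
`π` iff this list is a rearrangement of `π`.  If `π` is a partition with all parts odd and
fewer parts than `max(o, e + (ℓ(λ) mod 2))`, there is no bar tableau of shape `λ` and
type `π`. -/
theorem no_barTableau_of_short_type (l π : List ℕ)
    (hl : l.Pairwise (· > ·)) (hlpos : ∀ x ∈ l, 0 < x)
    (hπ : π.Pairwise (· ≥ ·)) (hπodd : ∀ x ∈ π, Odd x)
    (hlen : π.length < max (l.countP (fun x => decide (Odd x)))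
        (l.countP (fun x => decide (Even x)) + l.length % 2)) :
    ¬ ∃ T : List (List ℕ), IsBarTableau l T ∧
        (T.flatten.dedup.map (fun v => T.flatten.count v)).Perm π := by
  rintro ⟨T, ⟨hshape, hpos, hchain, hodd, h2, hhead, _⟩, hperm⟩
  have hne : ∀ row ∈ T, row ≠ [] := by
    intro row hr hnil
    have : row.length ∈ l := hshape ▸ List.mem_map_of_mem hr
    have := hlpos _ this
    rw [hnil] at this
    simp at this
  have hkey := key T.flatten.length T le_rfl ⟨hne, hchain, hodd, h2, hhead⟩
  have hO : T.countP (fun row => decide (Odd row.length))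
      = l.countP (fun x => decide (Odd x)) := by
    rw [← hshape, List.countP_map]; rfl
  have hE : T.countP (fun row => decide (Even row.length))
      = l.countP (fun x => decide (Even x)) := by
    rw [← hshape, List.countP_map]; rfl
  have hL : T.length = l.length := by
    rw [← hshape, List.length_map]
  have hπlen : π.length = T.flatten.toFinset.card := by
    rw [← hperm.length_eq, List.length_map, ← List.card_toFinset]
  rw [hO, hE, hL, ← hπlen] at hkey
  omega
end
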